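/- arXiv:1805.09805 — 5 statements merged into one kernel-verified Lean document; each statement's English description precedes it below -/
import Mathlib

section
/- Let A be an associative F-algebra containing a non-zero finite-dimensional semisimple subalgebra S. Suppose that A is generated by S as a two-sided ideal (i.e. the smallest two-sided ideal of A containing S equals A), and that S is 1-perfect if p ≠ 2, or 4-perfect if p = 2. Then the derived subalgebra A^(1) is a perfect Lie algebra: [A^(1), A^(1)] = A^(1). -/
/-!
Statement 0: if the associative `F`-algebra `A` contains a non-zero finite-dimensional
semisimple subalgebra `S`, `A` is generated by `S` as a two-sided ideal, and `S` is
1-perfect when `char F ≠ 2` (resp. 4-perfect when `char F = 2`), then the derived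
subalgebra `A⁽¹⁾` (the span of all commutators) is a perfect Lie algebra.
-/

universe u v

/-- An `F`-algebra (possibly non-unital) is `k`-perfect if it has no proper two-sided
ideal of codimension at most `k`. -/
def kPerfect (F : Type u) (A : Type v) [Field F] [NonUnitalRing A] [Module F A]
    (k : ℕ) : Prop :=
  ∀ J : Submodule F A, (∀ a : A, ∀ x ∈ J, a * x ∈ J ∧ x * a ∈ J) → J ≠ ⊤ →
    ¬ (Module.rank F (A ⧸ J) ≤ (k : Cardinal))

/-- A non-unital `F`-algebra is (finite-dimensional) semisimple iff it is isomorphic,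
as a non-unital `F`-algebra, to a finite direct sum of full matrix algebras over `F`. -/
def IsMatrixSemisimple (F : Type u) (S : Type v) [Field F] [NonUnitalRing S]
    [Module F S] : Prop :=
  ∃ (m : ℕ) (n : Fin m → ℕ) (_hn : ∀ i, 0 < n i)
    (f : S →ₙₐ[F] ∀ i, Matrix (Fin (n i)) (Fin (n i)) F), Function.Bijective f

/-- The derived subalgebra `A⁽¹⁾`: the `F`-linear span of all commutators. -/
def derivedSub (F : Type u) (A : Type v) [Field F] [NonUnitalRing A] [Module F A] :
    Submodule F A :=
  Submodule.span F {z : A | ∃ x y : A, z = x * y - y * x}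


set_option linter.unusedSectionVars false
set_option linter.unnecessarySimpa false
set_option maxHeartbeats 1000000

section Aux

variable {F : Type u} [Field F]
variable {A : Type v} [NonUnitalRing A] [Module F A] [SMulCommClass F A A] [IsScalarTower F A A]

def Nsub (F : Type u) (A : Type v) [Field F] [NonUnitalRing A] [Module F A] : Submodule F A :=
  Submodule.span F {z : A | ∃ x ∈ derivedSub F A, ∃ y ∈ derivedSub F A, z = x * y - y * x}

lemma mem_D (x y : A) : x * y - y * x ∈ derivedSub F A :=
  Submodule.subset_span ⟨x, y, rfl⟩

lemma mem_N {x y : A} (hx : x ∈ derivedSub F A) (hy : y ∈ derivedSub F A) :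
    x * y - y * x ∈ Nsub F A :=
  Submodule.subset_span ⟨x, hx, y, hy, rfl⟩

lemma N_lie (a : A) {x : A} (hx : x ∈ Nsub F A) : a * x - x * a ∈ Nsub F A := by
  induction hx using Submodule.span_induction with
  | mem z hz =>
      obtain ⟨u, hu, v, hv, rfl⟩ := hz
      have h1 : (a*u - u*a) * v - v * (a*u - u*a) ∈ Nsub F A := mem_N (mem_D a u) hv
      have h2 : u * (a*v - v*a) - (a*v - v*a) * u ∈ Nsub F A := mem_N hu (mem_D a v)
      have key : a * (u*v - v*u) - (u*v - v*u) * a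
          = ((a*u - u*a) * v - v * (a*u - u*a)) + (u * (a*v - v*a) - (a*v - v*a) * u) := by
        simp only [mul_sub, sub_mul, mul_add, add_mul, mul_assoc]; abel
      rw [key]; exact add_mem h1 h2
  | zero => simpa using (Nsub F A).zero_mem
  | add x y hx' hy' ihx ihy =>
      have key : a*(x+y) - (x+y)*a = (a*x - x*a) + (a*y - y*a) := by
        simp only [mul_add, add_mul]; abel
      rw [key]; exact add_mem ihx ihy
  | smul r x hx' ih =>
      have key : a*(r • x) - (r • x)*a = r • (a*x - x*a) := by
        rw [mul_smul_comm, smul_mul_assoc, smul_sub]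
      rw [key]; exact Submodule.smul_mem _ _ ih

lemma lie_N {x : A} (hx : x ∈ Nsub F A) (z : A) : x * z - z * x ∈ Nsub F A := by
  have h := neg_mem (N_lie z hx)
  rwa [neg_sub] at h

def NSsub (F : Type u) (A : Type v) [Field F] [NonUnitalRing A] [Module F A]
    [SMulCommClass F A A] [IsScalarTower F A A] : Submodule F A where
  carrier := {z : A | ∀ c : A, z * c - c * z ∈ Nsub F A}
  add_mem' := by
    intro x y hx hy
    intro c
    have key : (x + y) * c - c * (x + y) = (x*c - c*x) + (y*c - c*y) := by
      simp only [mul_add, add_mul]; abel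
    rw [key]; exact add_mem (hx c) (hy c)
  zero_mem' := by intro c; simp
  smul_mem' := by
    intro r x hx c
    have key : (r • x) * c - c * (r • x) = r • (x*c - c*x) := by
      rw [smul_mul_assoc, mul_smul_comm, smul_sub]
    rw [key]; exact Submodule.smul_mem _ _ (hx c)

lemma mem_NS {z : A} : z ∈ NSsub F A ↔ ∀ c : A, z * c - c * z ∈ Nsub F A := Iff.rfl

lemma N_le_NS : Nsub F A ≤ NSsub F A := fun _n hn => mem_NS.mpr fun c => lie_N hn c

lemma NS_mul {x y : A} (hx : x ∈ NSsub F A) (hy : y ∈ NSsub F A) : x * y ∈ NSsub F A := by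
  rw [mem_NS] at *
  intro c
  have key : (x*y)*c - c*(x*y) = (x*(y*c) - (y*c)*x) + (y*(c*x) - (c*x)*y) := by
    simp only [mul_assoc]; abel
  rw [key]; exact add_mem (hx (y*c)) (hy (c*x))

lemma keyA {p q : A} (hp : p ∈ Nsub F A) (hq : q ∈ Nsub F A) (a c : A) :
    ((p*q)*a)*c - c*((p*q)*a) - (((q*p)*a)*c - c*((q*p)*a)) ∈ Nsub F A := by
  have hf : q*p ∈ NSsub F A := NS_mul (N_le_NS hq) (N_le_NS hp)
  have T1 : p * ((q*a)*c) - ((q*a)*c) * p ∈ Nsub F A := lie_N hp _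
  have hqa : q*a - a*q ∈ Nsub F A := by
    have := neg_mem (N_lie a hq); rwa [neg_sub] at this
  have T2 : (q*a - a*q) * (c*p) - (c*p) * (q*a - a*q) ∈ Nsub F A := lie_N hqa _
  have hcp : c*p - p*c ∈ Nsub F A := N_lie c hp
  have T3 : (a*q) * (c*p - p*c) - (c*p - p*c) * (a*q) ∈ Nsub F A := N_lie (a*q) hcp
  have T4 : q * ((p*c)*a) - ((p*c)*a) * q ∈ Nsub F A := lie_N hq _
  have T5 : (q*p) * (a*c) - (a*c) * (q*p) ∈ Nsub F A := (mem_NS.mp hf) (a*c)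
  have hm : c*(q*p) - (q*p)*c ∈ Nsub F A := by
    have := neg_mem ((mem_NS.mp hf) c); rwa [neg_sub] at this
  have T6 : a * (c*(q*p) - (q*p)*c) - (c*(q*p) - (q*p)*c) * a ∈ Nsub F A := N_lie a hm
  have key : ((p*q)*a)*c - c*((p*q)*a) - (((q*p)*a)*c - c*((q*p)*a))
      = (p * ((q*a)*c) - ((q*a)*c) * p)
        + ((q*a - a*q) * (c*p) - (c*p) * (q*a - a*q))
        + ((a*q) * (c*p - p*c) - (c*p - p*c) * (a*q))
        + (q * ((p*c)*a) - ((p*c)*a) * q)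
        - ((q*p) * (a*c) - (a*c) * (q*p))
        - (a * (c*(q*p) - (q*p)*c) - (c*(q*p) - (q*p)*c) * a) := by
    simp only [mul_sub, sub_mul, mul_assoc]; abel
  rw [key]
  exact sub_mem (sub_mem (add_mem (add_mem (add_mem T1 T2) T3) T4) T5) T6

lemma keyB {h : A} (hh : h ∈ Nsub F A)
    (hha : ∀ a c : A, (h*a)*c - c*(h*a) ∈ Nsub F A) (a c : A) :
    ((h*h)*a)*c - c*((h*h)*a) ∈ Nsub F A := by
  have T1 : h * ((h*a)*c) - ((h*a)*c) * h ∈ Nsub F A := lie_N hh _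
  have T2 : (h*a)*(c*h) - (c*h)*(h*a) ∈ Nsub F A := hha a (c*h)
  have key : ((h*h)*a)*c - c*((h*h)*a)
      = (h * ((h*a)*c) - ((h*a)*c) * h) + ((h*a)*(c*h) - (c*h)*(h*a)) := by
    simp only [mul_assoc]; abel
  rw [key]; exact add_mem T1 T2

lemma keyC {w₁ w₂ : A} (h1 : w₁ ∈ NSsub F A)
    (h2 : ∀ a c : A, (w₂*a)*c - c*(w₂*a) ∈ Nsub F A) (a c : A) :
    ((w₁*w₂)*a)*c - c*((w₁*w₂)*a) ∈ Nsub F A := by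
  have T1 : w₁ * ((w₂*a)*c) - ((w₂*a)*c) * w₁ ∈ Nsub F A := (mem_NS.mp h1) _
  have T2 : (w₂*a)*(c*w₁) - (c*w₁)*(w₂*a) ∈ Nsub F A := h2 a (c*w₁)
  have key : ((w₁*w₂)*a)*c - c*((w₁*w₂)*a)
      = (w₁ * ((w₂*a)*c) - ((w₂*a)*c) * w₁) + ((w₂*a)*(c*w₁) - (c*w₁)*(w₂*a)) := by
    simp only [mul_assoc]; abel
  rw [key]; exact add_mem T1 T2

lemma mirror {e : A} (he : e ∈ NSsub F A) (hl : ∀ a : A, e*a ∈ NSsub F A) (a : A) :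
    a*e ∈ NSsub F A := by
  rw [mem_NS]
  intro c
  have T1 : (e*a)*c - c*(e*a) ∈ Nsub F A := (mem_NS.mp (hl a)) c
  have hm : e*a - a*e ∈ Nsub F A := (mem_NS.mp he) a
  have T2 : (e*a - a*e)*c - c*(e*a - a*e) ∈ Nsub F A := lie_N hm c
  have key : (a*e)*c - c*(a*e)
      = ((e*a)*c - c*(e*a)) - ((e*a - a*e)*c - c*(e*a - a*e)) := by
    simp only [mul_sub, sub_mul]; abel
  rw [key]; exact sub_mem T1 T2

lemma half {x : A} (h2 : (2:F) ≠ 0) (hx : x + x ∈ Nsub F A) : x ∈ Nsub F A := by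
  have key : x = (2:F)⁻¹ • (x + x) := by
    rw [← two_smul F x, smul_smul, inv_mul_cancel₀ h2, one_smul]
  rw [key]; exact Submodule.smul_mem _ _ hx

lemma char2add (h2 : (2:F) = 0) (x : A) : x + x = 0 := by
  rw [← two_smul F x, h2, zero_smul]

end Aux


theorem derived_is_perfect
    (F : Type u) [Field F] [IsAlgClosed F]
    (A : Type v) [NonUnitalRing A] [Module F A] [SMulCommClass F A A] [IsScalarTower F A A]
    (S : NonUnitalSubalgebra F A)
    (hS_ne : S ≠ ⊥)
    (hS_ss : IsMatrixSemisimple F S)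
    -- `A` is generated by `S` as a two-sided ideal:
    (hgen : ∀ J : Submodule F A, (∀ a : A, ∀ x ∈ J, a * x ∈ J ∧ x * a ∈ J) →
      (S : Set A) ⊆ J → J = ⊤)
    -- `S` is 1-perfect with `p ≠ 2`, or 4-perfect with `p = 2`:
    (hperf : (ringChar F ≠ 2 ∧ kPerfect F S 1) ∨ (ringChar F = 2 ∧ kPerfect F S 4)) :
    Submodule.span F
        {z : A | ∃ x ∈ derivedSub F A, ∃ y ∈ derivedSub F A, z = x * y - y * x}
      = derivedSub F A := by
  classical
  obtain ⟨m, n, hn, f, hf⟩ := hS_ss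
  let lin : S →ₗ[F] (∀ i, Matrix (Fin (n i)) (Fin (n i)) F) :=
    { toFun := ⇑f, map_add' := fun x y => map_add f x y,
      map_smul' := fun r x => by simpa using map_smul f r x }
  let e' : S ≃ₗ[F] (∀ i, Matrix (Fin (n i)) (Fin (n i)) F) :=
    LinearEquiv.ofBijective lin hf
  have symm_mul : ∀ x y, e'.symm (x * y) = e'.symm x * e'.symm y := by
    intro x y
    apply hf.injective
    have h1 : ∀ z, f (e'.symm z) = z := fun z => e'.apply_symm_apply z
    rw [map_mul f, h1, h1, h1]
  set U : (i : Fin m) → Fin (n i) → Fin (n i) → A :=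
    fun i r c => ((e'.symm (Pi.single i (Matrix.single r c (1:F))) : S) : A) with hU
  have hU_same : ∀ i (r c d : Fin (n i)), U i r c * U i c d = U i r d := by
    intro i r c d
    simp only [hU]
    rw [← MulMemClass.coe_mul, ← symm_mul, ← Pi.single_mul,
      Matrix.single_mul_single_same, one_mul]
  have hU_ne : ∀ i (r c r' d : Fin (n i)), c ≠ r' → U i r c * U i r' d = 0 := by
    intro i r c r' d hne
    simp only [hU]
    rw [← MulMemClass.coe_mul, ← symm_mul, ← Pi.single_mul,
      Matrix.single_mul_single_of_ne (h := hne), Pi.single_zero, map_zero,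
      ZeroMemClass.coe_zero]
  -- size bound coming from `kPerfect`
  have hsize : ∀ (k : ℕ), kPerfect F S k → ∀ i, ¬ (n i * n i ≤ k) := by
    intro k hk i hle
    let π : S →ₗ[F] Matrix (Fin (n i)) (Fin (n i)) F :=
      (LinearMap.proj i).comp e'.toLinearMap
    have hsurj : Function.Surjective π := by
      intro M
      refine ⟨e'.symm (Pi.single i M), ?_⟩
      have h1 : e' (e'.symm (Pi.single i M)) = Pi.single i M := e'.apply_symm_apply _
      show (e' (e'.symm (Pi.single i M))) i = M
      rw [h1, Pi.single_eq_same]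
    have hker_mul : ∀ (a : S), ∀ x ∈ LinearMap.ker π,
        a * x ∈ LinearMap.ker π ∧ x * a ∈ LinearMap.ker π := by
      intro a x hx
      rw [LinearMap.mem_ker] at hx
      have hx' : f x i = 0 := hx
      constructor
      · rw [LinearMap.mem_ker]
        show f (a * x) i = 0
        rw [map_mul, Pi.mul_apply, hx', mul_zero]
      · rw [LinearMap.mem_ker]
        show f (x * a) i = 0
        rw [map_mul, Pi.mul_apply, hx', zero_mul]
    have hker_ne : LinearMap.ker π ≠ ⊤ := by
      intro hT
      obtain ⟨x, hxM⟩ := hsurj (Matrix.single ⟨0, hn i⟩ ⟨0, hn i⟩ (1:F))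
      have hx0 : π x = 0 := by
        have : x ∈ LinearMap.ker π := by rw [hT]; trivial
        exact LinearMap.mem_ker.mp this
      rw [hxM] at hx0
      have := congrFun (congrFun hx0 ⟨0, hn i⟩) ⟨0, hn i⟩
      rw [Matrix.single_apply_same] at this
      exact one_ne_zero this
    have hquot := LinearMap.quotKerEquivOfSurjective π hsurj
    have hrank := hquot.lift_rank_eq
    have hrkM : Module.rank F (Matrix (Fin (n i)) (Fin (n i)) F)
        = ((n i * n i : ℕ) : Cardinal) := by
      rw [rank_matrix]
      simp
    have hle' : Module.rank F (S ⧸ LinearMap.ker π) ≤ (k : Cardinal) := by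
      have h1 : Cardinal.lift.{u} (Module.rank F (S ⧸ LinearMap.ker π))
          = ((n i * n i : ℕ) : Cardinal) := by
        rw [hrank, hrkM, Cardinal.lift_natCast]
      rw [← Cardinal.lift_le.{u}, h1, Cardinal.lift_natCast]
      exact_mod_cast hle
    exact hk _ hker_mul hker_ne hle'
  -- off-diagonal matrix units are commutators
  have hoffD : ∀ i (r c : Fin (n i)), r ≠ c → U i r c ∈ derivedSub F A := by
    intro i r c hrc
    have h : U i r r * U i r c - U i r c * U i r r = U i r c := by
      rw [hU_same i r r c, hU_ne i r c r r (Ne.symm hrc), sub_zero]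
    rw [← h]
    exact mem_D _ _
  -- the two branches
  have pack : (∀ i (r c : Fin (n i)), r ≠ c → U i r c ∈ Nsub F A)
      ∧ (∀ i (r : Fin (n i)) (a : A), U i r r * a ∈ NSsub F A)
      ∧ (∀ i, 2 ≤ n i) := by
    rcases hperf with ⟨hchar, hk⟩ | ⟨hchar, hk⟩
    · -- characteristic ≠ 2
      have h2F : (2:F) ≠ 0 := Ring.two_ne_zero hchar
      have hge : ∀ i, 2 ≤ n i := by
        intro i
        by_contra hlt
        push_neg at hlt
        have h1 : n i ≤ 1 := by omega
        exact hsize 1 hk i (by simpa using Nat.mul_le_mul h1 h1)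
      have hoffN : ∀ i (r c : Fin (n i)), r ≠ c → U i r c ∈ Nsub F A := by
        intro i r c hrc
        have hpD := hoffD i r c hrc
        have hqD := hoffD i c r (Ne.symm hrc)
        have hh : U i r c * U i c r - U i c r * U i r c ∈ Nsub F A := mem_N hpD hqD
        have hcomm := N_lie (U i r c) hh
        have hneg := neg_mem hcomm
        rw [neg_sub] at hneg
        have key : (U i r c * U i c r - U i c r * U i r c) * U i r c
              - U i r c * (U i r c * U i c r - U i c r * U i r c)
            = U i r c + U i r c := by
          rw [sub_mul, mul_sub, mul_assoc, mul_assoc, ← mul_assoc, ← mul_assoc,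
            hU_same i r c r, hU_same i c r c, hU_same i r r c,
            hU_ne i c c r c (Ne.symm hrc), hU_ne i r c r r (Ne.symm hrc)]
          abel
        rw [key] at hneg
        exact half h2F hneg
      have hdiagL : ∀ i (r : Fin (n i)) (a : A), U i r r * a ∈ NSsub F A := by
        intro i r a
        obtain ⟨t, htr⟩ : ∃ t : Fin (n i), t ≠ r := by
          by_cases h0 : r.val = 0
          · exact ⟨⟨1, by have := hge i; omega⟩,
              Fin.ne_of_val_ne (show (1:ℕ) ≠ r.val by omega)⟩
          · exact ⟨⟨0, hn i⟩, Fin.ne_of_val_ne (show (0:ℕ) ≠ r.val by omega)⟩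
        have hp := hoffN i r t (Ne.symm htr)
        have hq := hoffN i t r htr
        have hpqe : U i r t * U i t r = U i r r := hU_same i r t r
        have hqpf : U i t r * U i r t = U i t t := hU_same i t r t
        have G : ∀ a c : A, (U i r r * a)*c - c*(U i r r * a)
            - ((U i t t * a)*c - c*(U i t t * a)) ∈ Nsub F A := by
          intro a c
          have hA := keyA hp hq a c
          rwa [hpqe, hqpf] at hA
        have hEmF : U i r r - U i t t ∈ Nsub F A := by
          have hA := mem_N (hoffD i r t (Ne.symm htr)) (hoffD i t r htr)
          rwa [hpqe, hqpf] at hA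
        have hhL : ∀ a c : A, ((U i r r - U i t t)*a)*c
            - c*((U i r r - U i t t)*a) ∈ Nsub F A := by
          intro a c
          have key : ((U i r r - U i t t)*a)*c - c*((U i r r - U i t t)*a)
              = (U i r r * a)*c - c*(U i r r * a)
                - ((U i t t * a)*c - c*(U i t t * a)) := by
            simp only [sub_mul, mul_sub]; abel
          rw [key]; exact G a c
        have hsq : (U i r r - U i t t) * (U i r r - U i t t) = U i r r + U i t t := by
          rw [mul_sub, sub_mul, sub_mul, hU_same i r r r, hU_same i t t t,
            hU_ne i t t r r htr, hU_ne i r r t t (Ne.symm htr)]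
          abel
        rw [mem_NS]
        intro c
        have hXY : (U i r r * a)*c - c*(U i r r * a)
            + ((U i t t * a)*c - c*(U i t t * a)) ∈ Nsub F A := by
          have hB := keyB hEmF hhL a c
          rw [hsq] at hB
          have key : ((U i r r + U i t t)*a)*c - c*((U i r r + U i t t)*a)
              = (U i r r * a)*c - c*(U i r r * a)
                + ((U i t t * a)*c - c*(U i t t * a)) := by
            simp only [add_mul, mul_add]; abel
          rwa [key] at hB
        have hXX := add_mem hXY (G a c)
        have key2 : ((U i r r * a)*c - c*(U i r r * a)
              + ((U i t t * a)*c - c*(U i t t * a)))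
            + ((U i r r * a)*c - c*(U i r r * a)
              - ((U i t t * a)*c - c*(U i t t * a)))
            = ((U i r r * a)*c - c*(U i r r * a))
              + ((U i r r * a)*c - c*(U i r r * a)) := by abel
        rw [key2] at hXX
        exact half h2F hXX
      exact ⟨hoffN, hdiagL, hge⟩
    · -- characteristic 2
      have h2F0 : (2:F) = 0 := by
        haveI := ringChar.charP F
        have h20 : ((ringChar F : ℕ) : F) = 0 := CharP.cast_eq_zero F _
        rw [hchar] at h20
        exact_mod_cast h20
      have hge3 : ∀ i, 3 ≤ n i := by
        intro i
        by_contra hlt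
        push_neg at hlt
        have h1 : n i ≤ 2 := by omega
        exact hsize 4 hk i (by
          calc n i * n i ≤ 2 * 2 := Nat.mul_le_mul h1 h1
            _ = 4 := rfl)
      have hthird : ∀ i (r c : Fin (n i)), ∃ w : Fin (n i), w ≠ r ∧ w ≠ c := by
        intro i r c
        have h3 := hge3 i
        by_cases h1 : r.val ≠ 0 ∧ c.val ≠ 0
        · exact ⟨⟨0, by omega⟩, Fin.ne_of_val_ne (show (0:ℕ) ≠ r.val by omega),
            Fin.ne_of_val_ne (show (0:ℕ) ≠ c.val by omega)⟩
        · by_cases h2 : r.val ≠ 1 ∧ c.val ≠ 1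
          · exact ⟨⟨1, by omega⟩, Fin.ne_of_val_ne (show (1:ℕ) ≠ r.val by omega),
              Fin.ne_of_val_ne (show (1:ℕ) ≠ c.val by omega)⟩
          · push_neg at h1 h2
            exact ⟨⟨2, by omega⟩, Fin.ne_of_val_ne (show (2:ℕ) ≠ r.val by omega),
              Fin.ne_of_val_ne (show (2:ℕ) ≠ c.val by omega)⟩
      have hoffN : ∀ i (r c : Fin (n i)), r ≠ c → U i r c ∈ Nsub F A := by
        intro i r c hrc
        obtain ⟨w, hwr, hwc⟩ := hthird i r c
        have h1 : U i r w * U i w c - U i w c * U i r w = U i r c := by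
          rw [hU_same i r w c, hU_ne i w c r w (Ne.symm hrc), sub_zero]
        rw [← h1]
        exact mem_N (hoffD i r w (Ne.symm hwr)) (hoffD i w c hwc)
      have hdiagL : ∀ i (r : Fin (n i)) (a : A), U i r r * a ∈ NSsub F A := by
        intro i r a
        obtain ⟨u', hur, -⟩ := hthird i r r
        obtain ⟨v', hvr, hvu⟩ := hthird i r u'
        have hpu := hoffN i u' r hur
        have hqu := hoffN i r u' (Ne.symm hur)
        have hpv := hoffN i v' r hvr
        have hqv := hoffN i r v' (Ne.symm hvr)
        have G_vr : ∀ a c : A, (U i v' v' * a)*c - c*(U i v' v' * a)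
            - ((U i r r * a)*c - c*(U i r r * a)) ∈ Nsub F A := by
          intro a c
          have hA := keyA hpv hqv a c
          rwa [hU_same i v' r v', hU_same i r v' r] at hA
        have hw2L : ∀ a c : A, ((U i v' v' + U i r r)*a)*c
            - c*((U i v' v' + U i r r)*a) ∈ Nsub F A := by
          intro a c
          have key : ((U i v' v' + U i r r)*a)*c - c*((U i v' v' + U i r r)*a)
              = ((U i v' v' * a)*c - c*(U i v' v' * a)
                  - ((U i r r * a)*c - c*(U i r r * a)))
                + (((U i r r * a)*c - c*(U i r r * a))
                  + ((U i r r * a)*c - c*(U i r r * a))) := by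
            simp only [add_mul, mul_add]; abel
          rw [key, char2add h2F0, add_zero]
          exact G_vr a c
        have hUuuNS : U i u' u' ∈ NSsub F A := by
          have hA := NS_mul (N_le_NS hpu) (N_le_NS hqu)
          rwa [hU_same i u' r u'] at hA
        have hUrrNS : U i r r ∈ NSsub F A := by
          have hA := NS_mul (N_le_NS hqu) (N_le_NS hpu)
          rwa [hU_same i r u' r] at hA
        have hw1NS : U i u' u' + U i r r ∈ NSsub F A := add_mem hUuuNS hUrrNS
        have hprod : (U i u' u' + U i r r) * (U i v' v' + U i r r) = U i r r := by
          rw [mul_add, add_mul, add_mul, hU_ne i u' u' v' v' (Ne.symm hvu),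
            hU_ne i u' u' r r hur, hU_ne i r r v' v' (Ne.symm hvr),
            hU_same i r r r]
          simp
        rw [mem_NS]
        intro c
        have hC := keyC hw1NS hw2L a c
        rwa [hprod] at hC
      exact ⟨hoffN, hdiagL, fun i => by have := hge3 i; omega⟩
  obtain ⟨hoffN, hdiagL, hge2⟩ := pack
  have hdiagNS : ∀ i (r : Fin (n i)), U i r r ∈ NSsub F A := by
    intro i r
    obtain ⟨t, htr⟩ : ∃ t : Fin (n i), t ≠ r := by
      by_cases h0 : r.val = 0
      · exact ⟨⟨1, by have := hge2 i; omega⟩,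
          Fin.ne_of_val_ne (show (1:ℕ) ≠ r.val by omega)⟩
      · exact ⟨⟨0, hn i⟩, Fin.ne_of_val_ne (show (0:ℕ) ≠ r.val by omega)⟩
    have hA := NS_mul (N_le_NS (hoffN i r t (Ne.symm htr))) (N_le_NS (hoffN i t r htr))
    rwa [hU_same i r t r] at hA
  have hUNS : ∀ i (r c : Fin (n i)), U i r c ∈ NSsub F A := by
    intro i r c
    by_cases h : r = c
    · subst h; exact hdiagNS i r
    · exact N_le_NS (hoffN i r c h)
  have hdiagR : ∀ i (r : Fin (n i)) (a : A), a * U i r r ∈ NSsub F A :=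
    fun i r a => mirror (hdiagNS i r) (hdiagL i r) a
  -- the ideal J
  let J : Submodule F A :=
    { carrier := {z : A | z ∈ NSsub F A ∧ (∀ a : A, a*z ∈ NSsub F A)
        ∧ (∀ a : A, z*a ∈ NSsub F A) ∧ (∀ a b : A, (a*z)*b ∈ NSsub F A)},
      add_mem' := by
        rintro x y ⟨h1,h2,h3,h4⟩ ⟨g1,g2,g3,g4⟩
        refine ⟨add_mem h1 g1, fun a => ?_, fun a => ?_, fun a b => ?_⟩
        · rw [mul_add]; exact add_mem (h2 a) (g2 a)
        · rw [add_mul]; exact add_mem (h3 a) (g3 a)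
        · rw [mul_add, add_mul]; exact add_mem (h4 a b) (g4 a b)
      zero_mem' := by
        refine ⟨zero_mem _, fun a => ?_, fun a => ?_, fun a b => ?_⟩
        · rw [mul_zero]; exact zero_mem _
        · rw [zero_mul]; exact zero_mem _
        · rw [mul_zero, zero_mul]; exact zero_mem _
      smul_mem' := by
        rintro r x ⟨h1,h2,h3,h4⟩
        refine ⟨Submodule.smul_mem _ _ h1, fun a => ?_, fun a => ?_, fun a b => ?_⟩
        · rw [mul_smul_comm]; exact Submodule.smul_mem _ _ (h2 a)
        · rw [smul_mul_assoc]; exact Submodule.smul_mem _ _ (h3 a)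
        · rw [mul_smul_comm, smul_mul_assoc]; exact Submodule.smul_mem _ _ (h4 a b) }
  have hJmem : ∀ z : A, z ∈ J ↔ (z ∈ NSsub F A ∧ (∀ a : A, a*z ∈ NSsub F A)
      ∧ (∀ a : A, z*a ∈ NSsub F A) ∧ (∀ a b : A, (a*z)*b ∈ NSsub F A)) := fun z => Iff.rfl
  have hJmul : ∀ (a : A), ∀ x ∈ J, a * x ∈ J ∧ x * a ∈ J := by
    intro a x hx
    obtain ⟨h1, h2, h3, h4⟩ := (hJmem x).mp hx
    constructor
    · refine (hJmem _).mpr ⟨h2 a, fun a' => ?_, fun b => ?_, fun a' b => ?_⟩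
      · rw [← mul_assoc]; exact h2 (a' * a)
      · exact h4 a b
      · rw [← mul_assoc]; exact h4 (a' * a) b
    · refine (hJmem _).mpr ⟨h3 a, fun a' => ?_, fun b => ?_, fun a' b => ?_⟩
      · rw [← mul_assoc]; exact h4 a' a
      · rw [mul_assoc]; exact h3 (a * b)
      · rw [← mul_assoc, mul_assoc (a' * x)]; exact h4 a' (a * b)
  have hUJ : ∀ i (r c : Fin (n i)), U i r c ∈ J := by
    intro i r c
    refine (hJmem _).mpr ⟨hUNS i r c, fun a => ?_, fun a => ?_, fun a b => ?_⟩
    · have h1 : a * U i r c = (a * U i r r) * U i r c := by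
        rw [mul_assoc, hU_same i r r c]
      rw [h1]; exact NS_mul (hdiagR i r a) (hUNS i r c)
    · have h1 : U i r c * a = U i r c * (U i c c * a) := by
        rw [← mul_assoc, hU_same i r c c]
      rw [h1]; exact NS_mul (hUNS i r c) (hdiagL i c a)
    · have h1 : (a * U i r r) * (U i r c * (U i c c * b)) = (a * U i r c) * b := by
        rw [← mul_assoc (U i r c) (U i c c) b, hU_same i r c c,
          ← mul_assoc (a * U i r r), mul_assoc a (U i r r) (U i r c),
          hU_same i r r c]
      rw [← h1]
      exact NS_mul (hdiagR i r a) (NS_mul (hUNS i r c) (hdiagL i c b))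
  -- the product space is spanned by the single-entry elements
  have hspanP : ∀ x : (∀ i, Matrix (Fin (n i)) (Fin (n i)) F),
      x ∈ Submodule.span F {z : ∀ i, Matrix (Fin (n i)) (Fin (n i)) F |
        ∃ (i : Fin m) (r : Fin (n i)) (c : Fin (n i)), z = Pi.single i (Matrix.single r c (1:F))} := by
    intro x
    rw [← Finset.univ_sum_single x]
    refine Submodule.sum_mem _ fun i _ => ?_
    have hx2 : Pi.single i (x i)
        = ∑ r : Fin (n i), ∑ c : Fin (n i),
            (x i r c) • (Pi.single i (Matrix.single r c (1:F)) :
              ∀ j, Matrix (Fin (n j)) (Fin (n j)) F) := by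
      have h0 : Pi.single i (x i)
          = LinearMap.single F (fun j => Matrix (Fin (n j)) (Fin (n j)) F) i (x i) := rfl
      rw [h0]
      conv_lhs => rw [Matrix.matrix_eq_sum_single (x i)]
      rw [map_sum]
      refine Finset.sum_congr rfl fun r _ => ?_
      rw [map_sum]
      refine Finset.sum_congr rfl fun c _ => ?_
      rw [show Matrix.single r c (x i r c)
          = (x i r c) • Matrix.single r c (1:F) by
        rw [Matrix.smul_single, smul_eq_mul, mul_one], map_smul]
      rfl
    rw [hx2]
    refine Submodule.sum_mem _ fun r _ => Submodule.sum_mem _ fun c _ =>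
      Submodule.smul_mem _ _ ?_
    exact Submodule.subset_span ⟨i, r, c, rfl⟩
  -- S is contained in J
  let val_lin : S →ₗ[F] A :=
    { toFun := fun s => (s : A), map_add' := fun _ _ => rfl, map_smul' := fun _ _ => rfl }
  have hSJ : (S : Set A) ⊆ (J : Set A) := by
    intro s hs
    have hx := hspanP (e' (⟨s, hs⟩ : S))
    have hle : Submodule.span F {z : ∀ i, Matrix (Fin (n i)) (Fin (n i)) F |
          ∃ (i : Fin m) (r : Fin (n i)) (c : Fin (n i)), z = Pi.single i (Matrix.single r c (1:F))}
        ≤ Submodule.comap (val_lin.comp e'.symm.toLinearMap) J := by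
      rw [Submodule.span_le]
      rintro z ⟨i, r, c, rfl⟩
      exact hUJ i r c
    have hmem := hle hx
    have h2 : val_lin (e'.symm (e' (⟨s, hs⟩ : S))) ∈ J := hmem
    rw [e'.symm_apply_apply] at h2
    exact h2
  have hJtop : J = ⊤ := hgen J hJmul hSJ
  have hANS : ∀ z : A, z ∈ NSsub F A := by
    intro z
    have hz : z ∈ J := by rw [hJtop]; trivial
    exact ((hJmem z).mp hz).1
  apply le_antisymm
  · rw [Submodule.span_le]
    rintro z ⟨x, hx, y, hy, rfl⟩
    exact mem_D x y
  · show derivedSub F A ≤ _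
    rw [derivedSub, Submodule.span_le]
    rintro z ⟨x, y, rfl⟩
    exact (mem_NS.mp (hANS x)) y
end

section
/- Let A be an associative F-algebra containing a non-zero finite-dimensional semisimple subalgebra S. Suppose that A is generated by S as a two-sided ideal (i.e. the smallest two-sided ideal of A containing S equals A), and that S is 1-perfect if p ≠ 2, or 4-perfect if p = 2. Then A^(1) is generated by S^(1) = [S, S] as a Lie ideal: the smallest Lie ideal of the Lie algebra A^(1) containing the span of all commutators [s, t] with s, t ∈ S equals A^(1). -/
/-!
Statement 2: if the associative `F`-algebra `A` contains a non-zero finite-dimensional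
semisimple subalgebra `S`, `A` is generated by `S` as a two-sided ideal, and `S` is
1-perfect when `char F ≠ 2` (resp. 4-perfect when `char F = 2`), then the derived
subalgebra `A⁽¹⁾` (the span of all commutators) is a perfect Lie algebra.
-/

universe u v

section Aux
variable {F : Type u} [Field F] {A : Type v} [NonUnitalRing A] [Module F A]
  [SMulCommClass F A A] [IsScalarTower F A A] {J : Submodule F A}

set_option linter.unusedSectionVars false in
lemma lemJJ (hbr : ∀ p q : A, ∀ y ∈ J, (p*q - q*p)*y - y*(p*q - q*p) ∈ J)
    {j1 j2 : A} (h1 : j1 ∈ J) (h2 : j2 ∈ J) (a : A) :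
    (j1*j2 - j2*j1)*a - a*(j1*j2 - j2*j1) ∈ J := by
  have e1 := hbr j1 a j2 h2
  have e2 := hbr j2 a j1 h1
  have key : (j1*j2 - j2*j1)*a - a*(j1*j2 - j2*j1)
      = (((j1*a - a*j1)*j2 - j2*(j1*a - a*j1))) - ((j2*a - a*j2)*j1 - j1*(j2*a - a*j2)) := by
    noncomm_ring
  rw [key]; exact sub_mem e1 e2

set_option linter.unusedSectionVars false in
lemma crux (hbr : ∀ p q : A, ∀ y ∈ J, (p*q - q*p)*y - y*(p*q - q*p) ∈ J)
    (u g : A) (huu : u*u = 0) (hug : u*g = 0) (hgu : g*u = u) (hgg : g*g = g)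
    (hWu : ∀ a : A, u*a - a*u ∈ J) (hWg : ∀ a : A, g*a - a*g ∈ J) :
    (∀ x b : A, (x*u)*b - b*(x*u) ∈ J) ∧ (∀ x b : A, (u*x)*b - b*(u*x) ∈ J) := by
  have huu' : ∀ t : A, u*(u*t) = 0 := fun t => by rw [← mul_assoc, huu, zero_mul]
  have hug' : ∀ t : A, u*(g*t) = 0 := fun t => by rw [← mul_assoc, hug, zero_mul]
  have hgu' : ∀ t : A, g*(u*t) = u*t := fun t => by rw [← mul_assoc, hgu]
  have hgg' : ∀ t : A, g*(g*t) = g*t := fun t => by rw [← mul_assoc, hgg]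
  constructor
  · intro x b
    have A1 := hWg (u*b*x)
    have A2 := hWu (b*x)
    have A3 := hWg (x*u*b)
    have A4 := hWg (x*u*b*g)
    have A5 := hWg (u*b*g*x)
    have A6 := hbr g (u*b) (g*x - x*g) (hWg x)
    have A7 := hWg (b*g*x*u)
    have A8 := hWu (b*g*x)
    have A9 := hbr g b (g*(x*u) - (x*u)*g) (hWg (x*u))
    have key : (x*u)*b - b*(x*u) =
        -(g*(u*b*x) - (u*b*x)*g)
        + (u*(b*x) - (b*x)*u)
        + (g*(x*u*b) - (x*u*b)*g)
        - ((g*(x*u*b*g) - (x*u*b*g)*g) + (g*(x*u*b*g) - (x*u*b*g)*g))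
        + (g*(u*b*g*x) - (u*b*g*x)*g)
        + ((g*(u*b) - (u*b)*g)*(g*x - x*g) - (g*x - x*g)*(g*(u*b) - (u*b)*g))
        - (g*(b*g*x*u) - (b*g*x*u)*g)
        - (u*(b*g*x) - (b*g*x)*u)
        + ((g*b - b*g)*(g*(x*u) - (x*u)*g) - (g*(x*u) - (x*u)*g)*(g*b - b*g)) := by
      simp only [mul_sub, sub_mul, mul_assoc, neg_sub]
      simp only [huu', hug', hgu', hgg', huu, hug, hgu, hgg, mul_zero, zero_mul]
      noncomm_ring
    rw [key]
    exact add_mem (sub_mem (sub_mem (add_mem (add_mem (sub_mem (add_mem (add_mem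
      (neg_mem A1) A2) A3) (add_mem A4 A4)) A5) A6) A7) A8) A9
  · intro x b
    have B1 := hWg (u*x*b)
    have B2 := hWg (b*u*x)
    have B3 := hWg (b*u*x*g)
    have B4 := hWg (u*x*g*b)
    have B5 := hWg (x*g*b*u)
    have B6 := hWu (x*g*b)
    have B7 := hbr g (b*u) (g*x - x*g) (hWg x)
    have B8 := hbr g b (g*(u*x) - (u*x)*g) (hWg (u*x))
    have key : (u*x)*b - b*(u*x) =
        (g*(u*x*b) - (u*x*b)*g)
        - (g*(b*u*x) - (b*u*x)*g)
        + ((g*(b*u*x*g) - (b*u*x*g)*g) + (g*(b*u*x*g) - (b*u*x*g)*g))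
        - (g*(u*x*g*b) - (u*x*g*b)*g)
        + (g*(x*g*b*u) - (x*g*b*u)*g)
        + (u*(x*g*b) - (x*g*b)*u)
        + ((g*(b*u) - (b*u)*g)*(g*x - x*g) - (g*x - x*g)*(g*(b*u) - (b*u)*g))
        + ((g*b - b*g)*(g*(u*x) - (u*x)*g) - (g*(u*x) - (u*x)*g)*(g*b - b*g)) := by
      simp only [mul_sub, sub_mul, mul_assoc, neg_sub]
      simp only [huu', hug', hgu', hgg', huu, hug, hgu, hgg, mul_zero, zero_mul]
      noncomm_ring
    rw [key]
    exact add_mem (add_mem (add_mem (add_mem (sub_mem (add_mem (sub_mem B1 B2)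
      (add_mem B3 B3)) B4) B5) B6) B7) B8
end Aux

theorem derived_generated_by_derived_of_S
    (F : Type u) [Field F] [IsAlgClosed F]
    (A : Type v) [NonUnitalRing A] [Module F A] [SMulCommClass F A A] [IsScalarTower F A A]
    (S : NonUnitalSubalgebra F A)
    (hS_ne : S ≠ ⊥)
    (hS_ss : IsMatrixSemisimple F S)
    -- `A` is generated by `S` as a two-sided ideal:
    (hgen : ∀ J : Submodule F A, (∀ a : A, ∀ x ∈ J, a * x ∈ J ∧ x * a ∈ J) →
      (S : Set A) ⊆ J → J = ⊤)
    -- `S` is 1-perfect with `p ≠ 2`, or 4-perfect with `p = 2`: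
    (hperf : (ringChar F ≠ 2 ∧ kPerfect F S 1) ∨ (ringChar F = 2 ∧ kPerfect F S 4)) :
    -- every Lie ideal of `A⁽¹⁾` containing all commutators `[s, t]`, `s, t ∈ S`,
    -- is all of `A⁽¹⁾`; i.e. `A⁽¹⁾` is generated by `S⁽¹⁾` as a Lie ideal:
    ∀ J : Submodule F A, J ≤ derivedSub F A →
      (∀ x ∈ derivedSub F A, ∀ y ∈ J, x * y - y * x ∈ J) →
      (∀ s ∈ S, ∀ t ∈ S, s * t - t * s ∈ J) →
      J = derivedSub F A := by
  intro J hJle hLie hSS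
  obtain ⟨m, nn, hn, f, hf⟩ := hS_ss
  -- bracket with commutators preserves J
  have hbr : ∀ p q : A, ∀ y ∈ J, (p*q - q*p)*y - y*(p*q - q*p) ∈ J := by
    intro p q y hy
    exact hLie _ (Submodule.subset_span ⟨p, q, rfl⟩) y hy
  -- linear algebra setup
  let ι : ↥S →ₗ[F] A :=
    { toFun := fun s => (s : A), map_add' := fun _ _ => rfl, map_smul' := fun _ _ => rfl }
  let fL : ↥S →ₗ[F] (∀ i, Matrix (Fin (nn i)) (Fin (nn i)) F) :=
    { toFun := f, map_add' := map_add f, map_smul' := map_smul f }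
  have hfL : ∀ s, fL s = f s := fun _ => rfl
  let fLE : ↥S ≃ₗ[F] (∀ i, Matrix (Fin (nn i)) (Fin (nn i)) F) :=
    LinearEquiv.ofBijective fL hf
  let E : ∀ i : Fin m, Fin (nn i) → Fin (nn i) → ↥S :=
    fun i k l => fLE.symm (Pi.single i (Matrix.single k l 1))
  have hfE : ∀ i k l, f (E i k l) = Pi.single i (Matrix.single k l 1) :=
    fun i k l => fLE.apply_symm_apply _
  -- product rules
  have hEmul_same : ∀ i k l l', (E i k l) * (E i l l') = E i k l' := by
    intro i k l l'
    apply hf.injective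
    rw [map_mul, hfE, hfE, hfE, ← Pi.single_mul, Matrix.single_mul_single_same, one_mul]
  have hEmul_ne : ∀ (i : Fin m) (k l l' k' : Fin (nn i)), l ≠ l' → (E i k l) * (E i l' k') = 0 := by
    intro i k l l' k' h
    apply hf.injective
    rw [map_mul, hfE, hfE, ← Pi.single_mul, Matrix.single_mul_single_of_ne (h := h), map_zero]
    simp
  -- A-level elements
  let Ea : ∀ i : Fin m, Fin (nn i) → Fin (nn i) → A := fun i k l => ((E i k l : ↥S) : A)
  have hA_same : ∀ i k l l', Ea i k l * Ea i l l' = Ea i k l' := by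
    intro i k l l'
    show ((E i k l : ↥S) : A) * ((E i l l' : ↥S) : A) = _
    rw [← NonUnitalSubalgebra.coe_mul, hEmul_same]
  have hA_ne : ∀ (i : Fin m) (k l l' k' : Fin (nn i)), l ≠ l' → Ea i k l * Ea i l' k' = 0 := by
    intro i k l l' k' h
    show ((E i k l : ↥S) : A) * ((E i l' k' : ↥S) : A) = _
    rw [← NonUnitalSubalgebra.coe_mul, hEmul_ne i k l l' k' h]
    rfl
  -- seeds
  have hseed_off : ∀ (i : Fin m) (k l : Fin (nn i)), k ≠ l → Ea i k l ∈ J := by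
    intro i k l hkl
    have := hSS (Ea i k k) (E i k k).2 (Ea i k l) (E i k l).2
    rwa [hA_same i k k l, hA_ne i k l k k (Ne.symm hkl), sub_zero] at this
  have hseed_diag : ∀ (i : Fin m) (k l : Fin (nn i)), k ≠ l → Ea i k k - Ea i l l ∈ J := by
    intro i k l hkl
    have := hSS (Ea i k l) (E i k l).2 (Ea i l k) (E i l k).2
    rwa [hA_same i k l k, hA_same i l k l] at this
  -- size bounds from kPerfect
  have hbound : ∀ (kk : ℕ), kPerfect F (↥S) kk → ∀ i, ¬ (nn i * nn i ≤ kk) := by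
    intro kk hkP i
    set L : ↥S →ₗ[F] Matrix (Fin (nn i)) (Fin (nn i)) F := (LinearMap.proj i) ∘ₗ fL with hL
    have hLsurj : Function.Surjective L := by
      intro Mx
      refine ⟨fLE.symm (Pi.single i Mx), ?_⟩
      show (fL (fLE.symm (Pi.single i Mx))) i = Mx
      have : fL (fLE.symm (Pi.single i Mx)) = Pi.single i Mx := fLE.apply_symm_apply _
      rw [this, Pi.single_eq_same]
    have hker_ideal : ∀ a : ↥S, ∀ x ∈ LinearMap.ker L, a * x ∈ LinearMap.ker L ∧
        x * a ∈ LinearMap.ker L := by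
      intro a x hx
      rw [LinearMap.mem_ker] at hx
      have hx' : f x i = 0 := hx
      constructor <;>
      · rw [LinearMap.mem_ker]
        show f _ i = 0
        rw [map_mul, Pi.mul_apply, hx']
        simp
    have hker_ne : LinearMap.ker L ≠ ⊤ := by
      intro h
      obtain ⟨s, hs⟩ := hLsurj (Matrix.single ⟨0, hn i⟩ ⟨0, hn i⟩ 1)
      have : s ∈ LinearMap.ker L := h ▸ Submodule.mem_top
      rw [LinearMap.mem_ker, hs] at this
      have := congrFun (congrFun this ⟨0, hn i⟩) ⟨0, hn i⟩
      rw [Matrix.single_apply_same] at this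
      exact one_ne_zero this
    have hrank : Module.rank F (↥S ⧸ LinearMap.ker L) = ((nn i * nn i : ℕ) : Cardinal) := by
      have e := (LinearMap.quotKerEquivOfSurjective L hLsurj).lift_rank_eq
      rw [rank_matrix] at e
      simp only [Cardinal.mk_fin, Cardinal.lift_natCast, ← Nat.cast_mul] at e
      exact Cardinal.lift_eq_nat_iff.mp e
    intro hle
    refine hkP (LinearMap.ker L) hker_ideal hker_ne ?_
    rw [hrank]
    exact_mod_cast hle
  have hge2 : ∀ i, 2 ≤ nn i := by
    intro i
    rcases hperf with ⟨_, hkp⟩ | ⟨_, hkp⟩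
    · have := hbound 1 hkp i; nlinarith [this]
    · have := hbound 4 hkp i; nlinarith [this]
  -- the W-lemma: off-diagonal units commute into J against everything
  have hW_off : ∀ (i : Fin m) (k l : Fin (nn i)), k ≠ l → ∀ a : A,
      Ea i k l * a - a * Ea i k l ∈ J := by
    intro i k l hkl a
    rcases hperf with ⟨hchar, _⟩ | ⟨hchar, hkp⟩
    · have h2 : (2:F) ≠ 0 := Ring.two_ne_zero hchar
      have hh : Ea i k k - Ea i l l ∈ J := hseed_diag i k l hkl
      have hu : Ea i k l ∈ J := hseed_off i k l hkl
      have hmem := lemJJ hbr hh hu a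
      have hido : (Ea i k k - Ea i l l) * Ea i k l - Ea i k l * (Ea i k k - Ea i l l)
          = Ea i k l + Ea i k l := by
        rw [sub_mul, mul_sub, hA_same i k k l, hA_ne i l l k l (Ne.symm hkl),
          hA_ne i k l k k (Ne.symm hkl), hA_same i k l l]
        abel
      rw [hido] at hmem
      have h2s : (Ea i k l + Ea i k l) * a - a * (Ea i k l + Ea i k l)
          = (2:F) • (Ea i k l * a - a * Ea i k l) := by
        rw [two_smul]; noncomm_ring
      rw [h2s] at hmem
      have := J.smul_mem ((2:F)⁻¹) hmem
      rwa [inv_smul_smul₀ h2] at this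
    · have h3 : 3 ≤ nn i := by
        have := hbound 4 hkp i; nlinarith [this]
      obtain ⟨w, hwk, hwl⟩ : ∃ w : Fin (nn i), w ≠ k ∧ w ≠ l := by
        have hcard : ({k, l} : Finset (Fin (nn i))).card ≤ 2 := by
          apply le_trans (Finset.card_insert_le _ _); simp
        have hne : (({k, l} : Finset (Fin (nn i)))ᶜ).Nonempty := by
          rw [← Finset.card_pos, Finset.card_compl, Fintype.card_fin]
          omega
        obtain ⟨w, hw⟩ := hne
        simp only [Finset.mem_compl, Finset.mem_insert, Finset.mem_singleton, not_or] at hw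
        exact ⟨w, hw.1, hw.2⟩
      have h1 : Ea i k w ∈ J := hseed_off i k w (Ne.symm hwk)
      have h2 : Ea i w l ∈ J := hseed_off i w l hwl
      have hmem := lemJJ hbr h1 h2 a
      have hido : Ea i k w * Ea i w l - Ea i w l * Ea i k w = Ea i k l := by
        rw [hA_same i k w l, hA_ne i w l k w (Ne.symm hkl), sub_zero]
      rwa [hido] at hmem
  -- diagonal units
  have hW_diag : ∀ (i : Fin m) (k : Fin (nn i)), ∀ a : A,
      Ea i k k * a - a * Ea i k k ∈ J := by
    intro i k a
    obtain ⟨l, hlk⟩ : ∃ l : Fin (nn i), l ≠ k := by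
      have h2 := hge2 i
      rcases Finset.exists_mem_ne (by rw [Finset.card_univ, Fintype.card_fin]; omega) k
        with ⟨l, _, hlk⟩
      exact ⟨l, hlk⟩
    have key : Ea i k k * a - a * Ea i k k =
        (Ea i k l * (Ea i l k * a) - (Ea i l k * a) * Ea i k l)
        + (Ea i l k * (a * Ea i k l) - (a * Ea i k l) * Ea i l k) := by
      have h1 : Ea i k l * Ea i l k = Ea i k k := hA_same i k l k
      rw [← h1]; noncomm_ring
    rw [key]
    exact add_mem (hW_off i k l (Ne.symm hlk) _) (hW_off i l k hlk _)
  -- the submodule K of elements whose commutators with everything lie in J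
  let K : Submodule F A :=
    { carrier := {w : A | ∀ b : A, w * b - b * w ∈ J}
      zero_mem' := by intro b; simp
      add_mem' := by
        intro x y hx hy b
        have := add_mem (hx b) (hy b)
        have key : (x + y) * b - b * (x + y) = (x*b - b*x) + (y*b - b*y) := by noncomm_ring
        rwa [key]
      smul_mem' := by
        intro c x hx b
        have key : (c • x) * b - b * (c • x) = c • (x*b - b*x) := by
          rw [smul_mul_assoc, mul_smul_comm, smul_sub]
        rw [key]
        exact J.smul_mem c (hx b) }
  have hKmul : ∀ {a c : A}, a ∈ K → c ∈ K → a * c ∈ K := by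
    intro a c ha hc b
    have key : (a*c)*b - b*(a*c) = (a*(c*b) - (c*b)*a) + (c*(b*a) - (b*a)*c) := by noncomm_ring
    rw [key]
    exact add_mem (ha (c*b)) (hc (b*a))
  have hKE : ∀ (i : Fin m) (k l : Fin (nn i)), Ea i k l ∈ K := by
    intro i k l
    by_cases hkl : k = l
    · subst hkl; exact fun b => hW_diag i k b
    · exact fun b => hW_off i k l hkl b
  -- the crux: multiples of off-diagonal units are in K
  have hKxu : ∀ (i : Fin m) (k l : Fin (nn i)), k ≠ l → ∀ x : A, x * Ea i k l ∈ K := by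
    intro i k l hkl x
    have hc := crux hbr (Ea i k l) (Ea i k k)
      (hA_ne i k l k l (Ne.symm hkl)) (hA_ne i k l k k (Ne.symm hkl))
      (hA_same i k k l) (hA_same i k k k)
      (hW_off i k l hkl) (hW_diag i k)
    exact fun b => hc.1 x b
  have hKux : ∀ (i : Fin m) (k l : Fin (nn i)), k ≠ l → ∀ x : A, Ea i k l * x ∈ K := by
    intro i k l hkl x
    have hc := crux hbr (Ea i k l) (Ea i k k)
      (hA_ne i k l k l (Ne.symm hkl)) (hA_ne i k l k k (Ne.symm hkl))
      (hA_same i k k l) (hA_same i k k k)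
      (hW_off i k l hkl) (hW_diag i k)
    exact fun b => hc.2 x b
  -- all one/two-sided multiples of units are in K
  have hKaE : ∀ (i : Fin m) (k l : Fin (nn i)), ∀ a : A, a * Ea i k l ∈ K := by
    intro i k l a
    by_cases hkl : k = l
    · subst hkl
      obtain ⟨l', hl'⟩ : ∃ l' : Fin (nn i), l' ≠ k := by
        have h2 := hge2 i
        rcases Finset.exists_mem_ne (by rw [Finset.card_univ, Fintype.card_fin]; omega) k
          with ⟨l', _, hl'⟩
        exact ⟨l', hl'⟩
      have : a * Ea i k k = (a * Ea i k l') * Ea i l' k := by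
        rw [mul_assoc, hA_same i k l' k]
      rw [this]
      exact hKmul (hKxu i k l' (Ne.symm hl') a) (hKE i l' k)
    · exact hKxu i k l hkl a
  have hKEa : ∀ (i : Fin m) (k l : Fin (nn i)), ∀ a : A, Ea i k l * a ∈ K := by
    intro i k l a
    by_cases hkl : k = l
    · subst hkl
      obtain ⟨l', hl'⟩ : ∃ l' : Fin (nn i), l' ≠ k := by
        have h2 := hge2 i
        rcases Finset.exists_mem_ne (by rw [Finset.card_univ, Fintype.card_fin]; omega) k
          with ⟨l', _, hl'⟩
        exact ⟨l', hl'⟩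
      have : Ea i k k * a = Ea i k l' * (Ea i l' k * a) := by
        rw [← mul_assoc, hA_same i k l' k]
      rw [this]
      exact hKux i k l' (Ne.symm hl') _
    · exact hKux i k l hkl a
  -- every element of S is in the span of the units
  have hspanS : ∀ s : ↥S, (s : A) ∈ Submodule.span F {z : A | ∃ i k l, z = Ea i k l} := by
    intro s
    have key_i : ∀ i : Fin m, (∑ k : Fin (nn i), ∑ l : Fin (nn i),
        (f s i k l) • (Pi.single i (Matrix.single k l (1:F))
          : ∀ j, Matrix (Fin (nn j)) (Fin (nn j)) F))
        = Pi.single i (f s i) := by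
      intro i
      have hs1 : ∀ y : Matrix (Fin (nn i)) (Fin (nn i)) F,
          (Pi.single i y : ∀ j, Matrix (Fin (nn j)) (Fin (nn j)) F)
          = LinearMap.single F (fun j => Matrix (Fin (nn j)) (Fin (nn j)) F) i y := fun y => rfl
      calc (∑ k : Fin (nn i), ∑ l : Fin (nn i), (f s i k l) •
            (Pi.single i (Matrix.single k l (1:F))
              : ∀ j, Matrix (Fin (nn j)) (Fin (nn j)) F))
          = ∑ k : Fin (nn i), ∑ l : Fin (nn i),
            (Pi.single i ((f s i k l) • Matrix.single k l (1:F))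
              : ∀ j, Matrix (Fin (nn j)) (Fin (nn j)) F) := by
            simp_rw [Pi.single_smul]
        _ = Pi.single i (∑ k : Fin (nn i), ∑ l : Fin (nn i),
              (f s i k l) • Matrix.single k l (1:F)) := by
            simp_rw [hs1, ← map_sum]
        _ = Pi.single i (f s i) := by
            simp_rw [Matrix.smul_single, smul_eq_mul, mul_one]
            exact congrArg (Pi.single i) ((Matrix.matrix_eq_sum_single (f s i)).symm)
    have hdec : (∑ i : Fin m, ∑ k : Fin (nn i), ∑ l : Fin (nn i),
        (f s i k l) • E i k l) = s := by
      apply fLE.injective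
      rw [map_sum]
      have hE' : ∀ i k l, fLE (E i k l)
          = Pi.single i (Matrix.single k l (1:F)) := fun i k l =>
        fLE.apply_symm_apply _
      calc (∑ i : Fin m, fLE (∑ k : Fin (nn i), ∑ l : Fin (nn i), (f s i k l) • E i k l))
          = ∑ i : Fin m, ∑ k : Fin (nn i), ∑ l : Fin (nn i),
            (f s i k l) • (Pi.single i (Matrix.single k l (1:F))
              : ∀ j, Matrix (Fin (nn j)) (Fin (nn j)) F) := by
            simp_rw [map_sum, map_smul, hE']
        _ = ∑ i : Fin m, Pi.single i (f s i) := by simp_rw [key_i]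
        _ = f s := Finset.univ_sum_single (f s)
        _ = fLE s := rfl
    have hcoe : (s : A) = ∑ i : Fin m, ∑ k : Fin (nn i), ∑ l : Fin (nn i),
        (f s i k l) • Ea i k l := by
      have := congrArg ι hdec
      rw [map_sum] at this
      simp_rw [map_sum, map_smul] at this
      exact this.symm
    rw [hcoe]
    refine Submodule.sum_mem _ (fun i _ => Submodule.sum_mem _ (fun k _ =>
      Submodule.sum_mem _ (fun l _ => Submodule.smul_mem _ _ ?_)))
    exact Submodule.subset_span ⟨i, k, l, rfl⟩
  -- membership patterns in K via span induction
  have hSinK : ∀ s : ↥S, (s : A) ∈ K := by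
    intro s
    refine Submodule.span_induction (p := fun z _ => z ∈ K) ?_ (zero_mem K)
      (fun x y _ _ hx hy => add_mem hx hy) (fun c x _ hx => K.smul_mem c hx) (hspanS s)
    rintro z ⟨i, k, l, rfl⟩
    exact hKE i k l
  have haS : ∀ (a : A) (s : ↥S), a * (s : A) ∈ K := by
    intro a s
    refine Submodule.span_induction (p := fun z _ => a * z ∈ K) ?_ ?_ ?_ ?_ (hspanS s)
    · rintro z ⟨i, k, l, rfl⟩; exact hKaE i k l a
    · show a * (0:A) ∈ K; rw [mul_zero]; exact zero_mem K
    · intro x y _ _ hx hy; show a * (x + y) ∈ K; rw [mul_add]; exact add_mem hx hy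
    · intro c x _ hx; show a * (c • x) ∈ K; rw [mul_smul_comm]; exact K.smul_mem c hx
  have hSa : ∀ (a : A) (s : ↥S), (s : A) * a ∈ K := by
    intro a s
    refine Submodule.span_induction (p := fun z _ => z * a ∈ K) ?_ ?_ ?_ ?_ (hspanS s)
    · rintro z ⟨i, k, l, rfl⟩; exact hKEa i k l a
    · show (0:A) * a ∈ K; rw [zero_mul]; exact zero_mem K
    · intro x y _ _ hx hy; show (x + y) * a ∈ K; rw [add_mul]; exact add_mem hx hy
    · intro c x _ hx; show (c • x) * a ∈ K; rw [smul_mul_assoc]; exact K.smul_mem c hx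
  have haSb : ∀ (a c : A) (s : ↥S), a * (s : A) * c ∈ K := by
    intro a c s
    refine Submodule.span_induction (p := fun z _ => a * z * c ∈ K) ?_ ?_ ?_ ?_ (hspanS s)
    · rintro z ⟨i, k, l, rfl⟩
      have key : a * Ea i k l * c = (a * Ea i k l) * (Ea i l l * c) := by
        rw [← mul_assoc]
        rw [show a * Ea i k l * Ea i l l = a * (Ea i k l * Ea i l l) from mul_assoc _ _ _,
          hA_same i k l l]
      rw [key]
      exact hKmul (hKaE i k l a) (hKEa i l l c)
    · show a * (0:A) * c ∈ K; rw [mul_zero, zero_mul]; exact zero_mem K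
    · intro x y _ _ hx hy; show a * (x + y) * c ∈ K; rw [mul_add, add_mul]; exact add_mem hx hy
    · intro cc x _ hx; show a * (cc • x) * c ∈ K; rw [mul_smul_comm, smul_mul_assoc]; exact K.smul_mem cc hx
  -- the ideal generated by S
  let Gset : Set A := {z : A | (∃ s : ↥S, z = (s : A)) ∨ (∃ (a : A) (s : ↥S), z = a * (s : A))
    ∨ (∃ (a : A) (s : ↥S), z = (s : A) * a) ∨ (∃ (a c : A) (s : ↥S), z = a * (s : A) * c)}
  let M : Submodule F A := Submodule.span F Gset
  have hGM : ∀ z ∈ Gset, z ∈ M := fun z hz => Submodule.subset_span hz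
  have hMideal : ∀ a : A, ∀ x ∈ M, a * x ∈ M ∧ x * a ∈ M := by
    intro a x hx
    refine Submodule.span_induction (p := fun z _ => a * z ∈ M ∧ z * a ∈ M) ?_ ?_ ?_ ?_ hx
    · rintro z (⟨s, rfl⟩ | ⟨a1, s, rfl⟩ | ⟨a1, s, rfl⟩ | ⟨a1, c1, s, rfl⟩)
      · exact ⟨hGM _ (Or.inr (Or.inl ⟨a, s, rfl⟩)), hGM _ (Or.inr (Or.inr (Or.inl ⟨a, s, rfl⟩)))⟩
      · constructor
        · rw [← mul_assoc]; exact hGM _ (Or.inr (Or.inl ⟨a * a1, s, rfl⟩))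
        · exact hGM _ (Or.inr (Or.inr (Or.inr ⟨a1, a, s, rfl⟩)))
      · constructor
        · rw [← mul_assoc]; exact hGM _ (Or.inr (Or.inr (Or.inr ⟨a, a1, s, rfl⟩)))
        · rw [mul_assoc]; exact hGM _ (Or.inr (Or.inr (Or.inl ⟨a1 * a, s, rfl⟩)))
      · constructor
        · have hkey : a * (a1 * (s:A) * c1) = (a * a1) * (s:A) * c1 := by noncomm_ring
          rw [hkey]
          exact hGM _ (Or.inr (Or.inr (Or.inr ⟨a * a1, c1, s, rfl⟩)))
        · have hkey : (a1 * (s:A) * c1) * a = a1 * (s:A) * (c1 * a) := by noncomm_ring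
          rw [hkey]
          exact hGM _ (Or.inr (Or.inr (Or.inr ⟨a1, c1 * a, s, rfl⟩)))
    · show a * (0:A) ∈ M ∧ (0:A) * a ∈ M; simp
    · intro x y _ _ hx hy
      show a * (x + y) ∈ M ∧ (x + y) * a ∈ M
      exact ⟨by rw [mul_add]; exact add_mem hx.1 hy.1, by rw [add_mul]; exact add_mem hx.2 hy.2⟩
    · intro c x _ hx
      show a * (c • x) ∈ M ∧ (c • x) * a ∈ M
      exact ⟨by rw [mul_smul_comm]; exact M.smul_mem c hx.1,
        by rw [smul_mul_assoc]; exact M.smul_mem c hx.2⟩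
  have hSsubM : (S : Set A) ⊆ M := by
    intro z hz
    exact hGM _ (Or.inl ⟨⟨z, hz⟩, rfl⟩)
  have hM : M = ⊤ := hgen M hMideal hSsubM
  have hMK : M ≤ K := by
    apply Submodule.span_le.mpr
    rintro z (⟨s, rfl⟩ | ⟨a1, s, rfl⟩ | ⟨a1, s, rfl⟩ | ⟨a1, c1, s, rfl⟩)
    · exact hSinK s
    · exact haS a1 s
    · exact hSa a1 s
    · exact haSb a1 c1 s
  have hAK : ∀ a : A, a ∈ K := fun a => hMK (hM ▸ Submodule.mem_top)
  apply le_antisymm hJle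
  apply Submodule.span_le.mpr
  rintro z ⟨p, q, rfl⟩
  exact hAK p q
end

section
/- Let A be an associative F-algebra containing a non-zero finite-dimensional semisimple subalgebra S with simple components S_i ≅ M_{n_i}(F), i ∈ I. Set Î = I ∪ {0}, n_0 = 1, and for i, j ∈ Î let V_ij be the space of n_i × n_j matrices over F. Then there exist F-vector spaces Λ(i,j) for i, j ∈ Î, an associative F-algebra structure on Λ = ⊕_{i,j∈Î} Λ(i,j) satisfying Λ(i,j)Λ(s,t) = 0 for j ≠ s and Λ(i,j)Λ(j,t) ⊆ Λ(i,t), with Λ(i,i) having an identity element 1_i for each i ∈ I, and an isomorphism of associative algebras θ : A → ⊕_{i,j∈Î} V_ij ⊗ Λ(i,j), where the target carries the product (X⊗λ)(Y⊗μ) = XY ⊗ λμ (XY the matrix product, equal to 0 when the inner sizes do not match), such that θ(S_i) = V_ii ⊗ 1_i for every i ∈ I. -/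
/-!
Statement 5: if the associative `F`-algebra `A` contains a non-zero finite-dimensional
semisimple subalgebra `S` with simple components `S_i ≅ M_{n_i}(F)` (`i ∈ I`), then `A`
is isomorphic, as an associative algebra, to `⊕_{i,j ∈ Î} V_ij ⊗ Λ(i,j)` for suitable
vector spaces `Λ(i,j)` carrying an associative product with
`Λ(i,j)Λ(j,t) ⊆ Λ(i,t)` (and zero products otherwise), with identity elements
`1_i ∈ Λ(i,i)` for `i ∈ I`, such that the isomorphism maps `S_i` onto `V_ii ⊗ 1_i`.
-/

open scoped TensorProduct DirectSum

universe u v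

/-- `n` extended to `Î = I ∪ {0}` (`none` playing the role of `0`), with `n_0 = 1`. -/
abbrev nopt {I : Type} (n : I → ℕ) : Option I → ℕ
  | none => 1
  | some i => n i

/-- A decomposition of the algebra `A` as `⊕_{i,j ∈ Î} V_ij ⊗ Λ(i,j)` adapted to the
semisimple subalgebra `S` whose components are identified with matrix algebras by `f`. -/
structure MatrixAlgDecomp (F : Type u) [Field F]
    (A : Type v) [NonUnitalRing A] [Module F A] [SMulCommClass F A A] [IsScalarTower F A A]
    (S : NonUnitalSubalgebra F A)
    (I : Type) [Fintype I] [DecidableEq I] (n : I → ℕ)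
    (f : S →ₙₐ[F] ∀ i, Matrix (Fin (n i)) (Fin (n i)) F) :
    Type (max u (v + 1)) where
  /-- the multiplicity spaces `Λ(i,j)` -/
  Lam : Option I → Option I → Type v
  [acg : ∀ i j, AddCommGroup (Lam i j)]
  [mod : ∀ i j, Module F (Lam i j)]
  /-- the products `Λ(i,j) × Λ(j,t) → Λ(i,t)` (all other products being zero) -/
  mu : ∀ i j k, Lam i j →ₗ[F] Lam j k →ₗ[F] Lam i k
  /-- associativity of the product of `Λ` -/
  assoc : ∀ (i j k l : Option I) (a : Lam i j) (b : Lam j k) (c : Lam k l),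
    mu i k l (mu i j k a b) c = mu i j l a (mu j k l b c)
  /-- the identity elements `1_i` of the subalgebras `Λ(i,i)`, `i ∈ I` -/
  one : ∀ i : I, Lam (some i) (some i)
  one_mul : ∀ (i : I) (a : Lam (some i) (some i)), mu _ _ _ (one i) a = a
  mul_one : ∀ (i : I) (a : Lam (some i) (some i)), mu _ _ _ a (one i) = a
  /-- the `F`-linear isomorphism `θ : A ≅ ⊕_{i,j} V_ij ⊗ Λ(i,j)` -/
  θ : A ≃ₗ[F] ⨁ p : Option I × Option I,
        Matrix (Fin (nopt n p.1)) (Fin (nopt n p.2)) F ⊗[F] Lam p.1 p.2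
  /-- `θ` is multiplicative: `(X ⊗ λ)(Y ⊗ μ) = XY ⊗ λμ` for matching inner indices -/
  map_mul : ∀ (i j k : Option I) (X : Matrix (Fin (nopt n i)) (Fin (nopt n j)) F)
      (a : Lam i j) (Y : Matrix (Fin (nopt n j)) (Fin (nopt n k)) F) (b : Lam j k),
      θ.symm (DirectSum.lof F (Option I × Option I)
          (fun q => Matrix (Fin (nopt n q.1)) (Fin (nopt n q.2)) F ⊗[F] Lam q.1 q.2)
          (i, j) (X ⊗ₜ a)) *
        θ.symm (DirectSum.lof F (Option I × Option I)
          (fun q => Matrix (Fin (nopt n q.1)) (Fin (nopt n q.2)) F ⊗[F] Lam q.1 q.2)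
          (j, k) (Y ⊗ₜ b))
      = θ.symm (DirectSum.lof F (Option I × Option I)
          (fun q => Matrix (Fin (nopt n q.1)) (Fin (nopt n q.2)) F ⊗[F] Lam q.1 q.2)
          (i, k) ((X * Y) ⊗ₜ mu i j k a b))
  /-- `θ` is multiplicative: `(X ⊗ λ)(Y ⊗ μ) = 0` when the inner indices differ -/
  map_mul_zero : ∀ (i j s t : Option I), j ≠ s →
      ∀ (X : Matrix (Fin (nopt n i)) (Fin (nopt n j)) F) (a : Lam i j)
        (Y : Matrix (Fin (nopt n s)) (Fin (nopt n t)) F) (b : Lam s t),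
      θ.symm (DirectSum.lof F (Option I × Option I)
          (fun q => Matrix (Fin (nopt n q.1)) (Fin (nopt n q.2)) F ⊗[F] Lam q.1 q.2)
          (i, j) (X ⊗ₜ a)) *
        θ.symm (DirectSum.lof F (Option I × Option I)
          (fun q => Matrix (Fin (nopt n q.1)) (Fin (nopt n q.2)) F ⊗[F] Lam q.1 q.2)
          (s, t) (Y ⊗ₜ b)) = 0
  /-- `θ` maps the simple component `S_i` of `S` onto `V_ii ⊗ 1_i` -/
  comp_image : ∀ i : I,
      (fun a : A => θ a) '' {a : A | ∃ h : a ∈ S, ∀ j : I, j ≠ i → f ⟨a, h⟩ j = 0}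
        = {y | ∃ X : Matrix (Fin (n i)) (Fin (n i)) F,
            y = DirectSum.lof F (Option I × Option I)
              (fun q => Matrix (Fin (nopt n q.1)) (Fin (nopt n q.2)) F ⊗[F] Lam q.1 q.2)
              (some i, some i) (X ⊗ₜ one i)}

namespace AMD

variable {F : Type u} [Field F]
  {A : Type v} [NonUnitalRing A] [Module F A] [SMulCommClass F A A] [IsScalarTower F A A]
  {S : NonUnitalSubalgebra F A}
  {I : Type} [Fintype I] [DecidableEq I] {n : I → ℕ}
  (f : S →ₙₐ[F] ∀ i, Matrix (Fin (n i)) (Fin (n i)) F) (hf : Function.Bijective f)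
  (hn : ∀ i, 0 < n i)

noncomputable def finv (m : ∀ i, Matrix (Fin (n i)) (Fin (n i)) F) : S :=
  (Equiv.ofBijective f hf).symm m

lemma f_finv (m : ∀ i, Matrix (Fin (n i)) (Fin (n i)) F) : f (finv f hf m) = m :=
  (Equiv.ofBijective f hf).apply_symm_apply m

lemma finv_f (s : S) : finv f hf (f s) = s :=
  (Equiv.ofBijective f hf).symm_apply_apply s

lemma finv_mul (m m') : finv f hf (m * m') = finv f hf m * finv f hf m' := by
  apply hf.injective; rw [map_mul, f_finv, f_finv, f_finv]

lemma finv_smul (c : F) (m) : finv f hf (c • m) = c • finv f hf m := by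
  apply hf.injective; rw [map_smul, f_finv, f_finv]

lemma finv_add (m m') : finv f hf (m + m') = finv f hf m + finv f hf m' := by
  apply hf.injective; rw [map_add, f_finv, f_finv, f_finv]

lemma finv_sum {κ : Type*} (t : Finset κ) (g : κ → ∀ i, Matrix (Fin (n i)) (Fin (n i)) F) :
    finv f hf (∑ k ∈ t, g k) = ∑ k ∈ t, finv f hf (g k) := by
  classical
  induction t using Finset.induction with
  | empty =>
      apply hf.injective; rw [f_finv]; simp
  | insert _ _ h ih => simp [Finset.sum_insert h, finv_add f hf, ih]

/-- matrix units of `A`, sitting inside `S`. -/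
noncomputable def uu (i : I) (a b : Fin (n i)) : A :=
  (finv f hf (Pi.single i (Matrix.single a b 1)) : S)

lemma single_mul_single_ne {i j : I} (h : i ≠ j) (M : Matrix (Fin (n i)) (Fin (n i)) F)
    (N : Matrix (Fin (n j)) (Fin (n j)) F) :
    (Pi.single i M : ∀ k, Matrix (Fin (n k)) (Fin (n k)) F) * Pi.single j N = 0 := by
  funext k
  rcases eq_or_ne k i with rfl | hk
  · have : k ≠ j := h
    simp [Pi.single_eq_of_ne this]
  · simp [Pi.single_eq_of_ne hk]

lemma uu_mul_same (i : I) (a b c : Fin (n i)) :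
    uu f hf i a b * uu f hf i b c = uu f hf i a c := by
  rw [uu, uu, uu, ← NonUnitalSubalgebra.coe_mul, ← finv_mul, ← Pi.single_mul,
    Matrix.single_mul_single_same, mul_one]

lemma uu_mul_ne_idx {i j : I} (h : i ≠ j) (a b : Fin (n i)) (c d : Fin (n j)) :
    uu f hf i a b * uu f hf j c d = 0 := by
  rw [uu, uu, ← NonUnitalSubalgebra.coe_mul, ← finv_mul, single_mul_single_ne h]
  have : finv f hf (0 : ∀ i, Matrix (Fin (n i)) (Fin (n i)) F) = 0 := by
    apply hf.injective; rw [f_finv, map_zero]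
  rw [this]; rfl

lemma uu_mul_ne_fin (i : I) {b c : Fin (n i)} (h : b ≠ c) (a d : Fin (n i)) :
    uu f hf i a b * uu f hf i c d = 0 := by
  rw [uu, uu, ← NonUnitalSubalgebra.coe_mul, ← finv_mul, ← Pi.single_mul,
    Matrix.single_mul_single_of_ne (h := h)]
  have : finv f hf (Pi.single i (0 : Matrix (Fin (n i)) (Fin (n i)) F)) = 0 := by
    apply hf.injective; rw [f_finv, map_zero]; simp
  rw [this]; rfl

/-- the identity of `S`, as an element of `A`. -/
noncomputable def ee : A := (finv f hf 1 : S)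

lemma ee_mul_coe (s : S) : ee f hf * (s : A) = s := by
  rw [ee]
  nth_rewrite 1 [show s = finv f hf (f s) from (finv_f f hf s).symm]
  rw [← NonUnitalSubalgebra.coe_mul, ← finv_mul, one_mul, finv_f]

lemma coe_mul_ee (s : S) : (s : A) * ee f hf = s := by
  rw [ee]
  nth_rewrite 1 [show s = finv f hf (f s) from (finv_f f hf s).symm]
  rw [← NonUnitalSubalgebra.coe_mul, ← finv_mul, mul_one, finv_f]

lemma one_eq_sum_std (i : I) : (1 : Matrix (Fin (n i)) (Fin (n i)) F)
    = ∑ a : Fin (n i), Matrix.single a a (1 : F) := by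
  ext a b
  simp only [Matrix.sum_apply]
  by_cases hab : a = b
  · subst hab
    rw [Finset.sum_eq_single a (fun c _ hc => by simp [hc]) (by simp)]
    simp
  · rw [Finset.sum_eq_zero (fun c _ => by
      rcases eq_or_ne c a with rfl | h
      · simp [hab]
      · simp [h])]
    simp [Matrix.one_apply, hab]

lemma key_sum_single : (∑ i : I, ∑ a : Fin (n i), Pi.single i (Matrix.single a a (1:F))
    : ∀ i, Matrix (Fin (n i)) (Fin (n i)) F) = 1 := by
  have h1 : ∀ i : I, ∑ a : Fin (n i), (Pi.single i (Matrix.single a a (1:F))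
      : ∀ j, Matrix (Fin (n j)) (Fin (n j)) F)
      = Pi.single i (1 : Matrix (Fin (n i)) (Fin (n i)) F) := by
    intro i
    rw [one_eq_sum_std]
    exact (map_sum (LinearMap.single F (fun j => Matrix (Fin (n j)) (Fin (n j)) F) i)
      (fun a : Fin (n i) => Matrix.single a a (1:F)) Finset.univ).symm
  rw [Finset.sum_congr rfl fun i _ => h1 i]
  rw [show (1 : ∀ i, Matrix (Fin (n i)) (Fin (n i)) F) = fun i => (1 : Matrix (Fin (n i)) (Fin (n i)) F) from rfl]
  exact Finset.univ_sum_single _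

lemma sum_uu : ∑ i : I, ∑ a : Fin (n i), uu f hf i a a = ee f hf := by
  have h1 : ∑ i : I, ∑ a : Fin (n i), uu f hf i a a
      = ((∑ i : I, ∑ a : Fin (n i), finv f hf (Pi.single i (Matrix.single a a 1)) : S) : A) := by
    push_cast; rfl
  have h2 : (∑ i : I, ∑ a : Fin (n i), finv f hf (Pi.single i (Matrix.single a a (1:F))) : S)
      = finv f hf 1 := by
    conv_rhs => rw [← key_sum_single (n := n), finv_sum]
    exact Finset.sum_congr rfl fun i _ => (finv_sum f hf _ _).symm
  rw [h1, h2]; rfl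

/-! ### The unitization layer -/

/-- left multiplication by an element of the unitization, as a map `A →ₗ[F] A`. -/
noncomputable def Lmul (w : Unitization F A) : A →ₗ[F] A where
  toFun x := w.fst • x + w.snd * x
  map_add' x y := by simp only [mul_add, smul_add]; abel
  map_smul' c x := by
    simp only [RingHom.id_apply, smul_add, mul_smul_comm, smul_comm c w.fst x]

/-- right multiplication by an element of the unitization, as a map `A →ₗ[F] A`. -/
noncomputable def Rmul (w : Unitization F A) : A →ₗ[F] A where
  toFun x := w.fst • x + x * w.snd
  map_add' x y := by simp only [add_mul, smul_add]; abel
  map_smul' c x := by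
    simp only [RingHom.id_apply, smul_add, smul_mul_assoc, smul_comm c w.fst x]

lemma inr_Lmul (w : Unitization F A) (x : A) :
    (↑(Lmul w x) : Unitization F A) = w * ↑x := by
  ext
  · simp [Lmul]
  · simp [Lmul]

lemma inr_Rmul (w : Unitization F A) (x : A) :
    (↑(Rmul w x) : Unitization F A) = ↑x * w := by
  ext
  · simp [Rmul]
  · simp [Rmul]

lemma Lmul_Lmul (w w' : Unitization F A) (x : A) :
    Lmul w (Lmul w' x) = Lmul (w * w') x := by
  apply Unitization.inr_injective (R := F)
  rw [inr_Lmul, inr_Lmul, inr_Lmul, mul_assoc]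

lemma Rmul_Rmul (w w' : Unitization F A) (x : A) :
    Rmul w (Rmul w' x) = Rmul (w' * w) x := by
  apply Unitization.inr_injective (R := F)
  rw [inr_Rmul, inr_Rmul, inr_Rmul, mul_assoc]

lemma Lmul_Rmul (w w' : Unitization F A) (x : A) :
    Lmul w (Rmul w' x) = Rmul w' (Lmul w x) := by
  apply Unitization.inr_injective (R := F)
  rw [inr_Lmul, inr_Rmul, inr_Rmul, inr_Lmul, mul_assoc]

lemma Lmul_one (x : A) : Lmul (1 : Unitization F A) x = x := by
  simp [Lmul]

lemma Rmul_one (x : A) : Rmul (1 : Unitization F A) x = x := by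
  simp [Rmul]

lemma Lmul_zero (x : A) : Lmul (0 : Unitization F A) x = 0 := by
  simp [Lmul]

lemma Rmul_zero (x : A) : Rmul (0 : Unitization F A) x = 0 := by
  simp [Rmul]

lemma Lmul_inr (a x : A) : Lmul (↑a : Unitization F A) x = a * x := by
  simp [Lmul]

lemma Rmul_inr (a x : A) : Rmul (↑a : Unitization F A) x = x * a := by
  simp [Rmul]

lemma Lmul_mul (w : Unitization F A) (x y : A) :
    Lmul w x * y = Lmul w (x * y) := by
  apply Unitization.inr_injective (R := F)
  rw [Unitization.inr_mul, inr_Lmul, inr_Lmul, Unitization.inr_mul, mul_assoc]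

lemma Rmul_mul (w : Unitization F A) (x y : A) :
    x * Rmul w y = Rmul w (x * y) := by
  apply Unitization.inr_injective (R := F)
  rw [Unitization.inr_mul, inr_Rmul, inr_Rmul, Unitization.inr_mul, mul_assoc]

lemma Rmul_mul_Lmul (w : Unitization F A) (x y : A) :
    Rmul w x * y = x * Lmul w y := by
  apply Unitization.inr_injective (R := F)
  rw [Unitization.inr_mul, Unitization.inr_mul, inr_Rmul, inr_Lmul, mul_assoc]

lemma Lmul_add (w w' : Unitization F A) (x : A) :
    Lmul (w + w') x = Lmul w x + Lmul w' x := by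
  simp only [Lmul, LinearMap.coe_mk, AddHom.coe_mk, Unitization.fst_add, Unitization.snd_add,
    add_smul, add_mul]
  abel

lemma Rmul_add (w w' : Unitization F A) (x : A) :
    Rmul (w + w') x = Rmul w x + Rmul w' x := by
  simp only [Rmul, LinearMap.coe_mk, AddHom.coe_mk, Unitization.fst_add, Unitization.snd_add,
    add_smul, mul_add]
  abel

lemma Lmul_sum {κ : Type*} (t : Finset κ) (w : κ → Unitization F A) (x : A) :
    Lmul (∑ k ∈ t, w k) x = ∑ k ∈ t, Lmul (w k) x := by
  classical
  induction t using Finset.induction with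
  | empty => simp [Lmul_zero]
  | insert _ _ h ih => rw [Finset.sum_insert h, Finset.sum_insert h, Lmul_add, ih]

lemma Rmul_sum {κ : Type*} (t : Finset κ) (w : κ → Unitization F A) (x : A) :
    Rmul (∑ k ∈ t, w k) x = ∑ k ∈ t, Rmul (w k) x := by
  classical
  induction t using Finset.induction with
  | empty => simp [Rmul_zero]
  | insert _ _ h ih => rw [Finset.sum_insert h, Finset.sum_insert h, Rmul_add, ih]

lemma inr_sum {κ : Type*} (t : Finset κ) (g : κ → A) :
    (↑(∑ k ∈ t, g k) : Unitization F A) = ∑ k ∈ t, (↑(g k) : Unitization F A) := by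
  classical
  induction t using Finset.induction with
  | empty => simp
  | insert _ _ h ih => rw [Finset.sum_insert h, Finset.sum_insert h, Unitization.inr_add, ih]

lemma uu_mul_ee (i : I) (a b : Fin (n i)) : uu f hf i a b * ee f hf = uu f hf i a b :=
  coe_mul_ee f hf _

lemma ee_mul_uu (i : I) (a b : Fin (n i)) : ee f hf * uu f hf i a b = uu f hf i a b :=
  ee_mul_coe f hf _

lemma ee_mul_ee : ee f hf * ee f hf = ee f hf := ee_mul_coe f hf _

/-- the full system of "matrix units" in the unitization, indexed by `Î = Option I`. -/
noncomputable def vv : ∀ i : Option I, Fin (nopt n i) → Fin (nopt n i) → Unitization F A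
  | some i => fun a b => ↑(uu f hf i a b)
  | none => fun _ _ => 1 - ↑(ee f hf)

lemma vv_mul_same (i : Option I) (a b c : Fin (nopt n i)) :
    vv f hf i a b * vv f hf i b c = vv f hf i a c := by
  cases i with
  | some i => show (↑(uu f hf i a b) : Unitization F A) * ↑(uu f hf i b c) = ↑(uu f hf i a c)
              rw [← Unitization.inr_mul, uu_mul_same]
  | none =>
      show ((1 : Unitization F A) - ↑(ee f hf)) * (1 - ↑(ee f hf)) = 1 - ↑(ee f hf)
      have h : (↑(ee f hf) : Unitization F A) * ↑(ee f hf) = ↑(ee f hf) := by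
        rw [← Unitization.inr_mul, ee_mul_ee]
      rw [sub_mul, one_mul, mul_sub, mul_one, h, sub_self, sub_zero]

lemma vv_mul_ne_idx {i j : Option I} (h : i ≠ j) (a b : Fin (nopt n i))
    (c d : Fin (nopt n j)) : vv f hf i a b * vv f hf j c d = 0 := by
  cases i with
  | some i =>
    cases j with
    | some j =>
        show (↑(uu f hf i a b) : Unitization F A) * ↑(uu f hf j c d) = 0
        rw [← Unitization.inr_mul, uu_mul_ne_idx f hf (fun hij => h (by rw [hij]))]
        exact Unitization.inr_zero F
    | none =>
        show (↑(uu f hf i a b) : Unitization F A) * (1 - ↑(ee f hf)) = 0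
        rw [mul_sub, mul_one, ← Unitization.inr_mul, uu_mul_ee, sub_self]
  | none =>
    cases j with
    | some j =>
        show ((1 : Unitization F A) - ↑(ee f hf)) * ↑(uu f hf j c d) = 0
        rw [sub_mul, one_mul, ← Unitization.inr_mul, ee_mul_uu, sub_self]
    | none => exact absurd rfl h

lemma vv_mul_ne_fin (i : Option I) {b c : Fin (nopt n i)} (h : b ≠ c)
    (a d : Fin (nopt n i)) : vv f hf i a b * vv f hf i c d = 0 := by
  cases i with
  | some i =>
      show (↑(uu f hf i a b) : Unitization F A) * ↑(uu f hf i c d) = 0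
      rw [← Unitization.inr_mul, uu_mul_ne_fin f hf i h]
      exact Unitization.inr_zero F
  | none => exact absurd (Subsingleton.elim b c) h

lemma sum_vv : ∑ i : Option I, ∑ a : Fin (nopt n i), vv f hf i a a = 1 := by
  classical
  rw [Fintype.sum_option]
  have h1 : ∀ i : I, ∑ a : Fin (nopt n (some i)), vv f hf (some i) a a
      = (↑(∑ a : Fin (n i), uu f hf i a a) : Unitization F A) := fun i => (inr_sum _ _).symm
  have h2 : ∑ i : I, ∑ a : Fin (nopt n (some i)), vv f hf (some i) a a
      = (↑(∑ i : I, ∑ a : Fin (n i), uu f hf i a a) : Unitization F A) := by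
    rw [inr_sum]
    exact Finset.sum_congr rfl fun i _ => h1 i
  have h3 : ∑ a : Fin (nopt n (none : Option I)), vv f hf none a a
      = (1 : Unitization F A) - ↑(ee f hf) := by
    show ∑ _a : Fin 1, ((1 : Unitization F A) - ↑(ee f hf)) = _
    simp
  rw [h3, h2, sum_uu, sub_add_cancel]

/-- base point of each `Fin (nopt n i)`. -/
def zz (hn : ∀ i, 0 < n i) : ∀ i : Option I, Fin (nopt n i)
  | none => ⟨0, Nat.one_pos⟩
  | some i => ⟨0, hn i⟩

/-- the idempotents `E_i`, `i ∈ Î`. -/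
noncomputable def EE (i : Option I) : Unitization F A :=
  vv f hf i (zz hn i) (zz hn i)

lemma vv_some (i : I) (a b : Fin (nopt n (some i))) :
    vv f hf (some i) a b = ↑(uu f hf i a b) := rfl

lemma EE_some (i : I) : EE f hf hn (some i)
    = ↑(uu f hf i (zz hn (some i)) (zz hn (some i))) := rfl

/-- the multiplicity spaces `Λ(i,j) = E_i A E_j`. -/
noncomputable def LamS (i j : Option I) : Submodule F A where
  carrier := {x | Lmul (EE f hf hn i) x = x ∧ Rmul (EE f hf hn j) x = x}
  add_mem' ha hb := ⟨by rw [map_add, ha.1, hb.1], by rw [map_add, ha.2, hb.2]⟩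
  zero_mem' := ⟨map_zero _, map_zero _⟩
  smul_mem' c x hx := ⟨by rw [map_smul, hx.1], by rw [map_smul, hx.2]⟩

lemma mem_LamS {i j : Option I} {x : A} :
    x ∈ LamS f hf hn i j ↔ Lmul (EE f hf hn i) x = x ∧ Rmul (EE f hf hn j) x = x :=
  Iff.rfl

lemma mul_mem_LamS {i j j' k : Option I} {x y : A} (hx : x ∈ LamS f hf hn i j)
    (hy : y ∈ LamS f hf hn j' k) : x * y ∈ LamS f hf hn i k :=
  ⟨by rw [← Lmul_mul, hx.1], by rw [← Rmul_mul, hy.2]⟩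

/-- the product maps `Λ(i,j) → Λ(j,k) → Λ(i,k)`. -/
noncomputable def muL (i j k : Option I) :
    LamS f hf hn i j →ₗ[F] LamS f hf hn j k →ₗ[F] LamS f hf hn i k :=
  LinearMap.mk₂ F (fun x y => ⟨x.1 * y.1, mul_mem_LamS f hf hn x.2 y.2⟩)
    (fun x x' y => Subtype.ext (by simp [add_mul]))
    (fun c x y => Subtype.ext (by simp [smul_mul_assoc]))
    (fun x y y' => Subtype.ext (by simp [mul_add]))
    (fun c x y => Subtype.ext (by simp [mul_smul_comm]))

/-- the component maps of `Ψ = θ⁻¹`. -/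
noncomputable def PsiComp (p : Option I × Option I) :
    Matrix (Fin (nopt n p.1)) (Fin (nopt n p.2)) F ⊗[F] (LamS f hf hn p.1 p.2) →ₗ[F] A :=
  TensorProduct.lift (LinearMap.mk₂ F
    (fun X x => ∑ a, ∑ b, X a b •
      Lmul (vv f hf p.1 a (zz hn p.1)) (Rmul (vv f hf p.2 (zz hn p.2) b) x.1))
    (fun X X' x => by simp [Matrix.add_apply, add_smul, Finset.sum_add_distrib])
    (fun c X x => by simp [Matrix.smul_apply, smul_smul, Finset.smul_sum])
    (fun X x x' => by simp [smul_add, Finset.sum_add_distrib])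
    (fun c X x => by
      simp only [SetLike.val_smul, map_smul]
      simp [smul_comm c, Finset.smul_sum]))

/-- `Ψ = θ⁻¹`. -/
noncomputable def Psi : (⨁ p : Option I × Option I,
    Matrix (Fin (nopt n p.1)) (Fin (nopt n p.2)) F ⊗[F] (LamS f hf hn p.1 p.2)) →ₗ[F] A :=
  DirectSum.toModule F _ A (fun p => PsiComp f hf hn p)

/-- the projections `A → Λ(i,j)` (matrix entry `(a,b)` of component `(i,j)` of `θ`). -/
noncomputable def projLam (p : Option I × Option I) (a : Fin (nopt n p.1))
    (b : Fin (nopt n p.2)) : A →ₗ[F] LamS f hf hn p.1 p.2 :=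
  LinearMap.codRestrict (LamS f hf hn p.1 p.2)
    ((Lmul (vv f hf p.1 (zz hn p.1) a)).comp (Rmul (vv f hf p.2 b (zz hn p.2))))
    (fun x => by
      constructor
      · show Lmul _ (Lmul _ _) = _
        rw [Lmul_Lmul, EE, vv_mul_same]
        rfl
      · show Rmul _ (Lmul _ _) = _
        rw [← Lmul_Rmul, Rmul_Rmul, EE, vv_mul_same]
        rfl)

/-- the component maps of `Φ = θ`. -/
noncomputable def PhiComp (p : Option I × Option I) :
    A →ₗ[F] Matrix (Fin (nopt n p.1)) (Fin (nopt n p.2)) F ⊗[F] (LamS f hf hn p.1 p.2) :=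
  ∑ a, ∑ b, (TensorProduct.mk F _ _ (Matrix.single a b (1:F))).comp
    (projLam f hf hn p a b)

/-- `Φ = θ`. -/
noncomputable def Phi : A →ₗ[F] ⨁ p : Option I × Option I,
    Matrix (Fin (nopt n p.1)) (Fin (nopt n p.2)) F ⊗[F] (LamS f hf hn p.1 p.2) :=
  ∑ p : Option I × Option I,
    (DirectSum.lof F (Option I × Option I)
      (fun q => Matrix (Fin (nopt n q.1)) (Fin (nopt n q.2)) F ⊗[F] (LamS f hf hn q.1 q.2)) p).comp
      (PhiComp f hf hn p)

lemma PsiComp_tmul (p : Option I × Option I) (X : Matrix (Fin (nopt n p.1)) (Fin (nopt n p.2)) F)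
    (x : LamS f hf hn p.1 p.2) :
    PsiComp f hf hn p (X ⊗ₜ x) = ∑ a, ∑ b, X a b •
      Lmul (vv f hf p.1 a (zz hn p.1)) (Rmul (vv f hf p.2 (zz hn p.2) b) x.1) := by
  rw [PsiComp, TensorProduct.lift.tmul, LinearMap.mk₂_apply]

lemma sum_std_smul {m k : ℕ} (a : Fin m) (b : Fin k) (g : Fin m → Fin k → A) :
    ∑ a', ∑ b', (Matrix.single a b (1:F)) a' b' • g a' b' = g a b := by
  rw [Finset.sum_eq_single a (fun a' _ ha' => Finset.sum_eq_zero fun b' _ => by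
      rw [Matrix.single_apply_of_row_ne (Ne.symm ha') _ _ _, zero_smul])
    (fun h => absurd (Finset.mem_univ a) h)]
  rw [Finset.sum_eq_single b (fun b' _ hb' => by
      rw [Matrix.single_apply_of_col_ne _ _ (Ne.symm hb') _, zero_smul])
    (fun h => absurd (Finset.mem_univ b) h)]
  rw [Matrix.single_apply_same, one_smul]

lemma Psi_lof_tmul (p : Option I × Option I) (X : Matrix (Fin (nopt n p.1)) (Fin (nopt n p.2)) F)
    (x : LamS f hf hn p.1 p.2) :
    Psi f hf hn (DirectSum.lof F (Option I × Option I)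
      (fun q => Matrix (Fin (nopt n q.1)) (Fin (nopt n q.2)) F ⊗[F] (LamS f hf hn q.1 q.2)) p
      (X ⊗ₜ x)) = ∑ a, ∑ b, X a b •
      Lmul (vv f hf p.1 a (zz hn p.1)) (Rmul (vv f hf p.2 (zz hn p.2) b) x.1) := by
  rw [Psi, DirectSum.toModule_lof, PsiComp_tmul]

lemma Psi_lof_tmul_std (p : Option I × Option I) (a : Fin (nopt n p.1)) (b : Fin (nopt n p.2))
    (x : LamS f hf hn p.1 p.2) :
    Psi f hf hn (DirectSum.lof F (Option I × Option I)
      (fun q => Matrix (Fin (nopt n q.1)) (Fin (nopt n q.2)) F ⊗[F] (LamS f hf hn q.1 q.2)) p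
      (Matrix.single a b (1:F) ⊗ₜ x)) =
      Lmul (vv f hf p.1 a (zz hn p.1)) (Rmul (vv f hf p.2 (zz hn p.2) b) x.1) := by
  rw [Psi_lof_tmul, sum_std_smul]

lemma projLam_coe (p : Option I × Option I) (a : Fin (nopt n p.1)) (b : Fin (nopt n p.2))
    (x : A) : (projLam f hf hn p a b x : A)
      = Lmul (vv f hf p.1 (zz hn p.1) a) (Rmul (vv f hf p.2 b (zz hn p.2)) x) := rfl

lemma projLam_ins (p q : Option I × Option I) (a : Fin (nopt n p.1)) (b : Fin (nopt n p.2))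
    (a' : Fin (nopt n q.1)) (b' : Fin (nopt n q.2)) (x : A) :
    (projLam f hf hn q a' b'
        (Lmul (vv f hf p.1 a (zz hn p.1)) (Rmul (vv f hf p.2 (zz hn p.2) b) x)) : A)
      = Lmul (vv f hf q.1 (zz hn q.1) a' * vv f hf p.1 a (zz hn p.1))
          (Rmul (vv f hf p.2 (zz hn p.2) b * vv f hf q.2 b' (zz hn q.2)) x) := by
  rw [projLam_coe, ← Lmul_Rmul, Lmul_Lmul, Rmul_Rmul]

lemma Rsum_one (x : A) :
    ∑ j : Option I, ∑ b : Fin (nopt n j), Rmul (vv f hf j b b) x = x :=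
  calc ∑ j : Option I, ∑ b : Fin (nopt n j), Rmul (vv f hf j b b) x
      = ∑ j : Option I, Rmul (∑ b : Fin (nopt n j), vv f hf j b b) x :=
        Finset.sum_congr rfl fun j _ => (Rmul_sum _ _ _).symm
    _ = Rmul (∑ j : Option I, ∑ b : Fin (nopt n j), vv f hf j b b) x := (Rmul_sum _ _ _).symm
    _ = x := by rw [sum_vv, Rmul_one]

lemma Lsum_one (x : A) :
    ∑ i : Option I, ∑ a : Fin (nopt n i), Lmul (vv f hf i a a) x = x :=
  calc ∑ i : Option I, ∑ a : Fin (nopt n i), Lmul (vv f hf i a a) x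
      = ∑ i : Option I, Lmul (∑ a : Fin (nopt n i), vv f hf i a a) x :=
        Finset.sum_congr rfl fun i _ => (Lmul_sum _ _ _).symm
    _ = Lmul (∑ i : Option I, ∑ a : Fin (nopt n i), vv f hf i a a) x := (Lmul_sum _ _ _).symm
    _ = x := by rw [sum_vv, Lmul_one]

lemma Psi_Phi (x : A) : Psi f hf hn (Phi f hf hn x) = x := by
  have h1 : Phi f hf hn x = ∑ p : Option I × Option I, (DirectSum.lof F (Option I × Option I)
      (fun q => Matrix (Fin (nopt n q.1)) (Fin (nopt n q.2)) F ⊗[F] (LamS f hf hn q.1 q.2)) p)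
      (PhiComp f hf hn p x) := by
    rw [Phi, LinearMap.sum_apply]
    simp only [LinearMap.comp_apply]
  have h2 : ∀ p : Option I × Option I, PhiComp f hf hn p x
      = ∑ a, ∑ b, Matrix.single a b (1:F) ⊗ₜ[F] (projLam f hf hn p a b x) := by
    intro p
    rw [PhiComp]
    simp only [LinearMap.sum_apply, LinearMap.comp_apply, TensorProduct.mk_apply]
  have h3 : ∀ p : Option I × Option I, Psi f hf hn ((DirectSum.lof F (Option I × Option I)
      (fun q => Matrix (Fin (nopt n q.1)) (Fin (nopt n q.2)) F ⊗[F] (LamS f hf hn q.1 q.2)) p)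
      (PhiComp f hf hn p x))
      = ∑ a, ∑ b, Lmul (vv f hf p.1 a a) (Rmul (vv f hf p.2 b b) x) := by
    intro p
    rw [h2, map_sum, map_sum]
    refine Finset.sum_congr rfl fun a _ => ?_
    rw [map_sum, map_sum]
    refine Finset.sum_congr rfl fun b _ => ?_
    rw [Psi_lof_tmul_std, projLam_coe, ← Lmul_Rmul, Lmul_Lmul, Rmul_Rmul,
      vv_mul_same, vv_mul_same]
  rw [h1, map_sum]
  rw [Finset.sum_congr rfl fun p _ => h3 p]
  rw [Fintype.sum_prod_type]
  have h4 : ∀ (i : Option I) (a : Fin (nopt n i)),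
      ∑ j : Option I, ∑ b : Fin (nopt n j),
        Lmul (vv f hf i a a) (Rmul (vv f hf j b b) x) = Lmul (vv f hf i a a) x := by
    intro i a
    calc ∑ j : Option I, ∑ b : Fin (nopt n j), Lmul (vv f hf i a a) (Rmul (vv f hf j b b) x)
        = Lmul (vv f hf i a a) (∑ j : Option I, ∑ b : Fin (nopt n j), Rmul (vv f hf j b b) x) := by
          rw [map_sum]
          exact Finset.sum_congr rfl fun j _ => (map_sum _ _ _).symm
      _ = Lmul (vv f hf i a a) x := by rw [Rsum_one]
  calc ∑ i : Option I, ∑ j : Option I, ∑ a : Fin (nopt n i), ∑ b : Fin (nopt n j),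
        Lmul (vv f hf i a a) (Rmul (vv f hf j b b) x)
      = ∑ i : Option I, ∑ a : Fin (nopt n i), ∑ j : Option I, ∑ b : Fin (nopt n j),
        Lmul (vv f hf i a a) (Rmul (vv f hf j b b) x) :=
        Finset.sum_congr rfl fun i _ => Finset.sum_comm
    _ = ∑ i : Option I, ∑ a : Fin (nopt n i), Lmul (vv f hf i a a) x :=
        Finset.sum_congr rfl fun i _ => Finset.sum_congr rfl fun a _ => h4 i a
    _ = x := Lsum_one f hf x

lemma projLam_ins_zero_left {p q : Option I × Option I} (h : q.1 ≠ p.1)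
    (a : Fin (nopt n p.1)) (b : Fin (nopt n p.2)) (a' : Fin (nopt n q.1))
    (b' : Fin (nopt n q.2)) (x : A) :
    projLam f hf hn q a' b'
      (Lmul (vv f hf p.1 a (zz hn p.1)) (Rmul (vv f hf p.2 (zz hn p.2) b) x)) = 0 := by
  apply Subtype.ext
  rw [projLam_ins, vv_mul_ne_idx f hf h, Lmul_zero]
  rfl

lemma projLam_ins_zero_right {p q : Option I × Option I} (h : q.2 ≠ p.2)
    (a : Fin (nopt n p.1)) (b : Fin (nopt n p.2)) (a' : Fin (nopt n q.1))
    (b' : Fin (nopt n q.2)) (x : A) :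
    projLam f hf hn q a' b'
      (Lmul (vv f hf p.1 a (zz hn p.1)) (Rmul (vv f hf p.2 (zz hn p.2) b) x)) = 0 := by
  apply Subtype.ext
  rw [projLam_ins, vv_mul_ne_idx f hf (Ne.symm h), Rmul_zero, map_zero]
  rfl

lemma projLam_ins_zero_fin_left {p : Option I × Option I} {a a' : Fin (nopt n p.1)}
    (h : a' ≠ a) (b : Fin (nopt n p.2)) (b' : Fin (nopt n p.2)) (x : A) :
    projLam f hf hn p a' b'
      (Lmul (vv f hf p.1 a (zz hn p.1)) (Rmul (vv f hf p.2 (zz hn p.2) b) x)) = 0 := by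
  apply Subtype.ext
  rw [projLam_ins, vv_mul_ne_fin f hf p.1 h, Lmul_zero]
  rfl

lemma projLam_ins_zero_fin_right {p : Option I × Option I} {b b' : Fin (nopt n p.2)}
    (h : b' ≠ b) (a : Fin (nopt n p.1)) (a' : Fin (nopt n p.1)) (x : A) :
    projLam f hf hn p a' b'
      (Lmul (vv f hf p.1 a (zz hn p.1)) (Rmul (vv f hf p.2 (zz hn p.2) b) x)) = 0 := by
  apply Subtype.ext
  rw [projLam_ins, vv_mul_ne_fin f hf p.2 (Ne.symm h), Rmul_zero, map_zero]
  rfl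

lemma projLam_ins_diag (p : Option I × Option I) (a : Fin (nopt n p.1))
    (b : Fin (nopt n p.2)) (x : LamS f hf hn p.1 p.2) :
    projLam f hf hn p a b
      (Lmul (vv f hf p.1 a (zz hn p.1)) (Rmul (vv f hf p.2 (zz hn p.2) b) x.1)) = x := by
  apply Subtype.ext
  rw [projLam_ins, vv_mul_same, vv_mul_same]
  show Lmul (EE f hf hn p.1) (Rmul (EE f hf hn p.2) x.1) = x.1
  rw [x.2.2, x.2.1]

lemma Phi_ins (p : Option I × Option I) (a : Fin (nopt n p.1)) (b : Fin (nopt n p.2))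
    (x : LamS f hf hn p.1 p.2) :
    Phi f hf hn (Lmul (vv f hf p.1 a (zz hn p.1)) (Rmul (vv f hf p.2 (zz hn p.2) b) x.1))
    = DirectSum.lof F (Option I × Option I)
        (fun q => Matrix (Fin (nopt n q.1)) (Fin (nopt n q.2)) F ⊗[F] (LamS f hf hn q.1 q.2)) p
        (Matrix.single a b (1:F) ⊗ₜ x) := by
  set y := Lmul (vv f hf p.1 a (zz hn p.1)) (Rmul (vv f hf p.2 (zz hn p.2) b) x.1) with hy
  have hcomp : ∀ q : Option I × Option I, PhiComp f hf hn q y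
      = ∑ a', ∑ b', Matrix.single a' b' (1:F) ⊗ₜ[F] (projLam f hf hn q a' b' y) := by
    intro q
    rw [PhiComp]
    simp only [LinearMap.sum_apply, LinearMap.comp_apply, TensorProduct.mk_apply]
  rw [Phi, LinearMap.sum_apply]
  simp only [LinearMap.comp_apply]
  rw [Finset.sum_eq_single p ?_ ?_]
  · rw [hcomp]
    congr 1
    rw [Finset.sum_eq_single a ?_ ?_]
    · rw [Finset.sum_eq_single b ?_ ?_]
      · rw [projLam_ins_diag]
      · intro b' _ hb'
        rw [projLam_ins_zero_fin_right f hf hn hb', TensorProduct.tmul_zero]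
      · intro h; exact absurd (Finset.mem_univ b) h
    · intro a' _ ha'
      apply Finset.sum_eq_zero
      intro b' _
      rw [projLam_ins_zero_fin_left f hf hn ha', TensorProduct.tmul_zero]
    · intro h; exact absurd (Finset.mem_univ a) h
  · intro q _ hq
    have : PhiComp f hf hn q y = 0 := by
      rw [hcomp]
      apply Finset.sum_eq_zero; intro a' _
      apply Finset.sum_eq_zero; intro b' _
      by_cases h1 : q.1 = p.1
      · have h2 : q.2 ≠ p.2 := fun h2 => hq (Prod.ext h1 h2)
        rw [projLam_ins_zero_right f hf hn h2, TensorProduct.tmul_zero]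
      · rw [projLam_ins_zero_left f hf hn h1, TensorProduct.tmul_zero]
    rw [this, map_zero]
  · intro h; exact absurd (Finset.mem_univ p) h

lemma ins_mul_ins (i j k : Option I) (a : Fin (nopt n i)) (b c : Fin (nopt n j))
    (d : Fin (nopt n k)) (x y : A) (hy : Lmul (EE f hf hn j) y = y) :
    Lmul (vv f hf i a (zz hn i)) (Rmul (vv f hf j (zz hn j) b) x) *
      Lmul (vv f hf j c (zz hn j)) (Rmul (vv f hf k (zz hn k) d) y)
    = if b = c then Lmul (vv f hf i a (zz hn i)) (Rmul (vv f hf k (zz hn k) d) (x * y))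
      else 0 := by
  rw [Lmul_mul, Rmul_mul_Lmul, Lmul_Lmul]
  by_cases hbc : b = c
  · subst hbc
    rw [if_pos rfl, vv_mul_same]
    rw [show vv f hf j (zz hn j) (zz hn j) = EE f hf hn j from rfl, Lmul_Rmul, hy, Rmul_mul]
  · rw [if_neg hbc, vv_mul_ne_fin f hf j hbc, Lmul_zero, mul_zero, map_zero]

lemma ins_mul_ins_ne (i j s t : Option I) (h : j ≠ s) (a : Fin (nopt n i))
    (b : Fin (nopt n j)) (c : Fin (nopt n s)) (d : Fin (nopt n t)) (x y : A) :
    Lmul (vv f hf i a (zz hn i)) (Rmul (vv f hf j (zz hn j) b) x) *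
      Lmul (vv f hf s c (zz hn s)) (Rmul (vv f hf t (zz hn t) d) y) = 0 := by
  rw [Lmul_mul, Rmul_mul_Lmul, Lmul_Lmul, vv_mul_ne_idx f hf h, Lmul_zero, mul_zero, map_zero]

lemma muL_coe (i j k : Option I) (x : LamS f hf hn i j) (y : LamS f hf hn j k) :
    (muL f hf hn i j k x y : A) = (x : A) * (y : A) := rfl

lemma Psi_mul (i j k : Option I) (X : Matrix (Fin (nopt n i)) (Fin (nopt n j)) F)
    (x : LamS f hf hn i j) (Y : Matrix (Fin (nopt n j)) (Fin (nopt n k)) F)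
    (y : LamS f hf hn j k) :
    Psi f hf hn (DirectSum.lof F (Option I × Option I)
        (fun q => Matrix (Fin (nopt n q.1)) (Fin (nopt n q.2)) F ⊗[F] (LamS f hf hn q.1 q.2))
        (i, j) (X ⊗ₜ x)) *
      Psi f hf hn (DirectSum.lof F (Option I × Option I)
        (fun q => Matrix (Fin (nopt n q.1)) (Fin (nopt n q.2)) F ⊗[F] (LamS f hf hn q.1 q.2))
        (j, k) (Y ⊗ₜ y))
    = Psi f hf hn (DirectSum.lof F (Option I × Option I)
        (fun q => Matrix (Fin (nopt n q.1)) (Fin (nopt n q.2)) F ⊗[F] (LamS f hf hn q.1 q.2))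
        (i, k) ((X * Y) ⊗ₜ muL f hf hn i j k x y)) := by
  rw [Psi_lof_tmul, Psi_lof_tmul, Psi_lof_tmul]
  have hterm : ∀ (a : Fin (nopt n i)) (b : Fin (nopt n j)) (c : Fin (nopt n j))
      (d : Fin (nopt n k)),
      (X a b • Lmul (vv f hf i a (zz hn i)) (Rmul (vv f hf j (zz hn j) b) x.1)) *
      (Y c d • Lmul (vv f hf j c (zz hn j)) (Rmul (vv f hf k (zz hn k) d) y.1))
      = if b = c then (X a b * Y c d) •
          Lmul (vv f hf i a (zz hn i)) (Rmul (vv f hf k (zz hn k) d) (x.1 * y.1)) else 0 := by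
    intro a b c d
    rw [smul_mul_assoc, mul_smul_comm, smul_smul,
      ins_mul_ins f hf hn i j k a b c d x.1 y.1 y.2.1]
    by_cases h : b = c
    · rw [if_pos h, if_pos h]
    · rw [if_neg h, if_neg h, smul_zero]
  simp only [muL_coe]
  calc (∑ a, ∑ b, X a b • Lmul (vv f hf i a (zz hn i)) (Rmul (vv f hf j (zz hn j) b) x.1)) *
        (∑ c, ∑ d, Y c d • Lmul (vv f hf j c (zz hn j)) (Rmul (vv f hf k (zz hn k) d) y.1))
      = ∑ a, ∑ b, ∑ c, ∑ d, (if b = c then (X a b * Y c d) •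
          Lmul (vv f hf i a (zz hn i)) (Rmul (vv f hf k (zz hn k) d) (x.1 * y.1)) else 0) := by
        rw [Finset.sum_mul]
        refine Finset.sum_congr rfl fun a _ => ?_
        rw [Finset.sum_mul]
        refine Finset.sum_congr rfl fun b _ => ?_
        rw [Finset.mul_sum]
        refine Finset.sum_congr rfl fun c _ => ?_
        rw [Finset.mul_sum]
        exact Finset.sum_congr rfl fun d _ => hterm a b c d
    _ = ∑ a, ∑ d, (X * Y) a d •
          Lmul (vv f hf i a (zz hn i)) (Rmul (vv f hf k (zz hn k) d) (x.1 * y.1)) := by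
        refine Finset.sum_congr rfl fun a _ => ?_
        calc ∑ b, ∑ c, ∑ d : Fin (nopt n k), (if b = c then (X a b * Y c d) •
              Lmul (vv f hf i a (zz hn i)) (Rmul (vv f hf k (zz hn k) d) (x.1 * y.1)) else 0)
            = ∑ b, ∑ d : Fin (nopt n k), (X a b * Y b d) •
              Lmul (vv f hf i a (zz hn i)) (Rmul (vv f hf k (zz hn k) d) (x.1 * y.1)) := by
              refine Finset.sum_congr rfl fun b _ => ?_
              rw [Finset.sum_eq_single b
                (fun c _ hcb => Finset.sum_eq_zero fun d _ => if_neg (fun h => hcb h.symm))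
                (fun h => absurd (Finset.mem_univ b) h)]
              simp
          _ = ∑ d : Fin (nopt n k), ∑ b, (X a b * Y b d) •
              Lmul (vv f hf i a (zz hn i)) (Rmul (vv f hf k (zz hn k) d) (x.1 * y.1)) :=
              Finset.sum_comm
          _ = ∑ d : Fin (nopt n k), (X * Y) a d •
              Lmul (vv f hf i a (zz hn i)) (Rmul (vv f hf k (zz hn k) d) (x.1 * y.1)) := by
              refine Finset.sum_congr rfl fun d _ => ?_
              rw [← Finset.sum_smul, ← Matrix.mul_apply]

lemma Psi_mul_zero (i j s t : Option I) (h : j ≠ s)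
    (X : Matrix (Fin (nopt n i)) (Fin (nopt n j)) F) (x : LamS f hf hn i j)
    (Y : Matrix (Fin (nopt n s)) (Fin (nopt n t)) F) (y : LamS f hf hn s t) :
    Psi f hf hn (DirectSum.lof F (Option I × Option I)
        (fun q => Matrix (Fin (nopt n q.1)) (Fin (nopt n q.2)) F ⊗[F] (LamS f hf hn q.1 q.2))
        (i, j) (X ⊗ₜ x)) *
      Psi f hf hn (DirectSum.lof F (Option I × Option I)
        (fun q => Matrix (Fin (nopt n q.1)) (Fin (nopt n q.2)) F ⊗[F] (LamS f hf hn q.1 q.2))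
        (s, t) (Y ⊗ₜ y)) = 0 := by
  rw [Psi_lof_tmul, Psi_lof_tmul]
  simp only [Finset.sum_mul, Finset.mul_sum]
  have hterm : ∀ a b c d,
      (X a b • Lmul (vv f hf i a (zz hn i)) (Rmul (vv f hf j (zz hn j) b) x.1)) *
      (Y c d • Lmul (vv f hf s c (zz hn s)) (Rmul (vv f hf t (zz hn t) d) y.1)) = 0 := by
    intro a b c d
    rw [smul_mul_assoc, mul_smul_comm, ins_mul_ins_ne f hf hn i j s t h, smul_zero, smul_zero]
  simp only [hterm, Finset.sum_const_zero]

/-- the identity element of `Λ(i,i)`, `i ∈ I`. -/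
noncomputable def oneL (i : I) : LamS f hf hn (some i) (some i) :=
  ⟨uu f hf i (zz hn (some i)) (zz hn (some i)), by
    refine ⟨?_, ?_⟩
    · rw [EE_some, Lmul_inr, uu_mul_same]
    · rw [EE_some, Rmul_inr, uu_mul_same]⟩

lemma oneL_coe (i : I) :
    (oneL f hf hn i : A) = uu f hf i (zz hn (some i)) (zz hn (some i)) := rfl

lemma Phi_Psi_comp : (Phi f hf hn).comp (Psi f hf hn) = LinearMap.id := by
  refine DirectSum.linearMap_ext F fun p => TensorProduct.ext' fun X x => ?_
  simp only [LinearMap.comp_apply, LinearMap.id_apply]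
  induction X using Matrix.induction_on' with
  | h_zero => simp
  | h_add P Q hP hQ => simp only [TensorProduct.add_tmul, map_add, hP, hQ]
  | h_std_basis a b c =>
      have hc : Matrix.single a b c = c • Matrix.single a b (1:F) := by
        rw [Matrix.smul_single, smul_eq_mul, mul_one]
      simp only [hc, ← TensorProduct.smul_tmul', map_smul]
      rw [Psi_lof_tmul_std, Phi_ins]

lemma Psi_single (i : I) (M : Matrix (Fin (n i)) (Fin (n i)) F) :
    Psi f hf hn (DirectSum.lof F (Option I × Option I)
      (fun q => Matrix (Fin (nopt n q.1)) (Fin (nopt n q.2)) F ⊗[F] (LamS f hf hn q.1 q.2))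
      (some i, some i) (M ⊗ₜ oneL f hf hn i))
    = ((finv f hf (Pi.single i M) : S) : A) := by
  rw [Psi_lof_tmul]
  have hterm : ∀ a b : Fin (n i), Lmul (vv f hf (some i) a (zz hn (some i)))
      (Rmul (vv f hf (some i) (zz hn (some i)) b) ((oneL f hf hn i : A))) = uu f hf i a b := by
    intro a b
    rw [oneL_coe, vv_some, vv_some, Rmul_inr, Lmul_inr, uu_mul_same, uu_mul_same]
  simp only [hterm]
  have h1 : (Pi.single i M : ∀ j, Matrix (Fin (n j)) (Fin (n j)) F)
      = ∑ a, ∑ b, Pi.single i (Matrix.single a b (M a b)) := by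
    calc (Pi.single i M : ∀ j, Matrix (Fin (n j)) (Fin (n j)) F)
        = Pi.single i (∑ a, ∑ b, Matrix.single a b (M a b)) := by
          rw [← Matrix.matrix_eq_sum_single M]
      _ = ∑ a, Pi.single i (∑ b, Matrix.single a b (M a b)) :=
          map_sum (LinearMap.single F (fun j => Matrix (Fin (n j)) (Fin (n j)) F) i) _ _
      _ = ∑ a, ∑ b, Pi.single i (Matrix.single a b (M a b)) :=
          Finset.sum_congr rfl fun a _ =>
            map_sum (LinearMap.single F (fun j => Matrix (Fin (n j)) (Fin (n j)) F) i) _ _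
  have h2 : finv f hf (Pi.single i M)
      = ∑ a, ∑ b, M a b • finv f hf (Pi.single i (Matrix.single a b (1:F))) := by
    rw [h1, finv_sum]
    refine Finset.sum_congr rfl fun a _ => ?_
    rw [finv_sum]
    refine Finset.sum_congr rfl fun b _ => ?_
    rw [show Matrix.single a b (M a b) = M a b • Matrix.single a b (1:F) from by
        rw [Matrix.smul_single, smul_eq_mul, mul_one],
      Pi.single_smul, finv_smul]
  rw [h2]
  push_cast
  rfl

end AMD

theorem algebra_matrix_decomposition
    (F : Type u) [Field F] [IsAlgClosed F]
    (A : Type v) [NonUnitalRing A] [Module F A] [SMulCommClass F A A] [IsScalarTower F A A]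
    (S : NonUnitalSubalgebra F A) (hS_ne : S ≠ ⊥)
    (I : Type) [Fintype I] [DecidableEq I] (n : I → ℕ) (hn : ∀ i, 0 < n i)
    (f : S →ₙₐ[F] ∀ i, Matrix (Fin (n i)) (Fin (n i)) F) (hf : Function.Bijective f) :
    Nonempty (MatrixAlgDecomp F A S I n f) := by
  classical
  refine ⟨{
    Lam := fun i j => ↥(AMD.LamS f hf hn i j)
    acg := fun _ _ => inferInstance
    mod := fun _ _ => inferInstance
    mu := AMD.muL f hf hn
    assoc := fun i j k l a b c => Subtype.ext (mul_assoc (a : A) (b : A) (c : A))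
    one := AMD.oneL f hf hn
    one_mul := ?_
    mul_one := ?_
    θ := LinearEquiv.ofLinear (AMD.Phi f hf hn) (AMD.Psi f hf hn)
      (AMD.Phi_Psi_comp f hf hn) (LinearMap.ext (AMD.Psi_Phi f hf hn))
    map_mul := ?_
    map_mul_zero := ?_
    comp_image := ?_ }⟩
  · intro i a
    apply Subtype.ext
    rw [AMD.muL_coe, AMD.oneL_coe, ← AMD.Lmul_inr (F := F)]
    exact a.2.1
  · intro i a
    apply Subtype.ext
    rw [AMD.muL_coe, AMD.oneL_coe, ← AMD.Rmul_inr (F := F)]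
    exact a.2.2
  · intro i j k X a Y b
    simp only [LinearEquiv.ofLinear_symm_apply]
    exact AMD.Psi_mul f hf hn i j k X a Y b
  · intro i j s t h X a Y b
    simp only [LinearEquiv.ofLinear_symm_apply]
    exact AMD.Psi_mul_zero f hf hn i j s t h X a Y b
  · intro i
    ext ξ
    simp only [Set.mem_image, Set.mem_setOf_eq, LinearEquiv.ofLinear_apply]
    constructor
    · rintro ⟨x, ⟨hx, hz⟩, rfl⟩
      refine ⟨f ⟨x, hx⟩ i, ?_⟩
      have hfx : Pi.single i (f ⟨x, hx⟩ i) = f ⟨x, hx⟩ := by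
        funext j
        rcases eq_or_ne j i with rfl | hj
        · simp
        · rw [Pi.single_eq_of_ne hj, hz j hj]
      have hx' : x = AMD.Psi f hf hn (DirectSum.lof F (Option I × Option I)
          (fun q => Matrix (Fin (nopt n q.1)) (Fin (nopt n q.2)) F ⊗[F]
            ↥(AMD.LamS f hf hn q.1 q.2))
          (some i, some i) ((f ⟨x, hx⟩ i) ⊗ₜ AMD.oneL f hf hn i)) := by
        rw [AMD.Psi_single, hfx, AMD.finv_f]
      refine (congrArg (AMD.Phi f hf hn) hx').trans ?_
      exact LinearMap.congr_fun (AMD.Phi_Psi_comp f hf hn) _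
    · rintro ⟨X, rfl⟩
      refine ⟨((AMD.finv f hf (Pi.single i X) : S) : A),
        ⟨(AMD.finv f hf (Pi.single i X)).2, ?_⟩, ?_⟩
      · intro j hj
        show f (AMD.finv f hf (Pi.single i X)) j = 0
        rw [AMD.f_finv, Pi.single_eq_of_ne hj]
      · have h1 : ((AMD.finv f hf (Pi.single i X) : S) : A)
            = AMD.Psi f hf hn (DirectSum.lof F (Option I × Option I)
              (fun q => Matrix (Fin (nopt n q.1)) (Fin (nopt n q.2)) F ⊗[F]
                ↥(AMD.LamS f hf hn q.1 q.2))
              (some i, some i) (X ⊗ₜ AMD.oneL f hf hn i)) :=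
          (AMD.Psi_single f hf hn i X).symm
        rw [h1]
        exact LinearMap.congr_fun (AMD.Phi_Psi_comp f hf hn) _
end

section
/- Let A be an associative F-algebra containing a non-zero finite-dimensional semisimple subalgebra S, and let B be a subalgebra of A with SB + BS ⊆ B. Let B_S be the subalgebra of B generated by all non-trivial simple S-sub-bimodules of B. Then B_S is a two-sided ideal of B. -/
set_option linter.unusedSectionVars false

universe u v

variable (F : Type u) {A : Type v} [Field F] [NonUnitalRing A] [Module F A]
  [SMulCommClass F A A] [IsScalarTower F A A]

/-- `W` is an `S`-sub-bimodule (of `A`): an `F`-subspace with `SW + WS ⊆ W`. -/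
def IsSubBimod (S : NonUnitalSubalgebra F A) (W : Submodule F A) : Prop :=
  ∀ s ∈ S, ∀ w ∈ W, s * w ∈ W ∧ w * s ∈ W

/-- The non-trivial simple `S`-sub-bimodules contained in a subset `B` of `A`. -/
def SimpleBimods (S : NonUnitalSubalgebra F A) (B : Set A) : Set (Submodule F A) :=
  {W | (W : Set A) ⊆ B ∧ W ≠ ⊥ ∧ IsSubBimod F S W ∧
    -- non-trivial: `SW + WS ≠ 0`
    (∃ s ∈ S, ∃ w ∈ W, s * w ≠ 0 ∨ w * s ≠ 0) ∧
    -- simple: the only `S`-sub-bimodules of `W` are `0` and `W`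
    (∀ W' : Submodule F A, W' ≤ W → IsSubBimod F S W' → W' = ⊥ ∨ W' = W)}

/-- The subalgebra generated by the non-trivial simple `S`-sub-bimodules of `B`
(denoted `B_S` in the paper). -/
def modGenSubalg (S : NonUnitalSubalgebra F A) (B : Set A) : NonUnitalSubalgebra F A :=
  NonUnitalAlgebra.adjoin F (⋃ W ∈ SimpleBimods F S B, (W : Set A))

/-! ### Auxiliary material -/

/-- Finite direct sums of full matrix algebras. -/
abbrev MatBlocks (F : Type u) [Field F] {m : ℕ} (n : Fin m → ℕ) : Type u :=
  ∀ j, Matrix (Fin (n j)) (Fin (n j)) F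

section MatAux

variable {F : Type u} {m : ℕ} {n : Fin m → ℕ} [Field F]

lemma matblocks_single_mul (i : Fin m) (M N : Matrix (Fin (n i)) (Fin (n i)) F) :
    (Pi.single i (M * N) : MatBlocks F n) = Pi.single i M * Pi.single i N := by
  funext j
  by_cases h : j = i
  · subst h; simp
  · simp [Pi.single_eq_of_ne h]

lemma matblocks_single_smul (i : Fin m) (c : F) (M : Matrix (Fin (n i)) (Fin (n i)) F) :
    (Pi.single i (c • M) : MatBlocks F n) = c • (Pi.single i M : MatBlocks F n) := by
  funext j
  by_cases h : j = i
  · subst h; simp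
  · simp [Pi.single_eq_of_ne h]

lemma matblocks_single_sum {κ : Type} [Fintype κ] (i : Fin m)
    (M : κ → Matrix (Fin (n i)) (Fin (n i)) F) :
    (Pi.single i (∑ c, M c) : MatBlocks F n) = ∑ c, Pi.single i (M c) := by
  funext j
  by_cases h : j = i
  · subst h; simp
  · simp [Pi.single_eq_of_ne h, Finset.sum_apply]

lemma mat_mul_std {N : ℕ} (M : Matrix (Fin N) (Fin N) F) (a k : Fin N) :
    M * Matrix.single a k 1 = ∑ c, M c a • Matrix.single c k 1 := by
  ext r t
  rw [Matrix.sum_apply]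
  by_cases h : k = t
  · subst h
    simp [Matrix.mul_apply, Matrix.single, Finset.sum_ite_eq, Finset.sum_ite_eq']
  · simp [Matrix.mul_apply, Matrix.single, h]

lemma std_mul_mat {N : ℕ} (M : Matrix (Fin N) (Fin N) F) (k l : Fin N) :
    Matrix.single k l 1 * M = ∑ c, M l c • Matrix.single k c 1 := by
  ext r t
  rw [Matrix.sum_apply]
  by_cases h : k = r
  · subst h
    simp [Matrix.mul_apply, Matrix.single, Finset.sum_ite_eq, Finset.sum_ite_eq']
  · simp [Matrix.mul_apply, Matrix.single, h]

lemma sum_std_diag {N : ℕ} : ∑ a : Fin N, Matrix.single a a (1 : F) = 1 := by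
  ext r t
  rw [Matrix.sum_apply]
  by_cases h : r = t
  · subst h; simp [Matrix.single, Matrix.one_apply]
  · simp only [Matrix.single, Matrix.of_apply, Matrix.one_apply, if_neg h]
    exact Finset.sum_eq_zero fun c _ => by
      by_cases hc : c = r
      · subst hc; simp [h]
      · simp [hc]

end MatAux

section Aux

variable {F : Type u} {A : Type v} [Field F] [NonUnitalRing A] [Module F A]
  [SMulCommClass F A A] [IsScalarTower F A A] {S : NonUnitalSubalgebra F A}
  {m : ℕ} {n : Fin m → ℕ}

/-- The matrix units of `S`, pulled back through the isomorphism `f`. -/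
noncomputable def matE (f : ↥S →ₙₐ[F] MatBlocks F n) (hf : Function.Bijective f)
    (i : Fin m) (a b : Fin (n i)) : ↥S :=
  (Equiv.ofBijective f hf).symm (Pi.single i (Matrix.single a b 1))

/-- The identity element of `S`, pulled back through the isomorphism `f`. -/
noncomputable def unitE (f : ↥S →ₙₐ[F] MatBlocks F n) (hf : Function.Bijective f) : ↥S :=
  (Equiv.ofBijective f hf).symm 1

variable (f : ↥S →ₙₐ[F] MatBlocks F n) (hf : Function.Bijective f)

lemma f_matE (i : Fin m) (a b : Fin (n i)) :
    f (matE f hf i a b) = Pi.single i (Matrix.single a b 1) :=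
  (Equiv.ofBijective f hf).apply_symm_apply _

lemma f_unitE : f (unitE f hf) = 1 :=
  (Equiv.ofBijective f hf).apply_symm_apply _

lemma matE_mul_matE (i : Fin m) (a b c d : Fin (n i)) :
    matE f hf i a b * matE f hf i c d = if b = c then matE f hf i a d else 0 := by
  apply hf.injective
  rw [map_mul, f_matE, f_matE, ← matblocks_single_mul]
  by_cases h : b = c
  · subst h
    rw [Matrix.single_mul_single_same, one_mul, if_pos rfl, f_matE]
  · rw [if_neg h, map_zero, Matrix.single_mul_single_of_ne (c := (1 : F)) a b _ h 1]
    simp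

lemma mul_matE_eq (s : ↥S) (i : Fin m) (a k : Fin (n i)) :
    s * matE f hf i a k = ∑ c, (f s i c a) • matE f hf i c k := by
  apply hf.injective
  rw [map_mul, f_matE, map_sum]
  simp_rw [map_smul, f_matE]
  rw [show (f s * Pi.single i (Matrix.single a k 1) : MatBlocks F n)
      = Pi.single i (f s i * Matrix.single a k 1) from
    (Pi.single_mul_right (f := f s) _).symm]
  rw [mat_mul_std, matblocks_single_sum]
  simp_rw [matblocks_single_smul]

lemma matE_mul_eq (s : ↥S) (i : Fin m) (k l : Fin (n i)) :
    matE f hf i k l * s = ∑ c, (f s i l c) • matE f hf i k c := by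
  apply hf.injective
  rw [map_mul, f_matE, map_sum]
  simp_rw [map_smul, f_matE]
  rw [show (Pi.single i (Matrix.single k l 1) * f s : MatBlocks F n)
      = Pi.single i (Matrix.single k l 1 * f s i) from
    (Pi.single_mul_left (f := f s) _).symm]
  rw [std_mul_mat, matblocks_single_sum]
  simp_rw [matblocks_single_smul]

lemma unitE_mul (s : ↥S) : unitE f hf * s = s := by
  apply hf.injective
  rw [map_mul, f_unitE, one_mul]

lemma mul_unitE (s : ↥S) : s * unitE f hf = s := by
  apply hf.injective
  rw [map_mul, f_unitE, mul_one]

lemma unitE_eq_sum : unitE f hf = ∑ i, ∑ a, matE f hf i a a := by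
  apply hf.injective
  rw [f_unitE, map_sum]
  have h1 : ∀ i : Fin m, f (∑ a, matE f hf i a a)
      = Pi.single i (1 : Matrix (Fin (n i)) (Fin (n i)) F) := by
    intro i
    rw [map_sum]
    simp_rw [f_matE]
    rw [← matblocks_single_sum, sum_std_diag]
  simp_rw [h1]
  exact (Finset.univ_sum_single (1 : MatBlocks F n)).symm

/-- At the level of `A`: `e` is a left and right identity for elements of `S`. -/
lemma unitE_mul_coe {s : A} (hs : s ∈ S) : (unitE f hf : A) * s = s :=
  congrArg (Subtype.val) (unitE_mul f hf ⟨s, hs⟩)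

lemma mul_unitE_coe {s : A} (hs : s ∈ S) : s * (unitE f hf : A) = s :=
  congrArg (Subtype.val) (mul_unitE f hf ⟨s, hs⟩)

end Aux

section SpanLemma

variable {F : Type u} {A : Type v} [Field F] [NonUnitalRing A] [Module F A]
  [SMulCommClass F A A] [IsScalarTower F A A]

/-- Abstract construction of a non-trivial simple sub-bimodule from a finite spanning
family with "matrix-unit-like" transition operators. -/
lemma span_mem_modGen {S B : NonUnitalSubalgebra F A}
    {κ : Type} [Fintype κ] [DecidableEq κ] (v : κ → A)
    (hvB : ∀ a, v a ∈ B)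
    (hleft : ∀ s ∈ S, ∀ a, ∃ c : κ → F, s * v a = ∑ b, c b • v b)
    (hright : ∀ s ∈ S, ∀ a, ∃ c : κ → F, v a * s = ∑ b, c b • v b)
    (htrans : ∀ a b : κ, ∃ T : A →ₗ[F] A,
      (∀ W' : Submodule F A, IsSubBimod F S W' → ∀ w ∈ W', T w ∈ W') ∧
      (∀ a', T (v a') = if a' = a then v b else 0))
    (hnt : ∃ s ∈ S, ∃ a : κ, s * v a ≠ 0 ∨ v a * s ≠ 0)
    (a0 : κ) (h0 : v a0 ≠ 0) :
    ∀ a, v a ∈ modGenSubalg F S (B : Set A) := by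
  classical
  set V : Submodule F A := Submodule.span F (Set.range v) with hV
  have hmemV : ∀ a, v a ∈ V := fun a => Submodule.subset_span ⟨a, rfl⟩
  have hVsimple : V ∈ SimpleBimods F S (B : Set A) := by
    refine ⟨?_, ?_, ?_, ?_, ?_⟩
    · -- contained in B
      intro x hx
      have hle : V ≤ B.toSubmodule := Submodule.span_le.mpr (by rintro _ ⟨a, rfl⟩; exact hvB a)
      exact hle hx
    · -- nonzero
      intro hbot
      exact h0 (by simpa [hbot] using hmemV a0)
    · -- sub-bimodule
      intro s hs w hw
      constructor
      · induction hw using Submodule.span_induction with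
        | mem x hx =>
          obtain ⟨a, rfl⟩ := hx
          obtain ⟨c, hc⟩ := hleft s hs a
          rw [hc]
          exact Submodule.sum_mem _ fun b _ => Submodule.smul_mem _ _ (hmemV b)
        | zero => rw [mul_zero]; exact zero_mem _
        | add x y hx hy ihx ihy => rw [mul_add]; exact add_mem ihx ihy
        | smul c x hx ihx => rw [mul_smul_comm]; exact Submodule.smul_mem _ _ ihx
      · induction hw using Submodule.span_induction with
        | mem x hx =>
          obtain ⟨a, rfl⟩ := hx
          obtain ⟨c, hc⟩ := hright s hs a
          rw [hc]
          exact Submodule.sum_mem _ fun b _ => Submodule.smul_mem _ _ (hmemV b)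
        | zero => rw [zero_mul]; exact zero_mem _
        | add x y hx hy ihx ihy => rw [add_mul]; exact add_mem ihx ihy
        | smul c x hx ihx => rw [smul_mul_assoc]; exact Submodule.smul_mem _ _ ihx
    · -- non-trivial
      obtain ⟨s, hs, a, h⟩ := hnt
      exact ⟨s, hs, v a, hmemV a, h⟩
    · -- simple
      intro W' hle hbm
      by_cases hW' : W' = ⊥
      · exact Or.inl hW'
      right
      obtain ⟨u, huW', hu0⟩ := (Submodule.ne_bot_iff W').mp hW'
      obtain ⟨c, hc⟩ := (Submodule.mem_span_range_iff_exists_fun F).mp (hle huW')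
      have hex : ∃ a, c a ≠ 0 := by
        by_contra hcon
        push_neg at hcon
        exact hu0 (by rw [← hc]; simp [hcon])
      obtain ⟨a, ha⟩ := hex
      refine le_antisymm hle ?_
      rw [hV]
      refine Submodule.span_le.mpr ?_
      rintro _ ⟨b, rfl⟩
      obtain ⟨T, hT1, hT2⟩ := htrans a b
      have hTu : T u = c a • v b := by
        rw [← hc, map_sum]
        simp_rw [map_smul, hT2, smul_ite, smul_zero]
        simp
      have hvb : v b = (c a)⁻¹ • T u := by
        rw [hTu, smul_smul, inv_mul_cancel₀ ha, one_smul]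
      rw [hvb]
      exact Submodule.smul_mem _ _ (hT1 W' hbm u huW')
  intro a
  exact NonUnitalAlgebra.subset_adjoin F (Set.mem_biUnion hVsimple (hmemV a))

end SpanLemma

section KeyLemmas

variable {F : Type u} {A : Type v} [Field F] [NonUnitalRing A] [Module F A]
  [SMulCommClass F A A] [IsScalarTower F A A] {S : NonUnitalSubalgebra F A}
  {m : ℕ} {n : Fin m → ℕ}
  (f : ↥S →ₙₐ[F] MatBlocks F n) (hf : Function.Bijective f)
  {B : NonUnitalSubalgebra F A}
  (hSB : ∀ s ∈ S, ∀ b ∈ B, s * b ∈ B ∧ b * s ∈ B)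

include hSB

lemma key_left {x : A} (hxB : x ∈ B) (hxS : ∀ s ∈ S, x * s = 0)
    (i : Fin m) (k : Fin (n i)) :
    (matE f hf i k k : A) * x ∈ modGenSubalg F S (B : Set A) := by
  classical
  by_cases h0 : (matE f hf i k k : A) * x = 0
  · rw [h0]; exact zero_mem _
  refine span_mem_modGen (v := fun a : Fin (n i) => (matE f hf i a k : A) * x)
    ?_ ?_ ?_ ?_ ?_ k h0 k
  · intro a
    exact (hSB _ (SetLike.coe_mem _) x hxB).1
  · -- left action
    intro s hs a
    refine ⟨fun b => f ⟨s, hs⟩ i b a, ?_⟩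
    rw [← mul_assoc]
    have hcoe : s * (matE f hf i a k : A) = ((⟨s, hs⟩ * matE f hf i a k : ↥S) : A) := rfl
    rw [hcoe, mul_matE_eq f hf ⟨s, hs⟩ i a k]
    simp only [AddSubmonoidClass.coe_finset_sum, SetLike.val_smul]
    rw [Finset.sum_mul]
    simp_rw [smul_mul_assoc]
  · -- right action
    intro s hs a
    refine ⟨0, ?_⟩
    rw [mul_assoc, hxS s hs, mul_zero]
    simp
  · -- transitions
    intro a b
    refine ⟨LinearMap.mulLeft F (matE f hf i b a : A), ?_, ?_⟩
    · intro W' hW' w hw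
      exact (hW' _ (SetLike.coe_mem _) w hw).1
    · intro a'
      show (matE f hf i b a : A) * ((matE f hf i a' k : A) * x) = _
      rw [← mul_assoc]
      have hcoe : (matE f hf i b a : A) * (matE f hf i a' k : A)
          = ((matE f hf i b a * matE f hf i a' k : ↥S) : A) := rfl
      rw [hcoe, matE_mul_matE]
      by_cases h : a' = a
      · subst h
        rw [if_pos rfl, if_pos rfl]
      · rw [if_neg (fun hh => h hh.symm), if_neg h, ZeroMemClass.coe_zero, zero_mul]
  · -- non-trivial
    refine ⟨(matE f hf i k k : A), SetLike.coe_mem _, k, Or.inl ?_⟩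
    rw [← mul_assoc]
    have hcoe : (matE f hf i k k : A) * (matE f hf i k k : A)
        = ((matE f hf i k k * matE f hf i k k : ↥S) : A) := rfl
    rw [hcoe, matE_mul_matE, if_pos rfl]
    exact h0

lemma key_right {x : A} (hxB : x ∈ B) (hxS : ∀ s ∈ S, s * x = 0)
    (j : Fin m) (l : Fin (n j)) :
    x * (matE f hf j l l : A) ∈ modGenSubalg F S (B : Set A) := by
  classical
  by_cases h0 : x * (matE f hf j l l : A) = 0
  · rw [h0]; exact zero_mem _
  refine span_mem_modGen (v := fun b : Fin (n j) => x * (matE f hf j l b : A))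
    ?_ ?_ ?_ ?_ ?_ l h0 l
  · intro b
    exact (hSB _ (SetLike.coe_mem _) x hxB).2
  · -- left action
    intro s hs b
    refine ⟨0, ?_⟩
    rw [← mul_assoc, hxS s hs, zero_mul]
    simp
  · -- right action
    intro s hs b
    refine ⟨fun c => f ⟨s, hs⟩ j b c, ?_⟩
    rw [mul_assoc]
    have hcoe : (matE f hf j l b : A) * s = ((matE f hf j l b * ⟨s, hs⟩ : ↥S) : A) := rfl
    rw [hcoe, matE_mul_eq f hf ⟨s, hs⟩ j l b]
    simp only [AddSubmonoidClass.coe_finset_sum, SetLike.val_smul]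
    rw [Finset.mul_sum]
    simp_rw [mul_smul_comm]
  · -- transitions
    intro b b'
    refine ⟨LinearMap.mulRight F (matE f hf j b b' : A), ?_, ?_⟩
    · intro W' hW' w hw
      exact (hW' _ (SetLike.coe_mem _) w hw).2
    · intro b''
      show x * (matE f hf j l b'' : A) * (matE f hf j b b' : A) = _
      rw [mul_assoc]
      have hcoe : (matE f hf j l b'' : A) * (matE f hf j b b' : A)
          = ((matE f hf j l b'' * matE f hf j b b' : ↥S) : A) := rfl
      rw [hcoe, matE_mul_matE]
      by_cases h : b'' = b
      · subst h
        rw [if_pos rfl, if_pos rfl]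
      · rw [if_neg h, if_neg h, ZeroMemClass.coe_zero, mul_zero]
  · -- non-trivial
    refine ⟨(matE f hf j l l : A), SetLike.coe_mem _, l, Or.inr ?_⟩
    rw [mul_assoc]
    have hcoe : (matE f hf j l l : A) * (matE f hf j l l : A)
        = ((matE f hf j l l * matE f hf j l l : ↥S) : A) := rfl
    rw [hcoe, matE_mul_matE, if_pos rfl]
    exact h0

lemma key_two {x : A} (hxB : x ∈ B)
    (i : Fin m) (k : Fin (n i)) (j : Fin m) (l : Fin (n j)) :
    (matE f hf i k k : A) * x * (matE f hf j l l : A) ∈ modGenSubalg F S (B : Set A) := by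
  classical
  by_cases h0 : (matE f hf i k k : A) * x * (matE f hf j l l : A) = 0
  · rw [h0]; exact zero_mem _
  refine span_mem_modGen
    (v := fun p : Fin (n i) × Fin (n j) =>
      (matE f hf i p.1 k : A) * x * (matE f hf j l p.2 : A))
    ?_ ?_ ?_ ?_ ?_ (k, l) h0 (k, l)
  · intro p
    exact (hSB _ (SetLike.coe_mem _) _ ((hSB _ (SetLike.coe_mem _) x hxB).1)).2
  · -- left action
    intro s hs p
    refine ⟨fun q => if q.2 = p.2 then f ⟨s, hs⟩ i q.1 p.1 else 0, ?_⟩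
    rw [← mul_assoc, ← mul_assoc]
    have hcoe : s * (matE f hf i p.1 k : A) = ((⟨s, hs⟩ * matE f hf i p.1 k : ↥S) : A) := rfl
    rw [hcoe, mul_matE_eq f hf ⟨s, hs⟩ i p.1 k]
    simp only [AddSubmonoidClass.coe_finset_sum, SetLike.val_smul]
    rw [Finset.sum_mul, Finset.sum_mul, Fintype.sum_prod_type]
    refine Finset.sum_congr rfl fun c _ => ?_
    rw [Finset.sum_eq_single p.2]
    · rw [if_pos rfl, smul_mul_assoc, smul_mul_assoc]
    · intro d _ hd
      rw [if_neg hd, zero_smul]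
    · intro hmem
      exact absurd (Finset.mem_univ _) hmem
  · -- right action
    intro s hs p
    refine ⟨fun q => if q.1 = p.1 then f ⟨s, hs⟩ j p.2 q.2 else 0, ?_⟩
    rw [mul_assoc, mul_assoc]
    have hcoe : (matE f hf j l p.2 : A) * s = ((matE f hf j l p.2 * ⟨s, hs⟩ : ↥S) : A) := rfl
    rw [hcoe, matE_mul_eq f hf ⟨s, hs⟩ j l p.2]
    simp only [AddSubmonoidClass.coe_finset_sum, SetLike.val_smul]
    rw [Finset.mul_sum, Finset.mul_sum, Fintype.sum_prod_type]
    rw [Finset.sum_eq_single p.1]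
    · refine Finset.sum_congr rfl fun d _ => ?_
      rw [if_pos rfl, mul_smul_comm, mul_smul_comm, mul_assoc]
    · intro c _ hc
      refine Finset.sum_eq_zero fun d _ => ?_
      rw [if_neg hc, zero_smul]
    · intro hmem
      exact absurd (Finset.mem_univ _) hmem
  · -- transitions
    intro p q
    refine ⟨(LinearMap.mulLeft F (matE f hf i q.1 p.1 : A)).comp
        (LinearMap.mulRight F (matE f hf j p.2 q.2 : A)), ?_, ?_⟩
    · intro W' hW' w hw
      exact (hW' _ (SetLike.coe_mem _) _ ((hW' _ (SetLike.coe_mem _) w hw).2)).1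
    · intro r
      show (matE f hf i q.1 p.1 : A)
          * ((matE f hf i r.1 k : A) * x * (matE f hf j l r.2 : A)
              * (matE f hf j p.2 q.2 : A)) = _
      have hcoe1 : (matE f hf j l r.2 : A) * (matE f hf j p.2 q.2 : A)
          = ((matE f hf j l r.2 * matE f hf j p.2 q.2 : ↥S) : A) := rfl
      have hcoe2 : (matE f hf i q.1 p.1 : A) * (matE f hf i r.1 k : A)
          = ((matE f hf i q.1 p.1 * matE f hf i r.1 k : ↥S) : A) := rfl
      rw [mul_assoc ((matE f hf i r.1 k : A) * x), hcoe1, matE_mul_matE]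
      by_cases h2 : r.2 = p.2
      · rw [if_pos h2, ← mul_assoc, ← mul_assoc, hcoe2, matE_mul_matE]
        by_cases h1 : r.1 = p.1
        · rw [if_pos h1.symm, if_pos (Prod.ext h1 h2)]
        · rw [if_neg (fun hh => h1 hh.symm),
            if_neg (fun hh => h1 (congrArg Prod.fst hh)),
            ZeroMemClass.coe_zero, zero_mul, zero_mul]
      · rw [if_neg h2, if_neg (fun hh => h2 (congrArg Prod.snd hh)),
          ZeroMemClass.coe_zero, mul_zero, mul_zero]
  · -- non-trivial
    refine ⟨(matE f hf i k k : A), SetLike.coe_mem _, (k, l), Or.inl ?_⟩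
    have hcoe : (matE f hf i k k : A) * (matE f hf i k k : A)
        = ((matE f hf i k k * matE f hf i k k : ↥S) : A) := rfl
    rw [← mul_assoc, ← mul_assoc, hcoe, matE_mul_matE, if_pos rfl]
    exact h0


/-- `e * x` and `x * e` belong to `B_S` for every `x ∈ B`. -/
lemma emul_mem {x : A} (hxB : x ∈ B) :
    (unitE f hf : A) * x ∈ modGenSubalg F S (B : Set A) ∧
    x * (unitE f hf : A) ∈ modGenSubalg F S (B : Set A) := by
  classical
  set e : A := (unitE f hf : A) with he
  have heS : e ∈ S := SetLike.coe_mem _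
  have hee : e * e = e := unitE_mul_coe f hf heS
  have hesum : e = ∑ i, ∑ a, (matE f hf i a a : A) := by
    have h := congrArg (Subtype.val) (unitE_eq_sum f hf)
    simpa only [AddSubmonoidClass.coe_finset_sum] using h
  -- two-sided piece
  have hexe : ∀ y ∈ B, e * y * e ∈ modGenSubalg F S (B : Set A) := by
    intro y hy
    have hrw : e * y * e = ∑ i, ∑ a, ∑ j, ∑ b,
        (matE f hf i a a : A) * y * (matE f hf j b b : A) := by
      rw [hesum, Finset.sum_mul]
      simp_rw [Finset.sum_mul, Finset.mul_sum]
    rw [hrw]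
    refine Submodule.sum_mem _ fun i _ => Submodule.sum_mem _ fun a _ =>
      Submodule.sum_mem _ fun j _ => Submodule.sum_mem _ fun b _ => ?_
    exact key_two f hf hSB hy i a j b
  -- left-only piece
  have hleftpart : ∀ y ∈ B, (∀ s ∈ S, y * s = 0) → e * y ∈ modGenSubalg F S (B : Set A) := by
    intro y hy hyS
    have hrw : e * y = ∑ i, ∑ a, (matE f hf i a a : A) * y := by
      rw [hesum, Finset.sum_mul]
      simp_rw [Finset.sum_mul]
    rw [hrw]
    exact Submodule.sum_mem _ fun i _ => Submodule.sum_mem _ fun a _ =>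
      key_left f hf hSB hy hyS i a
  have hrightpart : ∀ y ∈ B, (∀ s ∈ S, s * y = 0) → y * e ∈ modGenSubalg F S (B : Set A) := by
    intro y hy hyS
    have hrw : y * e = ∑ j, ∑ b, y * (matE f hf j b b : A) := by
      rw [hesum, Finset.mul_sum]
      simp_rw [Finset.mul_sum]
    rw [hrw]
    exact Submodule.sum_mem _ fun j _ => Submodule.sum_mem _ fun b _ =>
      key_right f hf hSB hy hyS j b
  have hexB : e * x ∈ B := (hSB e heS x hxB).1
  have hxeB : x * e ∈ B := (hSB e heS x hxB).2
  constructor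
  · -- e * x
    have hsplit : e * x = e * x * e + (e * x - e * x * e) := by abel
    rw [hsplit]
    refine add_mem (hexe x hxB) ?_
    have hyB : e * x - e * x * e ∈ B := sub_mem hexB ((hSB e heS _ hexB).2)
    have hyS : ∀ s ∈ S, (e * x - e * x * e) * s = 0 := by
      intro s hs
      rw [sub_mul, mul_assoc (e * x), unitE_mul_coe f hf hs, sub_self]
    have hfix : e * (e * x - e * x * e) = e * x - e * x * e := by
      rw [mul_sub, ← mul_assoc e e x, hee, ← mul_assoc e (e * x) e, ← mul_assoc e e x, hee]
    rw [← hfix]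
    exact hleftpart _ hyB hyS
  · -- x * e
    have hsplit : x * e = e * (x * e) + (x * e - e * (x * e)) := by abel
    rw [hsplit]
    refine add_mem ?_ ?_
    · rw [show e * (x * e) = e * x * e from (mul_assoc e x e).symm]
      exact hexe x hxB
    · have hyB : x * e - e * (x * e) ∈ B := sub_mem hxeB ((hSB e heS _ hxeB).1)
      have hyS : ∀ s ∈ S, s * (x * e - e * (x * e)) = 0 := by
        intro s hs
        rw [mul_sub, ← mul_assoc s e (x * e), mul_unitE_coe f hf hs, sub_self]
      have hfix : (x * e - e * (x * e)) * e = x * e - e * (x * e) := by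
        rw [sub_mul, mul_assoc x e e, hee, mul_assoc e (x * e) e, mul_assoc x e e, hee]
      rw [← hfix]
      exact hrightpart _ hyB hyS

omit hSB in
/-- Every element of a non-trivial simple sub-bimodule satisfies `w = ew + we - ewe`. -/
lemma simple_unit_eq {W : Submodule F A} (hW : W ∈ SimpleBimods F S (B : Set A)) :
    ∀ w ∈ W, (unitE f hf : A) * w + w * (unitE f hf : A)
      - (unitE f hf : A) * (w * (unitE f hf : A)) = w := by
  classical
  obtain ⟨hWB, hWne, hWbm, ⟨s, hs, w0, hw0, hnt⟩, hWsimple⟩ := hW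
  set e : A := (unitE f hf : A) with he
  have heS : e ∈ S := SetLike.coe_mem _
  set D : A →ₗ[F] A := LinearMap.id - LinearMap.mulLeft F e - LinearMap.mulRight F e
      + (LinearMap.mulLeft F e).comp (LinearMap.mulRight F e) with hD
  have hDval : ∀ w : A, D w = w - e * w - w * e + e * (w * e) := by
    intro w
    simp [hD, LinearMap.sub_apply, LinearMap.add_apply]
  have hDleft : ∀ t, t ∈ S → ∀ u : A, D (t * u) = 0 := by
    intro t ht u
    rw [hDval, ← mul_assoc e t u, unitE_mul_coe f hf ht]
    have h2 : e * (t * u * e) = t * u * e := by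
      rw [← mul_assoc, ← mul_assoc e t u, unitE_mul_coe f hf ht]
    rw [h2]
    abel
  have hDright : ∀ t, t ∈ S → ∀ u : A, D (u * t) = 0 := by
    intro t ht u
    rw [hDval, mul_assoc u t e, mul_unitE_coe f hf ht]
    abel
  have hW0bm : IsSubBimod F S (W ⊓ LinearMap.ker D) := by
    intro t ht u hu
    obtain ⟨huW, _⟩ := hu
    exact ⟨⟨(hWbm t ht u huW).1, hDleft t ht u⟩, ⟨(hWbm t ht u huW).2, hDright t ht u⟩⟩
  have hW0 : W ⊓ LinearMap.ker D = W := by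
    rcases hWsimple _ inf_le_left hW0bm with h | h
    · exfalso
      rcases hnt with h1 | h1
      · have hmem : s * w0 ∈ W ⊓ LinearMap.ker D :=
          ⟨(hWbm s hs w0 hw0).1, hDleft s hs w0⟩
        rw [h] at hmem
        exact h1 (by simpa using hmem)
      · have hmem : w0 * s ∈ W ⊓ LinearMap.ker D :=
          ⟨(hWbm s hs w0 hw0).2, hDright s hs w0⟩
        rw [h] at hmem
        exact h1 (by simpa using hmem)
    · exact h
  intro w hw
  have hwk : w ∈ W ⊓ LinearMap.ker D := by rw [hW0]; exact hw
  have hDw : w - e * w - w * e + e * (w * e) = 0 := by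
    have h3 : D w = 0 := hwk.2
    rw [hDval] at h3
    exact h3
  have h4 : e * w + w * e - e * (w * e) - w = -(w - e * w - w * e + e * (w * e)) := by abel
  rw [← sub_eq_zero, h4, hDw, neg_zero]

end KeyLemmas

/-- `B_S` is a two-sided ideal of `B`. -/
theorem modGenSubalg_isIdeal
    [IsAlgClosed F]
    (S : NonUnitalSubalgebra F A) (hS_ne : S ≠ ⊥) (hS_ss : IsMatrixSemisimple F S)
    (B : NonUnitalSubalgebra F A)
    (hSB : ∀ s ∈ S, ∀ b ∈ B, s * b ∈ B ∧ b * s ∈ B) :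
    (modGenSubalg F S (B : Set A) : Set A) ⊆ (B : Set A) ∧
    ∀ b ∈ B, ∀ x ∈ modGenSubalg F S (B : Set A),
      b * x ∈ modGenSubalg F S (B : Set A) ∧ x * b ∈ modGenSubalg F S (B : Set A) := by
  obtain ⟨m, n, hn, f, hf⟩ := hS_ss
  have hsub : (modGenSubalg F S (B : Set A) : Set A) ⊆ (B : Set A) := by
    intro x hx
    refine NonUnitalAlgebra.adjoin_le ?_ hx
    intro y hy
    simp only [Set.mem_iUnion] at hy
    obtain ⟨W, hW, hyW⟩ := hy
    exact hW.1 hyW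
  refine ⟨hsub, ?_⟩
  set e : A := (unitE f hf : A) with he
  have heS : e ∈ S := SetLike.coe_mem _
  have hee : e * e = e := unitE_mul_coe f hf heS
  intro b hb x hx
  induction hx using NonUnitalAlgebra.adjoin_induction with
  | mem x hxgen =>
    simp only [Set.mem_iUnion] at hxgen
    obtain ⟨W, hW, hxW⟩ := hxgen
    have hxB : x ∈ B := hW.1 hxW
    have hxw : e * x + x * e - e * (x * e) = x := simple_unit_eq f hf hW x hxW
    have hkb := emul_mem f hf hSB hb
    have hkx := emul_mem f hf hSB hxB
    have hkxe := emul_mem f hf hSB ((hSB e heS x hxB).2)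
    constructor
    · -- b * x
      have i1 : (b * e) * (e * x) = b * (e * x) := by
        rw [mul_assoc b e (e * x), ← mul_assoc e e x, hee]
      have i2 : (b * x) * e = b * (x * e) := mul_assoc b x e
      have i3 : (b * e) * (e * (x * e)) = b * (e * (x * e)) := by
        rw [mul_assoc b e (e * (x * e)), ← mul_assoc e e (x * e), hee]
      have h1 : b * x = (b * e) * (e * x) + (b * x) * e - (b * e) * (e * (x * e)) := by
        conv_lhs => rw [← hxw]
        rw [mul_sub, mul_add, i1, i2, i3]
      rw [h1]
      refine sub_mem (add_mem (mul_mem hkb.2 hkx.1) ?_) (mul_mem hkb.2 hkxe.1)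
      exact (emul_mem f hf hSB (B.mul_mem hb hxB)).2
    · -- x * b
      have j1 : (e * x) * b = e * (x * b) := mul_assoc e x b
      have j2 : (x * e) * (e * b) = (x * e) * b := by
        rw [mul_assoc x e (e * b), ← mul_assoc e e b, hee, ← mul_assoc x e b]
      have j3 : (e * (x * e)) * (e * b) = (e * (x * e)) * b := by
        rw [← mul_assoc (e * (x * e)) e b]
        congr 1
        rw [mul_assoc e (x * e) e, mul_assoc x e e, hee]
      have h1 : x * b = e * (x * b) + (x * e) * (e * b) - (e * (x * e)) * (e * b) := by
        conv_lhs => rw [← hxw]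
        rw [sub_mul, add_mul, j1, j2, j3]
      rw [h1]
      refine sub_mem (add_mem ?_ (mul_mem hkx.2 hkb.1)) (mul_mem hkxe.1 hkb.1)
      exact (emul_mem f hf hSB (B.mul_mem hxB hb)).1
  | add x y hx hy ihx ihy =>
    exact ⟨by rw [mul_add]; exact add_mem ihx.1 ihy.1,
      by rw [add_mul]; exact add_mem ihx.2 ihy.2⟩
  | zero =>
    exact ⟨by rw [mul_zero]; exact zero_mem _, by rw [zero_mul]; exact zero_mem _⟩
  | mul x y hx hy ihx ihy =>
    exact ⟨by rw [← mul_assoc]; exact mul_mem ihx.1 hy,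
      by rw [mul_assoc]; exact mul_mem hx ihy.2⟩
  | smul c x hx ihx =>
    exact ⟨by rw [mul_smul_comm]; exact SMulMemClass.smul_mem _ ihx.1,
      by rw [smul_mul_assoc]; exact SMulMemClass.smul_mem _ ihx.2⟩
end

section
/- Let A be an associative F-algebra containing a non-zero finite-dimensional semisimple subalgebra S. Then the following are equivalent: (i) A is S-modgenerated, i.e. A is generated as an algebra by its non-trivial simple S-sub-bimodules; (iii) the smallest two-sided ideal of A containing S equals A. -/
universe u v

variable (F : Type u) {A : Type v} [Field F] [NonUnitalRing A] [Module F A]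
  [SMulCommClass F A A] [IsScalarTower F A A]

set_option linter.unusedSectionVars false

/-- A system of matrix units for a semisimple subalgebra `S`. -/
structure MUnits (S : NonUnitalSubalgebra F A) where
  m : ℕ
  n : Fin m → ℕ
  pos : ∀ i, 0 < n i
  E : (i : Fin m) → Fin (n i) → Fin (n i) → A
  mem : ∀ i k l, E i k l ∈ S
  mul_same : ∀ i (k l l' r : Fin (n i)), E i k l * E i l' r = if l = l' then E i k r else 0
  mul_diff : ∀ i j, i ≠ j → ∀ (k l : Fin (n i)) (k' l' : Fin (n j)), E i k l * E j k' l' = 0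
  spans : ∀ s ∈ S, s ∈ Submodule.span F
    (Set.range fun x : Σ i : Fin m, Fin (n i) × Fin (n i) => E x.1 x.2.1 x.2.2)

theorem exists_munits (S : NonUnitalSubalgebra F A) (h : IsMatrixSemisimple F S) :
    Nonempty (MUnits F S) := by
  obtain ⟨m, n, hn, f, hf⟩ := h
  set M := ∀ i, Matrix (Fin (n i)) (Fin (n i)) F with hM
  let g : S ≃ₗ[F] M := LinearEquiv.ofBijective (f : S →ₗ[F] M) hf
  have hg : ∀ s : S, g s = f s := fun s => rfl
  have hmulg : ∀ x y : M,
      ((g.symm x : S) : A) * ((g.symm y : S) : A) = ((g.symm (x * y) : S) : A) := by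
    intro x y
    beta_reduce; rw [← MulMemClass.coe_mul]
    congr 1
    apply g.injective
    beta_reduce; rw [g.apply_symm_apply]
    show f _ = _
    beta_reduce; rw [map_mul]
    show (g (g.symm x)) * (g (g.symm y)) = _
    beta_reduce; rw [g.apply_symm_apply, g.apply_symm_apply]
  have hsingle_same : ∀ (i : Fin m) (x y : Matrix (Fin (n i)) (Fin (n i)) F),
      (Pi.single i x : M) * Pi.single i y = Pi.single i (x * y) := by
    intro i x y
    funext c
    beta_reduce; rw [Pi.mul_apply]
    by_cases hc : c = i
    · subst hc; simp
    · simp [Pi.single_eq_of_ne hc]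
  have hsingle_diff : ∀ (i j : Fin m), i ≠ j → ∀ (x : Matrix (Fin (n i)) (Fin (n i)) F)
      (y : Matrix (Fin (n j)) (Fin (n j)) F), (Pi.single i x : M) * Pi.single j y = 0 := by
    intro i j hij x y
    funext c
    beta_reduce; rw [Pi.mul_apply]
    by_cases hc : c = i
    · subst hc
      simp [Pi.single_eq_of_ne hij]
    · simp [Pi.single_eq_of_ne hc]
  have step : ∀ (i : Fin m) (w : Matrix (Fin (n i)) (Fin (n i)) F),
      (Pi.single i w : M) = ∑ p : Fin (n i) × Fin (n i),
        w p.1 p.2 • (Pi.single i (Matrix.single p.1 p.2 (1:F)) : M) := by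
    intro i w
    have hw : w = ∑ p : Fin (n i) × Fin (n i), Matrix.single p.1 p.2 (w p.1 p.2) := by
      beta_reduce; rw [← Finset.univ_product_univ, Finset.sum_product]
      exact Matrix.matrix_eq_sum_single w
    calc (Pi.single i w : M)
        = Pi.single i (∑ p : Fin (n i) × Fin (n i),
            Matrix.single p.1 p.2 (w p.1 p.2)) := by rw [← hw]
      _ = ∑ p : Fin (n i) × Fin (n i),
            (Pi.single i (Matrix.single p.1 p.2 (w p.1 p.2)) : M) :=
          map_sum (AddMonoidHom.single _ i) _ _
      _ = ∑ p : Fin (n i) × Fin (n i),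
            w p.1 p.2 • (Pi.single i (Matrix.single p.1 p.2 (1:F)) : M) := by
          refine Finset.sum_congr rfl fun p _ => ?_
          beta_reduce; rw [← Pi.single_smul, Matrix.smul_single, smul_eq_mul, mul_one]
  have hMdecomp : ∀ v : M, v = ∑ x : Σ i : Fin m, Fin (n i) × Fin (n i),
      v x.1 x.2.1 x.2.2 • (Pi.single x.1 (Matrix.single x.2.1 x.2.2 (1:F)) : M) := by
    intro v
    beta_reduce; rw [← Finset.univ_sigma_univ, Finset.sum_sigma]
    conv_lhs => rw [← Finset.univ_sum_single v]
    exact Finset.sum_congr rfl fun i _ => step i (v i)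
  refine ⟨⟨m, n, hn, fun i k l => ((g.symm (Pi.single i (Matrix.single k l 1)) : S) : A),
    fun i k l => SetLike.coe_mem _, ?_, ?_, ?_⟩⟩
  · intro i k l l' r
    beta_reduce; rw [hmulg, hsingle_same]
    by_cases hl : l = l'
    · subst hl
      beta_reduce; rw [Matrix.single_mul_single_same, one_mul, if_pos rfl]
    · beta_reduce; beta_reduce; rw [Matrix.single_mul_single_of_ne (h := hl), if_neg hl, Pi.single_zero]
      simp
  · intro i j hij k l k' l'
    beta_reduce; rw [hmulg, hsingle_diff i j hij]
    simp
  · intro s hs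
    have hv : (⟨s, hs⟩ : S) = ∑ x : Σ i : Fin m, Fin (n i) × Fin (n i),
        (f ⟨s, hs⟩ x.1 x.2.1 x.2.2) •
          g.symm (Pi.single x.1 (Matrix.single x.2.1 x.2.2 (1:F))) := by
      apply g.injective
      beta_reduce; rw [map_sum]
      simp only [map_smul, g.apply_symm_apply]
      beta_reduce; rw [hg]
      exact hMdecomp (f ⟨s, hs⟩)
    have hcoe : s = ((⟨s, hs⟩ : S) : A) := rfl
    beta_reduce; rw [hcoe, hv, AddSubmonoidClass.coe_finset_sum]
    refine Submodule.sum_smul_mem _ _ fun x _ => Submodule.subset_span ⟨x, ?_⟩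
    simp

namespace MUnits

variable {F} {S : NonUnitalSubalgebra F A} (U : MUnits F S)

def eS : A := ∑ i, ∑ p, U.E i p p

theorem eS_def : U.eS = ∑ i, ∑ p, U.E i p p := rfl

theorem eS_mem : U.eS ∈ S :=
  sum_mem fun i _ => sum_mem fun p _ => U.mem i p p

theorem E_mul_eS (i : Fin U.m) (k l : Fin (U.n i)) : U.E i k l * U.eS = U.E i k l := by
  beta_reduce; rw [eS_def, Finset.mul_sum, Finset.sum_eq_single i]
  · beta_reduce; beta_reduce; rw [Finset.mul_sum, Finset.sum_congr rfl (fun p _ => U.mul_same i k l p p)]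
    simp
  · intro j _ hj
    beta_reduce; rw [Finset.mul_sum]
    exact Finset.sum_eq_zero fun p _ => U.mul_diff i j (Ne.symm hj) k l p p
  · intro h; exact absurd (Finset.mem_univ i) h

theorem eS_mul_E (i : Fin U.m) (k l : Fin (U.n i)) : U.eS * U.E i k l = U.E i k l := by
  beta_reduce; rw [eS_def, Finset.sum_mul, Finset.sum_eq_single i]
  · beta_reduce; beta_reduce; rw [Finset.sum_mul, Finset.sum_congr rfl (fun p _ => U.mul_same i p p k l)]
    simp
  · intro j _ hj
    beta_reduce; rw [Finset.sum_mul]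
    exact Finset.sum_eq_zero fun p _ => U.mul_diff j i hj p p k l
  · intro h; exact absurd (Finset.mem_univ i) h

theorem mul_eS (s : A) (hs : s ∈ S) : s * U.eS = s := by
  refine Submodule.span_induction (p := fun x _ => x * U.eS = x)
    ?_ ?_ ?_ ?_ (U.spans s hs)
  · rintro x ⟨y, rfl⟩; exact U.E_mul_eS y.1 y.2.1 y.2.2
  · exact zero_mul _
  · intro x y _ _ hx hy; beta_reduce; rw [add_mul, hx, hy]
  · intro c x _ hx; beta_reduce; rw [smul_mul_assoc, hx]

theorem eS_mul (s : A) (hs : s ∈ S) : U.eS * s = s := by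
  refine Submodule.span_induction (p := fun x _ => U.eS * x = x)
    ?_ ?_ ?_ ?_ (U.spans s hs)
  · rintro x ⟨y, rfl⟩; exact U.eS_mul_E y.1 y.2.1 y.2.2
  · exact mul_zero _
  · intro x y _ _ hx hy; beta_reduce; rw [mul_add, hx, hy]
  · intro c x _ hx; beta_reduce; rw [mul_smul_comm, hx]

/-- Left-column lemma: `E i k l * a * (1 - e)` lies in the modgenerated subalgebra. -/
theorem left_mem (i : Fin U.m) (l : Fin (U.n i)) (a : A) (k : Fin (U.n i)) :
    U.E i k l * a - U.E i k l * a * U.eS ∈ modGenSubalg F S Set.univ := by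
  set w : Fin (U.n i) → A := fun p => U.E i p l * a - U.E i p l * a * U.eS with hw
  show w k ∈ modGenSubalg F S Set.univ
  have fact1 : ∀ (p : Fin (U.n i)) (s : A), s ∈ S → w p * s = 0 := by
    intro p s hs
    simp only [hw, sub_mul, mul_assoc]
    beta_reduce; rw [U.eS_mul s hs, sub_self]
  have fact2a : ∀ (k' l' p : Fin (U.n i)), U.E i k' l' * w p = if l' = p then w k' else 0 := by
    intro k' l' p
    simp only [hw, mul_sub, ← mul_assoc]
    beta_reduce; rw [U.mul_same]
    split_ifs with h
    · rfl
    · simp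
  have fact2b : ∀ (j : Fin U.m), j ≠ i → ∀ (k' l' : Fin (U.n j)) (p : Fin (U.n i)),
      U.E j k' l' * w p = 0 := by
    intro j hj k' l' p
    simp only [hw, mul_sub, ← mul_assoc]
    beta_reduce; rw [U.mul_diff j i hj]
    simp
  set W : Submodule F A := Submodule.span F (Set.range w) with hWdef
  have hwmem : ∀ p, w p ∈ W := fun p => Submodule.subset_span ⟨p, rfl⟩
  have hWr : ∀ x ∈ W, ∀ s ∈ S, x * s = 0 := by
    intro x hx s hs
    refine Submodule.span_induction (p := fun x _ => x * s = 0) ?_ ?_ ?_ ?_ hx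
    · rintro x ⟨p, rfl⟩; exact fact1 p s hs
    · exact zero_mul s
    · intro x y _ _ hx hy; beta_reduce; rw [add_mul, hx, hy, add_zero]
    · intro c x _ hx; beta_reduce; rw [smul_mul_assoc, hx, smul_zero]
  have hWl : ∀ s ∈ S, ∀ x ∈ W, s * x ∈ W := by
    intro s hs
    refine Submodule.span_induction (p := fun s _ => ∀ x ∈ W, s * x ∈ W)
      ?_ ?_ ?_ ?_ (U.spans s hs)
    · rintro s ⟨⟨j, k', l'⟩, rfl⟩ x hx
      refine Submodule.span_induction (p := fun x _ => U.E j k' l' * x ∈ W) ?_ ?_ ?_ ?_ hx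
      · rintro x ⟨p, rfl⟩
        by_cases hj : j = i
        · subst hj
          beta_reduce; rw [fact2a]
          split_ifs
          · exact hwmem k'
          · exact W.zero_mem
        · beta_reduce; beta_reduce; rw [fact2b j hj]
          exact W.zero_mem
      · beta_reduce; beta_reduce; rw [mul_zero]; exact W.zero_mem
      · intro x y _ _ hx hy; beta_reduce; rw [mul_add]; exact W.add_mem hx hy
      · intro c x _ hx; beta_reduce; rw [mul_smul_comm]; exact W.smul_mem c hx
    · intro x _; beta_reduce; rw [zero_mul]; exact W.zero_mem
    · intro s t _ _ hs ht x hx; beta_reduce; rw [add_mul]; exact W.add_mem (hs x hx) (ht x hx)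
    · intro c s _ hs x hx; beta_reduce; rw [smul_mul_assoc]; exact W.smul_mem c (hs x hx)
  have hbimod : IsSubBimod F S W := fun s hs x hx =>
    ⟨hWl s hs x hx, by rw [hWr x hx s hs]; exact W.zero_mem⟩
  by_cases h0 : ∀ p, w p = 0
  · beta_reduce; beta_reduce; rw [h0 k]
    exact zero_mem _
  · push_neg at h0
    obtain ⟨p0, hp0⟩ := h0
    have hWsimple : W ∈ SimpleBimods F S Set.univ := by
      refine ⟨Set.subset_univ _, ?_, hbimod, ?_, ?_⟩
      · intro hbot
        exact hp0 (by simpa [hbot] using hwmem p0)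
      · exact ⟨U.E i p0 p0, U.mem i p0 p0, w p0, hwmem p0,
          Or.inl (by rw [fact2a]; simpa using hp0)⟩
      · intro W' hle hbi
        by_cases hbot : W' = ⊥
        · exact Or.inl hbot
        · right
          obtain ⟨u, hu, hu0⟩ := (Submodule.ne_bot_iff W').mp hbot
          obtain ⟨c, hc⟩ := (Submodule.mem_span_range_iff_exists_fun F).mp (hle hu)
          have hex : ∃ p, c p • w p ≠ 0 := by
            by_contra hall
            push_neg at hall
            exact hu0 (by rw [← hc]; exact Finset.sum_eq_zero fun p _ => hall p)
          obtain ⟨p1, hp1⟩ := hex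
          have hc1 : c p1 ≠ 0 := fun h => hp1 (by rw [h, zero_smul])
          have hw1 : ∀ q, w q ∈ W' := by
            intro q
            have hm : U.E i q p1 * u ∈ W' := (hbi (U.E i q p1) (U.mem i q p1) u hu).1
            have heq : U.E i q p1 * u = c p1 • w q := by
              beta_reduce; rw [← hc, Finset.mul_sum]
              have hterm : ∀ p : Fin (U.n i), U.E i q p1 * (c p • w p)
                  = if p1 = p then c p • w q else 0 := by
                intro p
                beta_reduce; rw [mul_smul_comm, fact2a]
                split_ifs with h
                · rfl
                · exact smul_zero _
              beta_reduce; rw [Finset.sum_congr rfl (fun p _ => hterm p), Finset.sum_ite_eq]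
              simp
            beta_reduce; rw [heq] at hm
            have hsm := W'.smul_mem (c p1)⁻¹ hm
            rwa [smul_smul, inv_mul_cancel₀ hc1, one_smul] at hsm
          refine le_antisymm hle ?_
          beta_reduce; rw [hWdef]
          refine Submodule.span_le.mpr ?_
          rintro x ⟨q, rfl⟩
          exact hw1 q
    have hsub : (W : Set A) ⊆ ⋃ W' ∈ SimpleBimods F S Set.univ, (W' : Set A) :=
      fun x hx => Set.mem_biUnion hWsimple hx
    exact NonUnitalAlgebra.subset_adjoin F (hsub (hwmem k))

/-- Right-row lemma: `(1 - e) * a * E i l k` lies in the modgenerated subalgebra. -/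
theorem right_mem (i : Fin U.m) (l : Fin (U.n i)) (a : A) (k : Fin (U.n i)) :
    a * U.E i l k - U.eS * a * U.E i l k ∈ modGenSubalg F S Set.univ := by
  set w : Fin (U.n i) → A := fun p => a * U.E i l p - U.eS * a * U.E i l p with hw
  show w k ∈ modGenSubalg F S Set.univ
  have fact1 : ∀ (p : Fin (U.n i)) (s : A), s ∈ S → s * w p = 0 := by
    intro p s hs
    simp only [hw, mul_sub, ← mul_assoc]
    beta_reduce; rw [U.mul_eS s hs, sub_self]
  have fact2a : ∀ (p k' l' : Fin (U.n i)), w p * U.E i k' l' = if p = k' then w l' else 0 := by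
    intro p k' l'
    simp only [hw, sub_mul, mul_assoc]
    beta_reduce; rw [U.mul_same]
    split_ifs with h
    · rfl
    · simp
  have fact2b : ∀ (j : Fin U.m), i ≠ j → ∀ (k' l' : Fin (U.n j)) (p : Fin (U.n i)),
      w p * U.E j k' l' = 0 := by
    intro j hj k' l' p
    simp only [hw, sub_mul, mul_assoc]
    beta_reduce; rw [U.mul_diff i j hj]
    simp
  set W : Submodule F A := Submodule.span F (Set.range w) with hWdef
  have hwmem : ∀ p, w p ∈ W := fun p => Submodule.subset_span ⟨p, rfl⟩
  have hWl : ∀ x ∈ W, ∀ s ∈ S, s * x = 0 := by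
    intro x hx s hs
    refine Submodule.span_induction (p := fun x _ => s * x = 0) ?_ ?_ ?_ ?_ hx
    · rintro x ⟨p, rfl⟩; exact fact1 p s hs
    · exact mul_zero s
    · intro x y _ _ hx hy; beta_reduce; rw [mul_add, hx, hy, add_zero]
    · intro c x _ hx; beta_reduce; rw [mul_smul_comm, hx, smul_zero]
  have hWr : ∀ s ∈ S, ∀ x ∈ W, x * s ∈ W := by
    intro s hs
    refine Submodule.span_induction (p := fun s _ => ∀ x ∈ W, x * s ∈ W)
      ?_ ?_ ?_ ?_ (U.spans s hs)
    · rintro s ⟨⟨j, k', l'⟩, rfl⟩ x hx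
      refine Submodule.span_induction (p := fun x _ => x * U.E j k' l' ∈ W) ?_ ?_ ?_ ?_ hx
      · rintro x ⟨p, rfl⟩
        by_cases hj : i = j
        · subst hj
          beta_reduce; rw [fact2a]
          split_ifs
          · exact hwmem l'
          · exact W.zero_mem
        · beta_reduce; beta_reduce; rw [fact2b j hj]
          exact W.zero_mem
      · beta_reduce; beta_reduce; rw [zero_mul]; exact W.zero_mem
      · intro x y _ _ hx hy; beta_reduce; rw [add_mul]; exact W.add_mem hx hy
      · intro c x _ hx; beta_reduce; rw [smul_mul_assoc]; exact W.smul_mem c hx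
    · intro x _; beta_reduce; rw [mul_zero]; exact W.zero_mem
    · intro s t _ _ hs ht x hx; beta_reduce; rw [mul_add]; exact W.add_mem (hs x hx) (ht x hx)
    · intro c s _ hs x hx; beta_reduce; rw [mul_smul_comm]; exact W.smul_mem c (hs x hx)
  have hbimod : IsSubBimod F S W := fun s hs x hx =>
    ⟨by rw [hWl x hx s hs]; exact W.zero_mem, hWr s hs x hx⟩
  by_cases h0 : ∀ p, w p = 0
  · beta_reduce; beta_reduce; rw [h0 k]
    exact zero_mem _
  · push_neg at h0
    obtain ⟨p0, hp0⟩ := h0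
    have hWsimple : W ∈ SimpleBimods F S Set.univ := by
      refine ⟨Set.subset_univ _, ?_, hbimod, ?_, ?_⟩
      · intro hbot
        exact hp0 (by simpa [hbot] using hwmem p0)
      · exact ⟨U.E i p0 p0, U.mem i p0 p0, w p0, hwmem p0,
          Or.inr (by rw [fact2a]; simpa using hp0)⟩
      · intro W' hle hbi
        by_cases hbot : W' = ⊥
        · exact Or.inl hbot
        · right
          obtain ⟨u, hu, hu0⟩ := (Submodule.ne_bot_iff W').mp hbot
          obtain ⟨c, hc⟩ := (Submodule.mem_span_range_iff_exists_fun F).mp (hle hu)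
          have hex : ∃ p, c p • w p ≠ 0 := by
            by_contra hall
            push_neg at hall
            exact hu0 (by rw [← hc]; exact Finset.sum_eq_zero fun p _ => hall p)
          obtain ⟨p1, hp1⟩ := hex
          have hc1 : c p1 ≠ 0 := fun h => hp1 (by rw [h, zero_smul])
          have hw1 : ∀ q, w q ∈ W' := by
            intro q
            have hm : u * U.E i p1 q ∈ W' := (hbi (U.E i p1 q) (U.mem i p1 q) u hu).2
            have heq : u * U.E i p1 q = c p1 • w q := by
              beta_reduce; rw [← hc, Finset.sum_mul]
              have hterm : ∀ p : Fin (U.n i), (c p • w p) * U.E i p1 q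
                  = if p = p1 then c p • w q else 0 := by
                intro p
                beta_reduce; rw [smul_mul_assoc, fact2a]
                split_ifs with h
                · rfl
                · exact smul_zero _
              beta_reduce; rw [Finset.sum_congr rfl (fun p _ => hterm p), Finset.sum_ite_eq']
              simp
            beta_reduce; rw [heq] at hm
            have hsm := W'.smul_mem (c p1)⁻¹ hm
            rwa [smul_smul, inv_mul_cancel₀ hc1, one_smul] at hsm
          refine le_antisymm hle ?_
          beta_reduce; rw [hWdef]
          refine Submodule.span_le.mpr ?_
          rintro x ⟨q, rfl⟩
          exact hw1 q
    have hsub : (W : Set A) ⊆ ⋃ W' ∈ SimpleBimods F S Set.univ, (W' : Set A) :=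
      fun x hx => Set.mem_biUnion hWsimple hx
    exact NonUnitalAlgebra.subset_adjoin F (hsub (hwmem k))

/-- Two-sided lemma: `E i k l * a * E j r s` lies in the modgenerated subalgebra. -/
theorem two_sided_mem (i : Fin U.m) (l : Fin (U.n i)) (j : Fin U.m) (r : Fin (U.n j)) (a : A)
    (k : Fin (U.n i)) (s : Fin (U.n j)) :
    U.E i k l * a * U.E j r s ∈ modGenSubalg F S Set.univ := by
  set w : Fin (U.n i) × Fin (U.n j) → A := fun p => U.E i p.1 l * a * U.E j r p.2 with hw
  show w (k, s) ∈ modGenSubalg F S Set.univ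
  have fact2a : ∀ (k' l' pa : Fin (U.n i)) (pb : Fin (U.n j)),
      U.E i k' l' * w (pa, pb) = if l' = pa then w (k', pb) else 0 := by
    intro k' l' pa pb
    simp only [hw, ← mul_assoc]
    beta_reduce; rw [U.mul_same]
    split_ifs with h
    · rfl
    · simp
  have fact2b : ∀ (j' : Fin U.m), j' ≠ i → ∀ (k' l' : Fin (U.n j'))
      (p : Fin (U.n i) × Fin (U.n j)), U.E j' k' l' * w p = 0 := by
    intro j' hj k' l' p
    simp only [hw, ← mul_assoc]
    beta_reduce; rw [U.mul_diff j' i hj]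
    simp
  have fact3a : ∀ (k' l' : Fin (U.n j)) (pa : Fin (U.n i)) (pb : Fin (U.n j)),
      w (pa, pb) * U.E j k' l' = if pb = k' then w (pa, l') else 0 := by
    intro k' l' pa pb
    simp only [hw, mul_assoc]
    beta_reduce; rw [U.mul_same]
    split_ifs with h
    · rfl
    · simp
  have fact3b : ∀ (j' : Fin U.m), j ≠ j' → ∀ (k' l' : Fin (U.n j'))
      (p : Fin (U.n i) × Fin (U.n j)), w p * U.E j' k' l' = 0 := by
    intro j' hj k' l' p
    simp only [hw, mul_assoc]
    beta_reduce; rw [U.mul_diff j j' hj]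
    simp
  set W : Submodule F A := Submodule.span F (Set.range w) with hWdef
  have hwmem : ∀ p, w p ∈ W := fun p => Submodule.subset_span ⟨p, rfl⟩
  have hWl : ∀ s' ∈ S, ∀ x ∈ W, s' * x ∈ W := by
    intro s' hs
    refine Submodule.span_induction (p := fun s' _ => ∀ x ∈ W, s' * x ∈ W)
      ?_ ?_ ?_ ?_ (U.spans s' hs)
    · rintro s' ⟨⟨j', k', l'⟩, rfl⟩ x hx
      refine Submodule.span_induction (p := fun x _ => U.E j' k' l' * x ∈ W) ?_ ?_ ?_ ?_ hx
      · rintro x ⟨⟨pa, pb⟩, rfl⟩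
        by_cases hj : j' = i
        · subst hj
          beta_reduce; rw [fact2a]
          split_ifs
          · exact hwmem _
          · exact W.zero_mem
        · beta_reduce; beta_reduce; rw [fact2b j' hj]
          exact W.zero_mem
      · beta_reduce; beta_reduce; rw [mul_zero]; exact W.zero_mem
      · intro x y _ _ hx hy; beta_reduce; rw [mul_add]; exact W.add_mem hx hy
      · intro c x _ hx; beta_reduce; rw [mul_smul_comm]; exact W.smul_mem c hx
    · intro x _; beta_reduce; rw [zero_mul]; exact W.zero_mem
    · intro s' t _ _ hs' ht x hx; beta_reduce; rw [add_mul]; exact W.add_mem (hs' x hx) (ht x hx)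
    · intro c s' _ hs' x hx; beta_reduce; rw [smul_mul_assoc]; exact W.smul_mem c (hs' x hx)
  have hWr : ∀ s' ∈ S, ∀ x ∈ W, x * s' ∈ W := by
    intro s' hs
    refine Submodule.span_induction (p := fun s' _ => ∀ x ∈ W, x * s' ∈ W)
      ?_ ?_ ?_ ?_ (U.spans s' hs)
    · rintro s' ⟨⟨j', k', l'⟩, rfl⟩ x hx
      refine Submodule.span_induction (p := fun x _ => x * U.E j' k' l' ∈ W) ?_ ?_ ?_ ?_ hx
      · rintro x ⟨⟨pa, pb⟩, rfl⟩
        by_cases hj : j = j'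
        · subst hj
          beta_reduce; rw [fact3a]
          split_ifs
          · exact hwmem _
          · exact W.zero_mem
        · beta_reduce; beta_reduce; rw [fact3b j' hj]
          exact W.zero_mem
      · beta_reduce; beta_reduce; rw [zero_mul]; exact W.zero_mem
      · intro x y _ _ hx hy; beta_reduce; rw [add_mul]; exact W.add_mem hx hy
      · intro c x _ hx; beta_reduce; rw [smul_mul_assoc]; exact W.smul_mem c hx
    · intro x _; beta_reduce; rw [mul_zero]; exact W.zero_mem
    · intro s' t _ _ hs' ht x hx; beta_reduce; rw [mul_add]; exact W.add_mem (hs' x hx) (ht x hx)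
    · intro c s' _ hs' x hx; beta_reduce; rw [mul_smul_comm]; exact W.smul_mem c (hs' x hx)
  have hbimod : IsSubBimod F S W := fun s' hs x hx =>
    ⟨hWl s' hs x hx, hWr s' hs x hx⟩
  by_cases h0 : ∀ p, w p = 0
  · beta_reduce; beta_reduce; rw [h0 (k, s)]
    exact zero_mem _
  · push_neg at h0
    obtain ⟨p0, hp0⟩ := h0
    have hWsimple : W ∈ SimpleBimods F S Set.univ := by
      refine ⟨Set.subset_univ _, ?_, hbimod, ?_, ?_⟩
      · intro hbot
        exact hp0 (by simpa [hbot] using hwmem p0)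
      · refine ⟨U.E i p0.1 p0.1, U.mem i p0.1 p0.1, w p0, hwmem p0, Or.inl ?_⟩
        obtain ⟨p0a, p0b⟩ := p0
        beta_reduce; rw [fact2a]
        simpa using hp0
      · intro W' hle hbi
        by_cases hbot : W' = ⊥
        · exact Or.inl hbot
        · right
          obtain ⟨u, hu, hu0⟩ := (Submodule.ne_bot_iff W').mp hbot
          obtain ⟨c, hc⟩ := (Submodule.mem_span_range_iff_exists_fun F).mp (hle hu)
          have hex : ∃ p, c p • w p ≠ 0 := by
            by_contra hall
            push_neg at hall
            exact hu0 (by rw [← hc]; exact Finset.sum_eq_zero fun p _ => hall p)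
          obtain ⟨p1, hp1⟩ := hex
          have hc1 : c p1 ≠ 0 := fun h => hp1 (by rw [h, zero_smul])
          have hw1 : ∀ q, w q ∈ W' := by
            rintro ⟨qa, qb⟩
            have hm1 : U.E i qa p1.1 * u ∈ W' := (hbi (U.E i qa p1.1) (U.mem i qa p1.1) u hu).1
            have hm : (U.E i qa p1.1 * u) * U.E j p1.2 qb ∈ W' :=
              (hbi (U.E j p1.2 qb) (U.mem j p1.2 qb) _ hm1).2
            have heq : (U.E i qa p1.1 * u) * U.E j p1.2 qb = c p1 • w (qa, qb) := by
              beta_reduce; rw [← hc, Finset.mul_sum, Finset.sum_mul]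
              have hterm : ∀ p : Fin (U.n i) × Fin (U.n j),
                  (U.E i qa p1.1 * (c p • w p)) * U.E j p1.2 qb
                  = if p = p1 then c p • w (qa, qb) else 0 := by
                rintro ⟨pa, pb⟩
                beta_reduce; rw [mul_smul_comm, smul_mul_assoc, fact2a]
                by_cases h1 : p1.1 = pa
                · beta_reduce; beta_reduce; rw [if_pos h1, fact3a]
                  by_cases h2 : pb = p1.2
                  · have hp : (pa, pb) = p1 := by
                      beta_reduce; rw [← h1, h2]
                    beta_reduce; rw [if_pos h2, if_pos hp]
                  · beta_reduce; beta_reduce; rw [if_neg h2, smul_zero,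
                      if_neg (fun hpq : (pa, pb) = p1 => h2 (by rw [← hpq]))]
                · beta_reduce; beta_reduce; rw [if_neg h1, zero_mul, smul_zero,
                    if_neg (fun hpq : (pa, pb) = p1 => h1 (by rw [← hpq]))]
              beta_reduce; rw [Finset.sum_congr rfl (fun p _ => hterm p), Finset.sum_ite_eq']
              simp
            beta_reduce; rw [heq] at hm
            have hsm := W'.smul_mem (c p1)⁻¹ hm
            rwa [smul_smul, inv_mul_cancel₀ hc1, one_smul] at hsm
          refine le_antisymm hle ?_
          beta_reduce; rw [hWdef]
          refine Submodule.span_le.mpr ?_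
          rintro x ⟨q, rfl⟩
          exact hw1 q
    have hsub : (W : Set A) ⊆ ⋃ W' ∈ SimpleBimods F S Set.univ, (W' : Set A) :=
      fun x hx => Set.mem_biUnion hWsimple hx
    exact NonUnitalAlgebra.subset_adjoin F (hsub (hwmem (k, s)))

theorem E_mul_mem (i : Fin U.m) (k l : Fin (U.n i)) (a : A) :
    U.E i k l * a ∈ modGenSubalg F S Set.univ := by
  have h1 : U.E i k l * a * U.eS ∈ modGenSubalg F S Set.univ := by
    beta_reduce; rw [eS_def]
    simp only [Finset.mul_sum]
    exact sum_mem fun j _ => sum_mem fun p _ => U.two_sided_mem i l j p a k p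
  have h2 := U.left_mem i l a k
  have h3 : U.E i k l * a = (U.E i k l * a - U.E i k l * a * U.eS) + U.E i k l * a * U.eS := by
    beta_reduce; rw [sub_add_cancel]
  beta_reduce; rw [h3]
  exact add_mem h2 h1

theorem mul_E_mem (i : Fin U.m) (k l : Fin (U.n i)) (a : A) :
    a * U.E i k l ∈ modGenSubalg F S Set.univ := by
  have h1 : U.eS * a * U.E i k l ∈ modGenSubalg F S Set.univ := by
    beta_reduce; rw [eS_def]
    simp only [Finset.sum_mul]
    exact sum_mem fun j _ => sum_mem fun p _ => U.two_sided_mem j p i k a p l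
  have h2 := U.right_mem i k a l
  have h3 : a * U.E i k l = (a * U.E i k l - U.eS * a * U.E i k l) + U.eS * a * U.E i k l := by
    beta_reduce; rw [sub_add_cancel]
  beta_reduce; rw [h3]
  exact add_mem h2 h1

include U in
theorem S_mul_mem (s : A) (hs : s ∈ S) (a : A) : s * a ∈ modGenSubalg F S Set.univ := by
  refine Submodule.span_induction (p := fun x _ => x * a ∈ modGenSubalg F S Set.univ)
    ?_ ?_ ?_ ?_ (U.spans s hs)
  · rintro x ⟨⟨j, k, l⟩, rfl⟩; exact U.E_mul_mem j k l a
  · beta_reduce; beta_reduce; rw [zero_mul]; exact zero_mem _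
  · intro x y _ _ hx hy; beta_reduce; rw [add_mul]; exact add_mem hx hy
  · intro c x _ hx; beta_reduce; rw [smul_mul_assoc]; exact SMulMemClass.smul_mem c hx

include U in
theorem mul_S_mem (s : A) (hs : s ∈ S) (a : A) : a * s ∈ modGenSubalg F S Set.univ := by
  refine Submodule.span_induction (p := fun x _ => a * x ∈ modGenSubalg F S Set.univ)
    ?_ ?_ ?_ ?_ (U.spans s hs)
  · rintro x ⟨⟨j, k, l⟩, rfl⟩; exact U.mul_E_mem j k l a
  · beta_reduce; beta_reduce; rw [mul_zero]; exact zero_mem _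
  · intro x y _ _ hx hy; beta_reduce; rw [mul_add]; exact add_mem hx hy
  · intro c x _ hx; beta_reduce; rw [mul_smul_comm]; exact SMulMemClass.smul_mem c hx

include U in
theorem mul_S_mul_mem (s : A) (hs : s ∈ S) (a b : A) :
    a * s * b ∈ modGenSubalg F S Set.univ := by
  refine Submodule.span_induction (p := fun x _ => a * x * b ∈ modGenSubalg F S Set.univ)
    ?_ ?_ ?_ ?_ (U.spans s hs)
  · rintro x ⟨⟨j, k, l⟩, rfl⟩
    have c0 : Fin (U.n j) := ⟨0, U.pos j⟩
    have hEsplit : U.E j k l = U.E j k c0 * U.E j c0 l := by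
      beta_reduce; rw [U.mul_same, if_pos rfl]
    beta_reduce; rw [hEsplit, ← mul_assoc, mul_assoc (a * U.E j k c0)]
    exact mul_mem (U.mul_E_mem j k c0 a) (U.E_mul_mem j c0 l b)
  · beta_reduce; beta_reduce; rw [mul_zero, zero_mul]; exact zero_mem _
  · intro x y _ _ hx hy; beta_reduce; rw [mul_add, add_mul]; exact add_mem hx hy
  · intro c x _ hx; beta_reduce; rw [mul_smul_comm, smul_mul_assoc]; exact SMulMemClass.smul_mem c hx

include U in
theorem mem_S_mem (s : A) (hs : s ∈ S) : s ∈ modGenSubalg F S Set.univ := by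
  have h := U.S_mul_mem U.eS U.eS_mem s
  rwa [U.eS_mul s hs] at h

end MUnits

/-- `A` is `S`-modgenerated iff `A` is generated by `S` as a two-sided
ideal (i.e. the smallest two-sided ideal of `A` containing `S` is `A` itself). -/
theorem modGenerated_iff_ideal_generated
    [IsAlgClosed F]
    (S : NonUnitalSubalgebra F A) (hS_ne : S ≠ ⊥) (hS_ss : IsMatrixSemisimple F S) :
    modGenSubalg F S (Set.univ : Set A) = ⊤ ↔
      (∀ J : Submodule F A, (∀ a : A, ∀ x ∈ J, a * x ∈ J ∧ x * a ∈ J) →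
        (S : Set A) ⊆ J → J = ⊤) := by
  constructor
  · intro htop J hJ hSJ
    let JA : NonUnitalSubalgebra F A :=
      { carrier := J
        add_mem' := fun ha hb => J.add_mem ha hb
        zero_mem' := J.zero_mem
        smul_mem' := fun c {x} hx => J.smul_mem c hx
        mul_mem' := fun {x y} hx hy => (hJ x y hy).1 }
    have hWsub : ∀ W ∈ SimpleBimods F S (Set.univ : Set A), (W : Set A) ⊆ (J : Set A) := by
      intro W hW
      obtain ⟨-, hWne, hWbi, ⟨s0, hs0, w0, hw0, hnz⟩, hWsimp⟩ := hW
      set Uc : Submodule F A :=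
        Submodule.span F {x | ∃ s ∈ S, ∃ w ∈ W, x = s * w ∨ x = w * s} with hU
      have hUleW : Uc ≤ W := by
        beta_reduce; rw [hU]
        refine Submodule.span_le.mpr ?_
        rintro x ⟨s, hs, w, hw, (rfl | rfl)⟩
        exacts [(hWbi s hs w hw).1, (hWbi s hs w hw).2]
      have hUbi : IsSubBimod F S Uc := by
        intro s hs x hx
        constructor
        · refine Submodule.span_induction (p := fun x _ => s * x ∈ Uc) ?_ ?_ ?_ ?_ hx
          · rintro x ⟨t, ht, w, hw, (rfl | rfl)⟩
            · beta_reduce; beta_reduce; rw [← mul_assoc]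
              exact Submodule.subset_span ⟨s * t, S.mul_mem hs ht, w, hw, Or.inl rfl⟩
            · beta_reduce; beta_reduce; rw [← mul_assoc]
              exact Submodule.subset_span ⟨t, ht, s * w, (hWbi s hs w hw).1, Or.inr rfl⟩
          · beta_reduce; beta_reduce; rw [mul_zero]; exact zero_mem _
          · intro x y _ _ hx' hy'; beta_reduce; rw [mul_add]; exact add_mem hx' hy'
          · intro c x _ hx'; beta_reduce; rw [mul_smul_comm]; exact Submodule.smul_mem _ c hx'
        · refine Submodule.span_induction (p := fun x _ => x * s ∈ Uc) ?_ ?_ ?_ ?_ hx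
          · rintro x ⟨t, ht, w, hw, (rfl | rfl)⟩
            · beta_reduce; beta_reduce; rw [mul_assoc]
              exact Submodule.subset_span ⟨t, ht, w * s, (hWbi s hs w hw).2, Or.inl rfl⟩
            · beta_reduce; beta_reduce; rw [mul_assoc]
              exact Submodule.subset_span ⟨t * s, S.mul_mem ht hs, w, hw, Or.inr rfl⟩
          · beta_reduce; beta_reduce; rw [zero_mul]; exact zero_mem _
          · intro x y _ _ hx' hy'; beta_reduce; rw [add_mul]; exact add_mem hx' hy'
          · intro c x _ hx'; beta_reduce; rw [smul_mul_assoc]; exact Submodule.smul_mem _ c hx'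
      have hUne : Uc ≠ ⊥ := by
        intro hbot
        rcases hnz with h1 | h1
        · have hmem : s0 * w0 ∈ Uc :=
            Submodule.subset_span ⟨s0, hs0, w0, hw0, Or.inl rfl⟩
          beta_reduce; rw [hbot] at hmem
          exact h1 (by simpa using hmem)
        · have hmem : w0 * s0 ∈ Uc :=
            Submodule.subset_span ⟨s0, hs0, w0, hw0, Or.inr rfl⟩
          beta_reduce; rw [hbot] at hmem
          exact h1 (by simpa using hmem)
      have hUW : Uc = W := (hWsimp Uc hUleW hUbi).resolve_left hUne
      intro x hx
      have hxU : x ∈ Uc := by rw [hUW]; exact hx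
      refine Submodule.span_induction (p := fun x _ => x ∈ J) ?_ ?_ ?_ ?_ hxU
      · rintro x ⟨s, hs, w, hw, (rfl | rfl)⟩
        · exact (hJ w s (hSJ hs)).2
        · exact (hJ w s (hSJ hs)).1
      · exact J.zero_mem
      · intro x y _ _ hx' hy'; exact J.add_mem hx' hy'
      · intro c x _ hx'; exact J.smul_mem c hx'
    have hle : modGenSubalg F S Set.univ ≤ JA := by
      refine NonUnitalAlgebra.adjoin_le ?_
      intro x hx
      obtain ⟨W, hW, hxW⟩ := Set.mem_iUnion₂.mp hx
      exact hWsub W hW hxW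
    beta_reduce; rw [htop] at hle
    beta_reduce; rw [eq_top_iff]
    intro x _
    exact hle (show x ∈ (⊤ : NonUnitalSubalgebra F A) from trivial)
  · intro hJ
    obtain ⟨U⟩ := exists_munits F S hS_ss
    let J : Submodule F A :=
      { carrier := {x | x ∈ modGenSubalg F S Set.univ ∧
          (∀ a : A, a * x ∈ modGenSubalg F S Set.univ) ∧
          (∀ a : A, x * a ∈ modGenSubalg F S Set.univ) ∧
          (∀ a b : A, a * x * b ∈ modGenSubalg F S Set.univ)}
        add_mem' := by
          rintro x y ⟨hx1, hx2, hx3, hx4⟩ ⟨hy1, hy2, hy3, hy4⟩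
          refine ⟨add_mem hx1 hy1, fun a => ?_, fun a => ?_, fun a b => ?_⟩
          · beta_reduce; beta_reduce; rw [mul_add]; exact add_mem (hx2 a) (hy2 a)
          · beta_reduce; beta_reduce; rw [add_mul]; exact add_mem (hx3 a) (hy3 a)
          · beta_reduce; beta_reduce; rw [mul_add, add_mul]; exact add_mem (hx4 a b) (hy4 a b)
        zero_mem' := by
          refine ⟨zero_mem _, fun a => ?_, fun a => ?_, fun a b => ?_⟩
          · beta_reduce; beta_reduce; rw [mul_zero]; exact zero_mem _
          · beta_reduce; beta_reduce; rw [zero_mul]; exact zero_mem _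
          · beta_reduce; beta_reduce; rw [mul_zero, zero_mul]; exact zero_mem _
        smul_mem' := by
          rintro c x ⟨hx1, hx2, hx3, hx4⟩
          refine ⟨SMulMemClass.smul_mem c hx1, fun a => ?_, fun a => ?_, fun a b => ?_⟩
          · beta_reduce; beta_reduce; rw [mul_smul_comm]; exact SMulMemClass.smul_mem c (hx2 a)
          · beta_reduce; beta_reduce; rw [smul_mul_assoc]; exact SMulMemClass.smul_mem c (hx3 a)
          · beta_reduce; beta_reduce; rw [mul_smul_comm, smul_mul_assoc]; exact SMulMemClass.smul_mem c (hx4 a b) }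
    have hideal : ∀ a : A, ∀ x ∈ J, a * x ∈ J ∧ x * a ∈ J := by
      rintro a x ⟨hx1, hx2, hx3, hx4⟩
      constructor
      · refine ⟨hx2 a, fun a' => ?_, fun a' => ?_, fun a' b => ?_⟩
        · beta_reduce; beta_reduce; rw [← mul_assoc]; exact hx2 (a' * a)
        · exact hx4 a a'
        · beta_reduce; beta_reduce; rw [← mul_assoc]; exact hx4 (a' * a) b
      · refine ⟨hx3 a, fun a' => ?_, fun a' => ?_, fun a' b => ?_⟩
        · beta_reduce; beta_reduce; rw [← mul_assoc]; exact hx4 a' a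
        · beta_reduce; beta_reduce; rw [mul_assoc]; exact hx3 (a * a')
        · beta_reduce; beta_reduce; rw [← mul_assoc, mul_assoc]; exact hx4 a' (a * b)
    have hSJ : (S : Set A) ⊆ (J : Set A) := by
      intro s hs
      exact ⟨U.mem_S_mem s hs, fun a => U.mul_S_mem s hs a, fun a => U.S_mul_mem s hs a,
        fun a b => U.mul_S_mul_mem s hs a b⟩
    have htop := hJ J hideal hSJ
    beta_reduce; rw [eq_top_iff]
    intro x _
    have hxJ : x ∈ J := by rw [htop]; exact Submodule.mem_top
    exact hxJ.1
end
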